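/- arXiv:2412.07904 — 7 statements merged into one kernel-verified Lean document; each statement's English description precedes it below -/
import Mathlib

section
/- Let φ : ℝⁿ → ℝⁿ be a bijective, twice continuously differentiable map with twice continuously differentiable inverse, and let p : ℝⁿ → ℝ be a positive continuously differentiable probability density. Define q(y) = p(φ⁻¹(y)) · |det J_{φ⁻¹}(y)|. Then for every y, ∇_y log q(y) = J_{φ⁻¹}(y)ᵀ · ∇_x log p(x)|_{x = φ⁻¹(y)} + ∇_x · (J_{φ⁻¹}(φ(x))ᵀ)|_{x = φ⁻¹(y)}, where the divergence of the matrix-valued function x ↦ J_{φ⁻¹}(φ(x))ᵀ is taken row-wise with respect to x. -/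
open MeasureTheory Matrix

noncomputable section

/-- Jacobian matrix of a map `ℝⁿ → ℝⁿ`: `(jac f x) i j = ∂ f_i / ∂ x_j`. -/
def jac {n : ℕ} (f : (Fin n → ℝ) → (Fin n → ℝ)) (x : Fin n → ℝ) :
    Matrix (Fin n) (Fin n) ℝ :=
  Matrix.of fun i j => fderiv ℝ f x (Pi.single j 1) i

/-- Determinant on rows as a continuous multilinear map. -/
def detCML (n : ℕ) : ContinuousMultilinearMap ℝ (fun _ : Fin n => (Fin n → ℝ)) ℝ :=
  MultilinearMap.mkContinuous
    (Matrix.detRowAlternating : (Fin n → ℝ) [⋀^Fin n]→ₗ[ℝ] ℝ).toMultilinearMap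
    (n.factorial) (by
      intro m
      have h0 : (Matrix.detRowAlternating : (Fin n → ℝ) [⋀^Fin n]→ₗ[ℝ] ℝ).toMultilinearMap m
          = Matrix.det (Matrix.of m) := rfl
      rw [h0, Matrix.det_apply']
      calc ‖∑ σ : Equiv.Perm (Fin n), ((Equiv.Perm.sign σ : ℤ) : ℝ) * ∏ i, (Matrix.of m) (σ i) i‖
          ≤ ∑ σ : Equiv.Perm (Fin n), ‖((Equiv.Perm.sign σ : ℤ) : ℝ) * ∏ i, (Matrix.of m) (σ i) i‖ :=
            norm_sum_le _ _
        _ ≤ ∑ _σ : Equiv.Perm (Fin n), ∏ i, ‖m i‖ := by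
            refine Finset.sum_le_sum fun σ _ => ?_
            rw [norm_mul]
            have hsgn : ‖((Equiv.Perm.sign σ : ℤ) : ℝ)‖ = 1 := by
              rcases Int.units_eq_one_or (Equiv.Perm.sign σ) with h | h <;> simp [h]
            rw [hsgn, one_mul]
            calc ‖∏ i, (Matrix.of m) (σ i) i‖ = ∏ i, ‖m (σ i) i‖ := by
                  simp [Real.norm_eq_abs, Finset.abs_prod]
              _ ≤ ∏ i, ‖m (σ i)‖ :=
                  Finset.prod_le_prod (fun i _ => norm_nonneg _)
                    (fun i _ => norm_le_pi_norm (m (σ i)) i)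
              _ = ∏ i, ‖m i‖ := Equiv.prod_comp σ (fun i => ‖m i‖)
        _ = (n.factorial : ℝ) * ∏ i, ‖m i‖ := by
            rw [Finset.sum_const, nsmul_eq_mul]
            congr 1
            simp [Fintype.card_perm])

lemma detCML_apply {n : ℕ} (m : Fin n → (Fin n → ℝ)) :
    detCML n m = Matrix.det (Matrix.of m) := rfl

lemma detCML_toCLM {n : ℕ} (x : Fin n → (Fin n → ℝ)) (j : Fin n) (c : Fin n → ℝ) :
    (detCML n).toContinuousLinearMap x j c = detCML n (Function.update x j c) := rfl

lemma pi_eq_sum_single {n : ℕ} (w : Fin n → ℝ) :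
    w = ∑ k, w k • (Pi.single k 1 : Fin n → ℝ) := by
  funext l
  rw [Finset.sum_apply]
  simp [Pi.single_apply]

lemma clm_expand {n : ℕ} {F : Type*} [NormedAddCommGroup F] [NormedSpace ℝ F]
    (L : (Fin n → ℝ) →L[ℝ] F) (w : Fin n → ℝ) :
    L w = ∑ k, w k • L (Pi.single k 1) := by
  conv_lhs => rw [pi_eq_sum_single w]
  rw [map_sum]
  simp

lemma clm_expand_comp {n : ℕ} (L : (Fin n → ℝ) →L[ℝ] (Fin n → ℝ)) (w : Fin n → ℝ) (j : Fin n) :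
    L w j = ∑ k, w k * L (Pi.single k 1) j := by
  rw [clm_expand L w]
  simp [Finset.sum_apply]

lemma clm_expandR {n : ℕ} (L : (Fin n → ℝ) →L[ℝ] ℝ) (w : Fin n → ℝ) :
    L w = ∑ k, w k * L (Pi.single k 1) := by
  rw [clm_expand L w]; simp [smul_eq_mul]

/-- `L ↦ (fun k => L (e k) j)`: row `j` of the matrix of `L`, as a CLM. -/
def Γmat {n : ℕ} (j : Fin n) :
    ((Fin n → ℝ) →L[ℝ] (Fin n → ℝ)) →L[ℝ] (Fin n → ℝ) :=
  ContinuousLinearMap.pi (fun k => (ContinuousLinearMap.proj j).comp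
    (ContinuousLinearMap.apply ℝ (Fin n → ℝ) (Pi.single k 1)))

lemma Γmat_apply {n : ℕ} (j : Fin n) (L : (Fin n → ℝ) →L[ℝ] (Fin n → ℝ)) :
    Γmat j L = fun k => L (Pi.single k 1) j := rfl

/-- **Score change of variables, ℝⁿ → ℝⁿ.**
For a C² diffeomorphism `φ` with inverse `ψ` and a positive C¹ probability density `p`,
the score of the transformed density `q y = p (ψ y) * |det J_ψ(y)|` satisfies
`∇_y log q(y) = J_ψ(y)ᵀ ∇_x log p(x)|_{x = ψ y} + ∇_x·(J_ψ(φ x)ᵀ)|_{x = ψ y}`. -/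
theorem score_change_of_variables {n : ℕ}
    (φ ψ : (Fin n → ℝ) → (Fin n → ℝ))
    (hbij : Function.Bijective φ)
    (hφ : ContDiff ℝ 2 φ) (hψ : ContDiff ℝ 2 ψ)
    (hleft : Function.LeftInverse ψ φ) (hright : Function.RightInverse ψ φ)
    (p : (Fin n → ℝ) → ℝ) (hp : ∀ x, 0 < p x) (hpC : ContDiff ℝ 1 p)
    (hp1 : ∫ x, p x = 1)
    (q : (Fin n → ℝ) → ℝ)
    (hq : ∀ y, q y = p (ψ y) * |(jac ψ y).det|) :
    ∀ y i,
      fderiv ℝ (fun z => Real.log (q z)) y (Pi.single i 1)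
        = (∑ j, jac ψ y j i *
              fderiv ℝ (fun x => Real.log (p x)) (ψ y) (Pi.single j 1))
          + ∑ j, fderiv ℝ (fun x => jac ψ (φ x) j i) (ψ y) (Pi.single j 1) := by
  classical
  intro y i
  have hψd : Differentiable ℝ ψ := hψ.differentiable (by norm_num)
  have hφd : Differentiable ℝ φ := hφ.differentiable (by norm_num)
  have hpd : Differentiable ℝ p := hpC.differentiable one_ne_zero
  -- chain rule identity: J_φ(ψ z) ∘ J_ψ(z) = id
  have key1 : ∀ z, (fderiv ℝ φ (ψ z)).comp (fderiv ℝ ψ z)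
      = ContinuousLinearMap.id ℝ (Fin n → ℝ) := by
    intro z
    have h1 : HasFDerivAt (fun w => φ (ψ w)) ((fderiv ℝ φ (ψ z)).comp (fderiv ℝ ψ z)) z :=
      (hφd (ψ z)).hasFDerivAt.comp z (hψd z).hasFDerivAt
    have h2 : (fun w => φ (ψ w)) = (id : (Fin n → ℝ) → (Fin n → ℝ)) := funext hright
    rw [h2] at h1
    exact h1.unique (hasFDerivAt_id z)
  have hmul : ∀ z, jac φ (ψ z) * jac ψ z = 1 := by
    intro z
    ext j l
    rw [Matrix.mul_apply]
    have h2 : fderiv ℝ φ (ψ z) (fderiv ℝ ψ z (Pi.single l 1)) j = (Pi.single l 1 : Fin n → ℝ) j := by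
      have := congrArg (fun L => L (Pi.single l (1:ℝ)) j) (key1 z)
      simpa using this
    calc ∑ k, jac φ (ψ z) j k * jac ψ z k l
        = ∑ k, fderiv ℝ ψ z (Pi.single l 1) k * fderiv ℝ φ (ψ z) (Pi.single k 1) j := by
          refine Finset.sum_congr rfl fun k _ => ?_
          simp only [jac, Matrix.of_apply]
          ring
      _ = fderiv ℝ φ (ψ z) (fderiv ℝ ψ z (Pi.single l 1)) j := (clm_expand_comp _ _ j).symm
      _ = (Pi.single l 1 : Fin n → ℝ) j := h2
      _ = (1 : Matrix (Fin n) (Fin n) ℝ) j l := by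
          simp [Matrix.one_apply, Pi.single_apply]
  have hdet : ∀ z, (jac ψ z).det ≠ 0 := by
    intro z hz
    have := congrArg Matrix.det (hmul z)
    rw [Matrix.det_mul, Matrix.det_one, hz, mul_zero] at this
    exact zero_ne_one this
  set A := jac ψ y with hA
  set B := jac φ (ψ y) with hB
  have hBA : B * A = 1 := hmul y
  -- second derivative of ψ
  have hfC : ContDiff ℝ 1 (fderiv ℝ ψ) := hψ.fderiv_right (by norm_num)
  set f'' := fderiv ℝ (fderiv ℝ ψ) y with hf''def
  have hf''h : HasFDerivAt (fderiv ℝ ψ) f'' y := ((hfC.differentiable one_ne_zero) y).hasFDerivAt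
  have hsymm : ∀ v w, f'' v w = f'' w v := fun v w =>
    (hψ.contDiffAt.isSymmSndFDerivAt (by simp)) v w
  set H : Matrix (Fin n) (Fin n) ℝ :=
    Matrix.of (fun j k => f'' (Pi.single i 1) (Pi.single k 1) j) with hHdef
  -- derivative of rows of jac ψ
  have hrow : ∀ j, HasFDerivAt (fun z => (jac ψ z) j) ((Γmat j).comp f'') y := by
    intro j
    have heq : (fun z => (jac ψ z) j) = (fun z => Γmat j (fderiv ℝ ψ z)) := by
      funext z; funext k; rfl
    rw [heq]
    exact ((Γmat j).hasFDerivAt).comp y hf''h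
  -- derivative of determinant
  set Dclm : (Fin n → ℝ) →L[ℝ] ℝ :=
    ∑ j, ((detCML n).toContinuousLinearMap (fun j' => (jac ψ y) j') j).comp
      ((Γmat j).comp f'') with hDdef
  have hdetD : HasFDerivAt (fun z => (jac ψ z).det) Dclm y := by
    have h := HasFDerivAt.multilinear_comp (f := detCML n)
      (g := fun j z => (jac ψ z) j) (g' := fun j => (Γmat j).comp f'') (x := y) hrow
    exact h
  have hDval : Dclm (Pi.single i 1) = ∑ j, (A.updateRow j (H j)).det := by
    rw [hDdef, ContinuousLinearMap.sum_apply]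
    refine Finset.sum_congr rfl fun j _ => ?_
    rfl
  -- key determinant-sum identity
  have hsum : ∑ j, (A.updateRow j (H j)).det = (∑ j, (H * B) j j) * A.det := by
    have hH : ∀ j, H j = ∑ k, ((H * B) j k) • A k := by
      intro j
      have h1 : H = H * B * A := by rw [Matrix.mul_assoc, hBA, Matrix.mul_one]
      funext l
      conv_lhs => rw [h1]
      rw [Finset.sum_apply]
      simp [Matrix.mul_apply]
    calc ∑ j, (A.updateRow j (H j)).det
        = ∑ j, ((H * B) j j) * A.det := by
          refine Finset.sum_congr rfl fun j _ => ?_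
          rw [hH j, Matrix.det_updateRow_sum, smul_eq_mul]
      _ = _ := by rw [← Finset.sum_mul]
  -- log decomposition
  have heqlog : (fun z => Real.log (q z))
      = fun z => Real.log (p (ψ z)) + Real.log ((jac ψ z).det) := by
    funext z
    rw [hq z, Real.log_mul (ne_of_gt (hp _)) (by simpa [abs_ne_zero] using hdet z),
      Real.log_abs]
  set L1 : (Fin n → ℝ) →L[ℝ] ℝ :=
    (p (ψ y))⁻¹ • ((fderiv ℝ p (ψ y)).comp (fderiv ℝ ψ y)) with hL1
  set L2 : (Fin n → ℝ) →L[ℝ] ℝ := (A.det)⁻¹ • Dclm with hL2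
  have h1 : HasFDerivAt (fun z => Real.log (p (ψ z))) L1 y :=
    ((hpd (ψ y)).hasFDerivAt.comp y (hψd y).hasFDerivAt).log (ne_of_gt (hp _))
  have h2 : HasFDerivAt (fun z => Real.log ((jac ψ z).det)) L2 y :=
    hdetD.log (hdet y)
  have hLHS : fderiv ℝ (fun z => Real.log (q z)) y (Pi.single i 1)
      = L1 (Pi.single i 1) + L2 (Pi.single i 1) := by
    have hh : HasFDerivAt (fun z => Real.log (q z)) (L1 + L2) y := by
      rw [heqlog]; exact h1.add h2
    rw [hh.fderiv]; rfl
  -- first RHS term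
  have hRHS1 : ∀ j, fderiv ℝ (fun x => Real.log (p x)) (ψ y) (Pi.single j 1)
      = (p (ψ y))⁻¹ * fderiv ℝ p (ψ y) (Pi.single j 1) := by
    intro j
    have hh : HasFDerivAt (fun x => Real.log (p x)) ((p (ψ y))⁻¹ • fderiv ℝ p (ψ y)) (ψ y) :=
      ((hpd (ψ y)).hasFDerivAt).log (ne_of_gt (hp _))
    rw [hh.fderiv]; rfl
  -- second RHS term
  have hRHS2 : ∀ j, fderiv ℝ (fun x => jac ψ (φ x) j i) (ψ y) (Pi.single j 1)
      = ∑ k, B k j * f'' (Pi.single k 1) (Pi.single i 1) j := by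
    intro j
    set Θ : ((Fin n → ℝ) →L[ℝ] (Fin n → ℝ)) →L[ℝ] ℝ :=
      (ContinuousLinearMap.proj j).comp
        (ContinuousLinearMap.apply ℝ (Fin n → ℝ) (Pi.single i 1)) with hΘ
    have hinner : HasFDerivAt (fderiv ℝ ψ) f'' (φ (ψ y)) := by
      rw [hright y]; exact hf''h
    have hcomp : HasFDerivAt (fun x => fderiv ℝ ψ (φ x))
        (f''.comp (fderiv ℝ φ (ψ y))) (ψ y) :=
      hinner.comp (ψ y) (hφd (ψ y)).hasFDerivAt
    have hfull : HasFDerivAt (fun x => Θ (fderiv ℝ ψ (φ x)))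
        (Θ.comp (f''.comp (fderiv ℝ φ (ψ y)))) (ψ y) :=
      (Θ.hasFDerivAt).comp (ψ y) hcomp
    have heq2 : (fun x => jac ψ (φ x) j i) = (fun x => Θ (fderiv ℝ ψ (φ x))) := by
      funext x; rfl
    rw [heq2, hfull.fderiv]
    have : Θ.comp (f''.comp (fderiv ℝ φ (ψ y))) (Pi.single j 1)
        = f'' (fderiv ℝ φ (ψ y) (Pi.single j 1)) (Pi.single i 1) j := rfl
    rw [this, clm_expand f'' (fderiv ℝ φ (ψ y) (Pi.single j 1))]
    rw [ContinuousLinearMap.coe_sum']  -- maybe not needed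
    simp only [ContinuousLinearMap.sum_apply, ContinuousLinearMap.smul_apply,
      Finset.sum_apply, Pi.smul_apply, smul_eq_mul]
    refine Finset.sum_congr rfl fun k _ => ?_
    rfl
  rw [hLHS]
  have hpart1 : L1 (Pi.single i 1)
      = ∑ j, jac ψ y j i * fderiv ℝ (fun x => Real.log (p x)) (ψ y) (Pi.single j 1) := by
    rw [hL1]
    have : ((fderiv ℝ p (ψ y)).comp (fderiv ℝ ψ y)) (Pi.single i 1)
        = fderiv ℝ p (ψ y) (fderiv ℝ ψ y (Pi.single i 1)) := rfl
    rw [ContinuousLinearMap.smul_apply, this,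
      clm_expandR (fderiv ℝ p (ψ y)) (fderiv ℝ ψ y (Pi.single i 1)), smul_eq_mul,
      Finset.mul_sum]
    refine Finset.sum_congr rfl fun j _ => ?_
    rw [hRHS1 j]
    have hAji : fderiv ℝ ψ y (Pi.single i 1) j = jac ψ y j i := rfl
    rw [hAji]; ring
  have hpart2 : L2 (Pi.single i 1)
      = ∑ j, fderiv ℝ (fun x => jac ψ (φ x) j i) (ψ y) (Pi.single j 1) := by
    rw [hL2, ContinuousLinearMap.smul_apply, smul_eq_mul, hDval, hsum]
    rw [inv_mul_eq_div, mul_div_assoc, div_self (hdet y), mul_one]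
    refine Finset.sum_congr rfl fun j _ => ?_
    rw [hRHS2 j, Matrix.mul_apply]
    refine Finset.sum_congr rfl fun k _ => ?_
    have hHjk : H j k = f'' (Pi.single i 1) (Pi.single k 1) j := rfl
    rw [hHjk, hsymm (Pi.single i 1) (Pi.single k 1)]
    ring
  rw [hpart1, hpart2]
end
end

section
/- Let p : ℝⁿ → ℝ be a positive continuously differentiable probability density, and let v : ℝⁿ → ℝ be twice continuously differentiable with ∇v(x) ≠ 0 for all x. Let q : ℝ → ℝ be a positive continuously differentiable density of Y = v(X), and for each index i assume there is a continuously differentiable conditional density r_i such that for the map φ_i(x) = (x₁, …, x_{i−1}, v(x), x_{i+1}, …, xₙ), the density q_i of Z = φ_i(X) factors as q_i(z) = q(z_i) · r_i(z), where we write r_i(z) = p((x_j)_{j≠i} | y) with y = z_i. Then with y = v(x): (log q)'(y) = (1 / ‖∇v(x)‖²) · ( ∇v(x)ᵀ ∇_x log p(x) − Δv(x) − Σ_{i=1}^{n} (∂v/∂x_i)² · ∂/∂y log p((x_j)_{j≠i} | y) ). -/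
open MeasureTheory

noncomputable section

/-- Partial derivative of a scalar function on `ℝⁿ` in the `j`-th coordinate direction. -/
def pderiv' {n : ℕ} (f : (Fin n → ℝ) → ℝ) (j : Fin n) (x : Fin n → ℝ) : ℝ :=
  fderiv ℝ f x (Pi.single j 1)


lemma det_update_clm {n : ℕ} (i : Fin n) (c : (Fin n → ℝ) →L[ℝ] ℝ) :
    ContinuousLinearMap.det
      (ContinuousLinearMap.pi (fun j => if j = i then c else ContinuousLinearMap.proj j))
      = c (Pi.single i 1) := by
  classical
  set L : (Fin n → ℝ) →L[ℝ] (Fin n → ℝ) :=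
    ContinuousLinearMap.pi (fun j => if j = i then c else ContinuousLinearMap.proj j) with hL
  have hdet : ContinuousLinearMap.det L = LinearMap.det (L : (Fin n → ℝ) →ₗ[ℝ] (Fin n → ℝ)) := rfl
  rw [hdet, ← LinearMap.det_toMatrix (Pi.basisFun ℝ (Fin n))]
  have hM : (LinearMap.toMatrix (Pi.basisFun ℝ (Fin n)) (Pi.basisFun ℝ (Fin n))) L
      = (1 : Matrix (Fin n) (Fin n) ℝ).updateRow i (fun k => c (Pi.single k 1)) := by
    ext j k
    rw [LinearMap.toMatrix_apply]
    simp only [Pi.basisFun_apply, Pi.basisFun_repr]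
    by_cases hj : j = i
    · subst hj
      simp [Matrix.updateRow_self, hL, ContinuousLinearMap.pi_apply]
    · rw [Matrix.updateRow_ne hj]
      simp only [ContinuousLinearMap.coe_coe, hL, ContinuousLinearMap.pi_apply, if_neg hj,
        ContinuousLinearMap.proj_apply, Matrix.one_apply, Pi.single_apply]
  rw [hM]
  have hexp : (fun k => c (Pi.single k 1))
      = ∑ k : Fin n, (c (Pi.single k 1)) • (1 : Matrix (Fin n) (Fin n) ℝ) k := by
    ext j
    have : ∀ k : Fin n, (c (Pi.single k 1)) • (1 : Matrix (Fin n) (Fin n) ℝ) k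
        = fun j' => if k = j' then c (Pi.single k 1) else 0 := by
      intro k; ext j'
      simp [Matrix.one_apply, Pi.single_apply, mul_ite]
    simp only [this, Finset.sum_apply]
    rw [Finset.sum_eq_single j]
    · simp
    · intro b _ hb; simp [hb]
    · simp
  rw [hexp, Matrix.det_updateRow_sum]
  simp


lemma hasFDerivAt_update_v {n : ℕ} {v : (Fin n → ℝ) → ℝ} {x : Fin n → ℝ}
    {c : (Fin n → ℝ) →L[ℝ] ℝ} (hv : HasFDerivAt v c x) (i : Fin n) :
    HasFDerivAt (fun x => Function.update x i (v x))
      (ContinuousLinearMap.pi (fun j => if j = i then c else ContinuousLinearMap.proj j)) x := by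
  classical
  have heq : (fun x : Fin n → ℝ => Function.update x i (v x))
      = (fun x j => if j = i then v x else x j) := by
    ext x j; simp [Function.update_apply]
  rw [heq]
  apply hasFDerivAt_pi.2
  intro j
  by_cases hj : j = i
  · subst hj; simpa using hv
  · simpa [hj] using (hasFDerivAt_pi'.1 (hasFDerivAt_id (𝕜 := ℝ) x)) j


lemma clm_apply_sum {n : ℕ} (d : (Fin n → ℝ) →L[ℝ] ℝ) (y : Fin n → ℝ) :
    d y = ∑ j, y j * d (Pi.single j 1) := by
  have hy : y = ∑ j, Pi.single j (y j) := (Finset.univ_sum_single y).symm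
  conv_lhs => rw [hy]
  rw [_root_.map_sum]
  apply Finset.sum_congr rfl
  intro j _
  have : Pi.single j (y j) = y j • (Pi.single j 1 : Fin n → ℝ) := by
    rw [← Pi.single_smul, smul_eq_mul, mul_one]
  rw [this, _root_.map_smul, smul_eq_mul]


private lemma choose_T (M C m₀ ρ : ℝ) (hM : 0 < M) (hC : 0 ≤ C) (hm : 0 < m₀) (hρ : 0 < ρ) :
    ∃ T : ℝ, 0 < T ∧ T ≤ 1 ∧ T < ρ ∧ M * C * T < m₀ / 2 := by
  refine ⟨min (min 1 (ρ / 2)) (m₀ / (2 * M * (C + 1))),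
    lt_min (lt_min one_pos (by positivity)) (by positivity),
    le_trans (min_le_left _ _) (min_le_left _ _),
    lt_of_le_of_lt (le_trans (min_le_left _ _) (min_le_right _ _)) (by linarith), ?_⟩
  have h1 : min (min 1 (ρ / 2)) (m₀ / (2 * M * (C + 1))) ≤ m₀ / (2 * M * (C + 1)) :=
    min_le_right _ _
  have h2 : M * C * min (min 1 (ρ / 2)) (m₀ / (2 * M * (C + 1)))
      ≤ M * C * (m₀ / (2 * M * (C + 1))) := mul_le_mul_of_nonneg_left h1 (by positivity)
  have he : M * C * (m₀ / (2 * M * (C + 1))) = m₀ * (C / (C + 1)) / 2 := by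
    field_simp
  have hlt : C / (C + 1) < 1 := (div_lt_one (by positivity)).2 (by linarith)
  have h3 : m₀ * (C / (C + 1)) / 2 < m₀ / 2 := by
    have hnn : 0 ≤ C / (C + 1) := by positivity
    nlinarith
  linarith [he ▸ h2]

private lemma choose_theta (M m₀ : ℝ) (hM : 0 < M) (hm : 0 < m₀) :
    ∃ θ : ℝ, 0 < θ ∧ θ ≤ 1 ∧ M * θ ≤ m₀ / 2 := by
  refine ⟨min 1 (m₀ / (2 * M)), lt_min one_pos (by positivity), min_le_left _ _, ?_⟩
  have h1 : min 1 (m₀ / (2 * M)) ≤ m₀ / (2 * M) := min_le_right _ _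
  have h2 : M * min 1 (m₀ / (2 * M)) ≤ M * (m₀ / (2 * M)) :=
    mul_le_mul_of_nonneg_left h1 hM.le
  have h3 : M * (m₀ / (2 * M)) = m₀ / 2 := by field_simp
  linarith

set_option maxHeartbeats 1000000 in
lemma partial_ne_zero {n : ℕ} (p : (Fin n → ℝ) → ℝ) (hp : ∀ x, 0 < p x) (hpc : Continuous p)
    (v : (Fin n → ℝ) → ℝ) (hv : ContDiff ℝ 1 v)
    (g : (Fin n → ℝ) → ℝ) (hgpos : ∀ z, 0 < g z) (hgc : Continuous g) (i : Fin n)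
    (hfact : Measure.map (fun x => Function.update x i (v x))
          (volume.withDensity fun x => ENNReal.ofReal (p x))
        = volume.withDensity fun z => ENNReal.ofReal (g z)) :
    ∀ x, fderiv ℝ v x (Pi.single i 1) ≠ 0 := by
  classical
  intro xs h0
  have hφc : Continuous (fun x => Function.update x i (v x)) :=
    continuous_id.update i (hv.continuous)
  set d : (Fin n → ℝ) →L[ℝ] ℝ := fderiv ℝ v xs with hd
  set zs : Fin n → ℝ := Function.update xs i (v xs) with hzs
  set C : ℝ := ∑ j, |d (Pi.single j 1)| with hC
  have hC0 : 0 ≤ C := Finset.sum_nonneg fun j _ => abs_nonneg _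
  -- minimum of p on the unit ball
  obtain ⟨m₀, hm₀pos, hm₀min⟩ : ∃ m₀ : ℝ, 0 < m₀ ∧
      ∀ x ∈ Metric.closedBall xs 1, m₀ ≤ p x := by
    obtain ⟨xm, _, hxmin⟩ := (isCompact_closedBall xs 1).exists_isMinOn
      ⟨xs, Metric.mem_closedBall_self zero_le_one⟩ hpc.continuousOn
    exact ⟨p xm, hp xm, fun x hx => hxmin hx⟩
  -- maximum of g on a fixed compact box around zs
  obtain ⟨M, hMpos, hMmax⟩ : ∃ M : ℝ, 0 < M ∧
      ∀ z ∈ Metric.closedBall zs (C + 2), g z ≤ M := by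
    obtain ⟨zM, _, hzmax⟩ := (isCompact_closedBall zs (C + 2)).exists_isMaxOn
      ⟨zs, Metric.mem_closedBall_self (by linarith)⟩ hgc.continuousOn
    exact ⟨g zM, hgpos zM, fun z hz => hzmax hz⟩
  obtain ⟨θ, hθpos, hθ1, hθ2⟩ := choose_theta M m₀ hMpos hm₀pos
  -- little-o estimate
  have hdd : HasFDerivAt v d xs := ((hv.differentiable (by norm_num)) xs).hasFDerivAt
  have hlo := (Asymptotics.isLittleO_iff.1 hdd.isLittleO) hθpos
  obtain ⟨ρ, hρpos, hρ⟩ := Metric.eventually_nhds_iff_ball.1 hlo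
  obtain ⟨T, hTpos, hT1, hTρ, hTm⟩ := choose_T M C m₀ ρ hMpos hC0 hm₀pos hρpos
  obtain ⟨ε, hε, hεpos, hεbd⟩ : ∃ ε : ℝ, ε = C * T ^ 2 + θ * T ∧ 0 < ε ∧ ε ≤ C + 2 := by
    refine ⟨C * T ^ 2 + θ * T, rfl, by positivity, ?_⟩
    have h1 : T ^ 2 ≤ 1 := by
      have := pow_le_one₀ hTpos.le hT1 (n := 2); linarith
    have h2 : C * T ^ 2 ≤ C * 1 := mul_le_mul_of_nonneg_left h1 hC0
    have h3 : θ * T ≤ 1 * 1 := mul_le_mul hθ1 hT1 hTpos.le zero_le_one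
    linarith
  -- the boxes
  set u : Fin n → ℝ := fun j => if j = i then T else T ^ 2 with hu
  set a : Fin n → ℝ := fun j => if j = i then ε else T ^ 2 with ha
  have hupos : ∀ j, 0 < u j := by
    intro j; by_cases hj : j = i <;> simp only [hu, hj, if_true, if_false] <;> positivity
  have hapos : ∀ j, 0 < a j := by
    intro j; by_cases hj : j = i <;> simp only [ha, hj, if_true, if_false] <;> positivity
  have huT : ∀ j, u j ≤ T := by
    intro j; by_cases hj : j = i
    · simp only [hu, hj, if_true]; exact le_rfl
    · simp only [hu, hj, if_false]
      have := pow_le_one₀ hTpos.le hT1 (n := 2)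
      nlinarith [sq_nonneg T, hTpos, hT1]
  set Q : Set (Fin n → ℝ) := Set.univ.pi fun j => Set.Icc (xs j - u j) (xs j + u j) with hQ
  set A : Set (Fin n → ℝ) := Set.univ.pi fun j => Set.Icc (zs j - a j) (zs j + a j) with hA
  have hQm : MeasurableSet Q := MeasurableSet.univ_pi fun j => measurableSet_Icc
  have hAm : MeasurableSet A := MeasurableSet.univ_pi fun j => measurableSet_Icc
  -- x in Q is close to xs
  have hQdist : ∀ x ∈ Q, dist x xs ≤ T := by
    intro x hx
    rw [dist_pi_le_iff hTpos.le]
    intro j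
    have hj := hx j (Set.mem_univ j)
    simp only [Set.mem_Icc] at hj
    rw [Real.dist_eq, abs_le]
    have := huT j
    constructor <;> linarith [hj.1, hj.2]
  have hd_apply : ∀ y : Fin n → ℝ, d y = ∑ j, y j * d (Pi.single j 1) :=
    fun y => clm_apply_sum d y
  -- key estimate : Q ⊆ φ ⁻¹' A
  have hQA : ∀ x ∈ Q, Function.update x i (v x) ∈ A := by
    intro x hx
    have hxd : dist x xs ≤ T := hQdist x hx
    have hball : x ∈ Metric.ball xs ρ := Metric.mem_ball.2 (lt_of_le_of_lt hxd hTρ)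
    have hlo' : ‖v x - v xs - d (x - xs)‖ ≤ θ * ‖x - xs‖ := hρ x hball
    have hdsum : |d (x - xs)| ≤ C * T ^ 2 := by
      rw [hd_apply]
      have hterm : ∀ j : Fin n, |(x - xs) j * d (Pi.single j 1)| ≤ T ^ 2 * |d (Pi.single j 1)| := by
        intro j
        rw [abs_mul]
        by_cases hj : j = i
        · subst hj; rw [h0]; simp [abs_nonneg]
        · have hj' := hx j (Set.mem_univ j)
          simp only [Set.mem_Icc] at hj'
          have huj : u j = T ^ 2 := by simp only [hu, hj, if_false]
          have : |(x - xs) j| ≤ T ^ 2 := by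
            rw [abs_le]; constructor <;> simp only [Pi.sub_apply] <;>
              [linarith [hj'.1, huj]; linarith [hj'.2, huj]]
          exact mul_le_mul_of_nonneg_right this (abs_nonneg _)
      calc |∑ j, (x - xs) j * d (Pi.single j 1)| ≤ ∑ j, |(x - xs) j * d (Pi.single j 1)| :=
            Finset.abs_sum_le_sum_abs _ _
      _ ≤ ∑ j, T ^ 2 * |d (Pi.single j 1)| := Finset.sum_le_sum fun j _ => hterm j
      _ = C * T ^ 2 := by rw [← Finset.mul_sum, ← hC]; ring
    have hvx : |v x - v xs| ≤ ε := by
      have h1 : |v x - v xs - d (x - xs)| ≤ θ * T := by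
        have h2 : ‖x - xs‖ ≤ T := by rw [← dist_eq_norm]; exact hxd
        calc |v x - v xs - d (x - xs)| ≤ θ * ‖x - xs‖ := hlo'
        _ ≤ θ * T := mul_le_mul_of_nonneg_left h2 hθpos.le
      calc |v x - v xs| = |(v x - v xs - d (x - xs)) + d (x - xs)| := by ring_nf
      _ ≤ |v x - v xs - d (x - xs)| + |d (x - xs)| := abs_add_le _ _
      _ ≤ θ * T + C * T ^ 2 := add_le_add h1 hdsum
      _ = ε := by rw [hε]; ring
    intro j _
    simp only [Set.mem_Icc]
    by_cases hj : j = i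
    · subst hj
      rw [Function.update_self]
      have hzsj : zs j = v xs := by rw [hzs, Function.update_self]
      have haj : a j = ε := by simp only [ha, if_true]
      rw [hzsj, haj]
      rw [abs_le] at hvx
      constructor <;> linarith [hvx.1, hvx.2]
    · rw [Function.update_of_ne hj]
      have hzsj : zs j = xs j := by rw [hzs, Function.update_of_ne hj]
      have haj : a j = T ^ 2 := by simp only [ha, hj, if_false]
      have huj : u j = T ^ 2 := by simp only [hu, hj, if_false]
      have hj' := hx j (Set.mem_univ j)
      simp only [Set.mem_Icc] at hj'
      rw [hzsj, haj]
      constructor <;> linarith [hj'.1, hj'.2, huj.symm.le]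
  -- Q is inside the unit ball around xs
  have hQK : Q ⊆ Metric.closedBall xs 1 := by
    intro x hx
    rw [Metric.mem_closedBall]
    exact le_trans (hQdist x hx) hT1
  -- A is inside the (C+2)-ball around zs
  have hAL : A ⊆ Metric.closedBall zs (C + 2) := by
    intro z hz
    rw [Metric.mem_closedBall, dist_pi_le_iff (by linarith)]
    intro j
    have hj := hz j (Set.mem_univ j)
    simp only [Set.mem_Icc] at hj
    rw [Real.dist_eq, abs_le]
    have haj : a j ≤ C + 2 := by
      by_cases hj' : j = i <;> simp only [ha, hj', if_true, if_false]
      · exact hεbd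
      · have := pow_le_one₀ hTpos.le hT1 (n := 2); linarith
    constructor <;> linarith [hj.1, hj.2]
  -- measure estimates
  set μp : Measure (Fin n → ℝ) := volume.withDensity fun x => ENNReal.ofReal (p x) with hμp
  have hvolQ : volume Q = ∏ j, ENNReal.ofReal (2 * u j) := by
    rw [hQ, volume_pi_pi]
    congr 1; ext j
    rw [Real.volume_Icc]
    congr 1; ring
  have hvolA : volume A = ∏ j, ENNReal.ofReal (2 * a j) := by
    rw [hA, volume_pi_pi]
    congr 1; ext j
    rw [Real.volume_Icc]
    congr 1; ring
  have hlow : ENNReal.ofReal m₀ * volume Q ≤ μp Q := by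
    rw [hμp, withDensity_apply _ hQm]
    calc ENNReal.ofReal m₀ * volume Q = ∫⁻ _ in Q, ENNReal.ofReal m₀ := by
          rw [setLIntegral_const]
    _ ≤ ∫⁻ x in Q, ENNReal.ofReal (p x) :=
        setLIntegral_mono (by fun_prop) fun x hx =>
          ENNReal.ofReal_le_ofReal (hm₀min x (hQK hx))
  have hup : μp (Set.preimage (fun x => Function.update x i (v x)) A)
      ≤ ENNReal.ofReal M * volume A := by
    have hmap : μp (Set.preimage (fun x => Function.update x i (v x)) A)
        = ∫⁻ z in A, ENNReal.ofReal (g z) := by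
      rw [← Measure.map_apply hφc.measurable hAm, hfact, withDensity_apply _ hAm]
    rw [hmap]
    calc ∫⁻ z in A, ENNReal.ofReal (g z) ≤ ∫⁻ _ in A, ENNReal.ofReal M :=
          setLIntegral_mono (by fun_prop) fun z hz =>
            ENNReal.ofReal_le_ofReal (hMmax z (hAL hz))
    _ = ENNReal.ofReal M * volume A := by rw [setLIntegral_const]
  have hQsub : Q ⊆ Set.preimage (fun x => Function.update x i (v x)) A := fun x hx => hQA x hx
  have hchain : ENNReal.ofReal m₀ * volume Q ≤ ENNReal.ofReal M * volume A :=
    le_trans hlow (le_trans (measure_mono hQsub) hup)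
  -- convert to real inequality
  have hofQ : volume Q = ENNReal.ofReal (∏ j, (2 * u j)) := by
    rw [hvolQ, ENNReal.ofReal_prod_of_nonneg (fun j _ => by linarith [hupos j])]
  have hofA : volume A = ENNReal.ofReal (∏ j, (2 * a j)) := by
    rw [hvolA, ENNReal.ofReal_prod_of_nonneg (fun j _ => by linarith [hapos j])]
  have hreal : m₀ * ∏ j, (2 * u j) ≤ M * ∏ j, (2 * a j) := by
    have h1 : ENNReal.ofReal (m₀ * ∏ j, (2 * u j)) ≤ ENNReal.ofReal (M * ∏ j, (2 * a j)) := by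
      rw [ENNReal.ofReal_mul hm₀pos.le, ENNReal.ofReal_mul hMpos.le, ← hofQ, ← hofA]
      exact hchain
    have h2 : (0:ℝ) ≤ M * ∏ j, (2 * a j) := by
      apply mul_nonneg hMpos.le
      exact Finset.prod_nonneg fun j _ => by linarith [hapos j]
    exact (ENNReal.ofReal_le_ofReal_iff h2).1 h1
  -- extract the 1-d inequality
  have hPQ : ∏ j, (2 * u j) = (2 * T) * ∏ j ∈ Finset.univ.erase i, (2 * u j) := by
    rw [← Finset.mul_prod_erase Finset.univ _ (Finset.mem_univ i)]
    congr 2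
    simp only [hu, if_true]
  have hPA : ∏ j, (2 * a j) = (2 * ε) * ∏ j ∈ Finset.univ.erase i, (2 * a j) := by
    rw [← Finset.mul_prod_erase Finset.univ _ (Finset.mem_univ i)]
    congr 2
    simp only [ha, if_true]
  have hPeq : ∏ j ∈ Finset.univ.erase i, (2 * u j) = ∏ j ∈ Finset.univ.erase i, (2 * a j) := by
    apply Finset.prod_congr rfl
    intro j hj
    have hjne : j ≠ i := Finset.ne_of_mem_erase hj
    simp only [hu, ha, hjne, if_false]
  have hPpos : 0 < ∏ j ∈ Finset.univ.erase i, (2 * u j) :=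
    Finset.prod_pos fun j _ => by linarith [hupos j]
  have hkey : m₀ * T ≤ M * ε := by
    rw [hPQ, hPA, ← hPeq] at hreal
    have hre : (m₀ * T) * (2 * ∏ j ∈ Finset.univ.erase i, (2 * u j))
        ≤ (M * ε) * (2 * ∏ j ∈ Finset.univ.erase i, (2 * u j)) := by
      have e1 : m₀ * (2 * T * ∏ j ∈ Finset.univ.erase i, (2 * u j))
          = (m₀ * T) * (2 * ∏ j ∈ Finset.univ.erase i, (2 * u j)) := by ring
      have e2 : M * (2 * ε * ∏ j ∈ Finset.univ.erase i, (2 * u j))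
          = (M * ε) * (2 * ∏ j ∈ Finset.univ.erase i, (2 * u j)) := by ring
      rw [← e1, ← e2]; exact hreal
    exact le_of_mul_le_mul_right hre (by linarith)
  -- final contradiction
  rw [hε] at hkey
  have he : M * (C * T ^ 2 + θ * T) = (M * C * T) * T + M * θ * T := by ring
  rw [he] at hkey
  have h4 : (M * C * T) * T < (m₀ / 2) * T := mul_lt_mul_of_pos_right hTm hTpos
  have h5 : M * θ * T ≤ (m₀ / 2) * T := by
    have := mul_le_mul_of_nonneg_right hθ2 hTpos.le
    calc M * θ * T = (M * θ) * T := by ring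
    _ ≤ (m₀ / 2) * T := this
  have h6 : m₀ * T = (m₀ / 2) * T + (m₀ / 2) * T := by ring
  linarith

-- pointwise ≤ from integral ≤ on balls
lemma le_of_lintegral_ball_le {n : ℕ} {f g : (Fin n → ℝ) → ℝ}
    (hf : Continuous f) (hg : Continuous g) (hf0 : ∀ x, 0 ≤ f x) (hg0 : ∀ x, 0 ≤ g x)
    (hle : ∀ (x₀ : Fin n → ℝ) (ρ : ℝ), 0 < ρ →
      ∫⁻ x in Metric.ball x₀ ρ, ENNReal.ofReal (f x) ≤
      ∫⁻ x in Metric.ball x₀ ρ, ENNReal.ofReal (g x)) :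
    ∀ x, f x ≤ g x := by
  intro x₀
  by_contra hcon
  push_neg at hcon
  set c₁ : ℝ := (2 * g x₀ + f x₀) / 3 with hc₁
  set c₂ : ℝ := (g x₀ + 2 * f x₀) / 3 with hc₂
  have hc12 : c₁ < c₂ := by rw [hc₁, hc₂]; linarith
  have hc₁0 : 0 ≤ c₁ := by have h1 := hf0 x₀; have h2 := hg0 x₀; rw [hc₁]; linarith
  have hgc : g x₀ < c₁ := by rw [hc₁]; linarith
  have hfc : c₂ < f x₀ := by rw [hc₂]; linarith
  have hnb : ∀ᶠ x in nhds x₀, g x < c₁ ∧ c₂ < f x := by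
    filter_upwards [hg.continuousAt.eventually_lt continuousAt_const hgc,
      (continuousAt_const (y := c₂)).eventually_lt hf.continuousAt hfc] with x h1 h2
    exact ⟨h1, h2⟩
  obtain ⟨ρ, hρpos, hρ⟩ := Metric.eventually_nhds_iff_ball.1 hnb
  have hvolpos : 0 < volume (Metric.ball x₀ ρ) := Metric.measure_ball_pos _ _ hρpos
  have hvoltop : volume (Metric.ball x₀ ρ) < ⊤ := measure_ball_lt_top
  have hub : ∫⁻ x in Metric.ball x₀ ρ, ENNReal.ofReal (g x)
      ≤ ENNReal.ofReal c₁ * volume (Metric.ball x₀ ρ) := by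
    calc ∫⁻ x in Metric.ball x₀ ρ, ENNReal.ofReal (g x)
        ≤ ∫⁻ _ in Metric.ball x₀ ρ, ENNReal.ofReal c₁ :=
          setLIntegral_mono (by fun_prop) fun x hx =>
            ENNReal.ofReal_le_ofReal (hρ x hx).1.le
    _ = ENNReal.ofReal c₁ * volume (Metric.ball x₀ ρ) := by rw [setLIntegral_const]
  have hlb : ENNReal.ofReal c₂ * volume (Metric.ball x₀ ρ)
      ≤ ∫⁻ x in Metric.ball x₀ ρ, ENNReal.ofReal (f x) := by
    calc ENNReal.ofReal c₂ * volume (Metric.ball x₀ ρ)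
        = ∫⁻ _ in Metric.ball x₀ ρ, ENNReal.ofReal c₂ := by rw [setLIntegral_const]
    _ ≤ ∫⁻ x in Metric.ball x₀ ρ, ENNReal.ofReal (f x) :=
          setLIntegral_mono (by fun_prop) fun x hx =>
            ENNReal.ofReal_le_ofReal (hρ x hx).2.le
  have hchain : ENNReal.ofReal c₂ * volume (Metric.ball x₀ ρ)
      ≤ ENNReal.ofReal c₁ * volume (Metric.ball x₀ ρ) :=
    le_trans hlb (le_trans (hle x₀ ρ hρpos) hub)
  have hc : ENNReal.ofReal c₂ ≤ ENNReal.ofReal c₁ :=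
    (ENNReal.mul_le_mul_iff_left hvolpos.ne' hvoltop.ne).1 hchain
  have := (ENNReal.ofReal_le_ofReal_iff hc₁0).1 hc
  linarith [hc12]

lemma density_identity {n : ℕ} (p : (Fin n → ℝ) → ℝ) (hp : ∀ x, 0 < p x) (hpc : Continuous p)
    (v : (Fin n → ℝ) → ℝ) (hv : ContDiff ℝ 1 v)
    (g : (Fin n → ℝ) → ℝ) (hgpos : ∀ z, 0 < g z) (hgc : Continuous g) (i : Fin n)
    (hfact : Measure.map (fun x => Function.update x i (v x))
          (volume.withDensity fun x => ENNReal.ofReal (p x))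
        = volume.withDensity fun z => ENNReal.ofReal (g z))
    (hw : ∀ x, fderiv ℝ v x (Pi.single i 1) ≠ 0) :
    ∀ x, p x = g (Function.update x i (v x)) * |fderiv ℝ v x (Pi.single i 1)| := by
  classical
  set φ : (Fin n → ℝ) → (Fin n → ℝ) := fun x => Function.update x i (v x) with hφ
  have hφc : Continuous φ := continuous_id.update i hv.continuous
  have hdiff : ∀ x, HasFDerivAt v (fderiv ℝ v x) x :=
    fun x => ((hv.differentiable (by norm_num)) x).hasFDerivAt
  -- injectivity of φ
  have hinj : Function.Injective φ := by
    intro x x' hxx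
    have hco : ∀ j, j ≠ i → x j = x' j := by
      intro j hj
      have := congrFun hxx j
      simpa [hφ, Function.update_of_ne hj] using this
    have hvv : v x = v x' := by
      have := congrFun hxx i
      simpa [hφ] using this
    -- the 1-d function along coordinate i
    have hψ : ∀ t : ℝ, HasDerivAt (fun t => v (Function.update x i t))
        (fderiv ℝ v (Function.update x i t) (Pi.single i 1)) t := by
      intro t
      have hline : HasDerivAt (fun t : ℝ => Function.update x i t)
          (Pi.single i 1 : Fin n → ℝ) t := by
        have : (fun t : ℝ => Function.update x i t)
            = (fun t : ℝ => Function.update x i 0 + t • (Pi.single i 1 : Fin n → ℝ)) := by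
          ext t j
          by_cases hj : j = i
          · subst hj; simp
          · simp only [Function.update_of_ne hj, Pi.add_apply, Pi.smul_apply,
              Pi.single_eq_of_ne hj, smul_eq_mul, mul_zero, add_zero]
        rw [this]
        have h' := ((hasDerivAt_id t).smul_const (Pi.single i 1 : Fin n → ℝ)).const_add
          (Function.update x i 0)
        simpa using h'
      exact (hdiff _).comp_hasDerivAt t hline
    have hxi : x i = x' i := by
      by_contra hne
      have hx' : x' = Function.update x i (x' i) := by
        ext j
        by_cases hj : j = i
        · subst hj; simp
        · simp [Function.update_of_ne hj, hco j hj]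
      have hveq : v (Function.update x i (x i)) = v (Function.update x i (x' i)) := by
        rw [Function.update_eq_self, ← hx']; exact hvv
      -- Rolle
      rcases lt_or_gt_of_ne hne with hlt | hlt
      · obtain ⟨c, hc, hc0⟩ := exists_deriv_eq_zero (f := fun t => v (Function.update x i t))
          hlt (fun t _ => ((hψ t).continuousAt.continuousWithinAt)) hveq
        exact hw _ ((hψ c).deriv ▸ hc0)
      · obtain ⟨c, hc, hc0⟩ := exists_deriv_eq_zero (f := fun t => v (Function.update x i t))
          hlt (fun t _ => ((hψ t).continuousAt.continuousWithinAt)) hveq.symm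
        exact hw _ ((hψ c).deriv ▸ hc0)
    ext j
    by_cases hj : j = i
    · subst hj; exact hxi
    · exact hco j hj
  -- integral identity on balls
  have hball : ∀ (x₀ : Fin n → ℝ) (ρ : ℝ), 0 < ρ →
      ∫⁻ x in Metric.ball x₀ ρ, ENNReal.ofReal (p x)
      = ∫⁻ x in Metric.ball x₀ ρ,
          ENNReal.ofReal (g (φ x) * |fderiv ℝ v x (Pi.single i 1)|) := by
    intro x₀ ρ hρ
    set B := Metric.ball x₀ ρ with hB
    have hBm : MeasurableSet B := measurableSet_ball
    set L : (Fin n → ℝ) → ((Fin n → ℝ) →L[ℝ] (Fin n → ℝ)) := fun x =>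
      ContinuousLinearMap.pi
        (fun j => if j = i then fderiv ℝ v x else ContinuousLinearMap.proj j) with hL
    have hFD : ∀ x ∈ B, HasFDerivWithinAt φ (L x) B x :=
      fun x _ => (hasFDerivAt_update_v (hdiff x) i).hasFDerivWithinAt
    have hIm : MeasurableSet (φ '' B) :=
      measurable_image_of_fderivWithin hBm hFD (hinj.injOn)
    have h1 : ∫⁻ x in B, ENNReal.ofReal (p x)
        = (volume.withDensity fun x => ENNReal.ofReal (p x)) B :=
      (withDensity_apply _ hBm).symm
    have h2 : (volume.withDensity fun x => ENNReal.ofReal (p x)) B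
        = (volume.withDensity fun x => ENNReal.ofReal (p x)) (φ ⁻¹' (φ '' B)) := by
      rw [Set.preimage_image_eq B hinj]
    have h3 : (volume.withDensity fun x => ENNReal.ofReal (p x)) (φ ⁻¹' (φ '' B))
        = (volume.withDensity fun z => ENNReal.ofReal (g z)) (φ '' B) := by
      rw [← hfact, Measure.map_apply hφc.measurable hIm]
    have h4 : (volume.withDensity fun z => ENNReal.ofReal (g z)) (φ '' B)
        = ∫⁻ z in φ '' B, ENNReal.ofReal (g z) := withDensity_apply _ hIm
    have h5 : ∫⁻ z in φ '' B, ENNReal.ofReal (g z)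
        = ∫⁻ x in B, ENNReal.ofReal |(L x).det| * ENNReal.ofReal (g (φ x)) :=
      lintegral_image_eq_lintegral_abs_det_fderiv_mul volume hBm hFD (hinj.injOn) _
    have h6 : ∀ x : Fin n → ℝ, ENNReal.ofReal |(L x).det| * ENNReal.ofReal (g (φ x))
        = ENNReal.ofReal (g (φ x) * |fderiv ℝ v x (Pi.single i 1)|) := by
      intro x
      rw [hL, det_update_clm, ← ENNReal.ofReal_mul (abs_nonneg _), mul_comm]
    rw [h1, h2, h3, h4, h5]
    exact lintegral_congr fun x => h6 x
  -- conclude pointwise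
  have hwc : Continuous fun x => fderiv ℝ v x (Pi.single i 1) :=
    (hv.continuous_fderiv (by norm_num)).clm_apply continuous_const
  have hGc : Continuous fun x => g (φ x) * |fderiv ℝ v x (Pi.single i 1)| :=
    (hgc.comp hφc).mul hwc.abs
  intro x
  refine le_antisymm ?_ ?_
  · exact le_of_lintegral_ball_le hpc hGc (fun x => (hp x).le)
      (fun x => mul_nonneg (hgpos _).le (abs_nonneg _))
      (fun x₀ ρ hρ => (hball x₀ ρ hρ).le) x
  · exact le_of_lintegral_ball_le hGc hpc
      (fun x => mul_nonneg (hgpos _).le (abs_nonneg _)) (fun x => (hp x).le)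
      (fun x₀ ρ hρ => (hball x₀ ρ hρ).ge) x

lemma key_calc {n : ℕ} (p v : (Fin n → ℝ) → ℝ) (q : ℝ → ℝ) (ri : (Fin n → ℝ) → ℝ) (i : Fin n)
    (hpC : ContDiff ℝ 1 p) (hv : ContDiff ℝ 2 v) (hqC : ContDiff ℝ 1 q) (hrC : ContDiff ℝ 1 ri)
    (hppos : ∀ x, 0 < p x) (hqpos : ∀ y, 0 < q y) (hrpos : ∀ z, 0 < ri z)
    (hid : ∀ x, p x = q (v x) * ri (Function.update x i (v x)) * |fderiv ℝ v x (Pi.single i 1)|)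
    (hwne : ∀ x, fderiv ℝ v x (Pi.single i 1) ≠ 0) :
    ∀ x, fderiv ℝ v x (Pi.single i 1) * (fderiv ℝ p x (Pi.single i 1) / p x)
      = (deriv q (v x) / q (v x)) * (fderiv ℝ v x (Pi.single i 1)) ^ 2
        + (fderiv ℝ v x (Pi.single i 1)) ^ 2 *
            (fderiv ℝ ri (Function.update x i (v x)) (Pi.single i 1)
              / ri (Function.update x i (v x)))
        + fderiv ℝ (fun x' => fderiv ℝ v x' (Pi.single i 1)) x (Pi.single i 1) := by
  classical
  intro x₀
  set w : (Fin n → ℝ) → ℝ := fun x => fderiv ℝ v x (Pi.single i 1) with hwdef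
  have hwx : ∀ x, fderiv ℝ v x (Pi.single i 1) = w x := fun _ => rfl
  rw [hwx]
  have hvC1 : ContDiff ℝ 1 v := hv.of_le (by norm_num)
  have hvd : ∀ x, HasFDerivAt v (fderiv ℝ v x) x :=
    fun x => ((hvC1.differentiable (by norm_num)) x).hasFDerivAt
  have hwC : ContDiff ℝ 1 w := by
    have h1 : ContDiff ℝ 1 (fderiv ℝ v) := hv.fderiv_right (le_refl _)
    exact h1.clm_apply contDiff_const
  have hwcont : Continuous w := hwC.continuous
  have hwd : HasFDerivAt w (fderiv ℝ w x₀) x₀ := ((hwC.differentiable (by norm_num)) x₀).hasFDerivAt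
  -- sign
  set σ : ℝ := if 0 < w x₀ then 1 else -1 with hσ
  have hσ2 : σ * σ = 1 := by rw [hσ]; split <;> norm_num
  have hsign : ∀ᶠ x in nhds x₀, |w x| = σ * w x := by
    rcases lt_or_gt_of_ne (hwne x₀) with hneg | hpos
    · have hev : ∀ᶠ x in nhds x₀, w x < 0 :=
        hwcont.continuousAt.eventually_lt continuousAt_const hneg
      filter_upwards [hev] with x hx
      rw [abs_of_neg hx, hσ, if_neg (not_lt.2 (le_of_lt hneg))]
      ring
    · have hev : ∀ᶠ x in nhds x₀, 0 < w x :=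
        continuousAt_const.eventually_lt hwcont.continuousAt hpos
      filter_upwards [hev] with x hx
      rw [abs_of_pos hx, hσ, if_pos hpos]
      ring
  -- local identity
  have hFG : p =ᶠ[nhds x₀] fun x =>
      q (v x) * ri (Function.update x i (v x)) * (σ * w x) := by
    filter_upwards [hsign] with x hx
    rw [hid x, hwx, hx]
  -- derivative of G
  have hq' : HasDerivAt q (deriv q (v x₀)) (v x₀) :=
    ((hqC.differentiable (by norm_num)) (v x₀)).hasDerivAt
  have h1 : HasFDerivAt (fun x => q (v x)) ((deriv q (v x₀)) • fderiv ℝ v x₀) x₀ :=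
    hq'.comp_hasFDerivAt x₀ (hvd x₀)
  set L : (Fin n → ℝ) →L[ℝ] (Fin n → ℝ) := ContinuousLinearMap.pi
    (fun j => if j = i then fderiv ℝ v x₀ else ContinuousLinearMap.proj j) with hL
  have hφd : HasFDerivAt (fun x => Function.update x i (v x)) L x₀ :=
    hasFDerivAt_update_v (hvd x₀) i
  have hrd : HasFDerivAt ri (fderiv ℝ ri (Function.update x₀ i (v x₀)))
      (Function.update x₀ i (v x₀)) := ((hrC.differentiable (by norm_num)) _).hasFDerivAt
  have h2 : HasFDerivAt (fun x => ri (Function.update x i (v x)))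
      ((fderiv ℝ ri (Function.update x₀ i (v x₀))).comp L) x₀ := hrd.comp x₀ hφd
  have h3 : HasFDerivAt (fun x => σ * w x) (σ • fderiv ℝ w x₀) x₀ := hwd.const_smul σ
  have hG : HasFDerivAt (fun x => q (v x) * ri (Function.update x i (v x)) * (σ * w x))
      ((q (v x₀) * ri (Function.update x₀ i (v x₀))) • (σ • fderiv ℝ w x₀)
        + (σ * w x₀) • ((q (v x₀)) • ((fderiv ℝ ri (Function.update x₀ i (v x₀))).comp L)
            + (ri (Function.update x₀ i (v x₀))) • ((deriv q (v x₀)) • fderiv ℝ v x₀))) x₀ :=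
    (h1.mul h2).mul h3
  have hfeq : fderiv ℝ p x₀ = _ := hFG.fderiv_eq.trans hG.fderiv
  -- evaluate at the basis vector
  have hLe : L (Pi.single i 1) = w x₀ • (Pi.single i 1 : Fin n → ℝ) := by
    ext j
    rw [hL, ContinuousLinearMap.pi_apply]
    by_cases hj : j = i
    · subst hj; simp [hwdef]
    · simp [hj, Pi.single_eq_of_ne hj]
  have happ : fderiv ℝ p x₀ (Pi.single i 1)
      = (q (v x₀) * ri (Function.update x₀ i (v x₀))) * (σ * fderiv ℝ w x₀ (Pi.single i 1))
        + (σ * w x₀) * (q (v x₀) * (w x₀ *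
              fderiv ℝ ri (Function.update x₀ i (v x₀)) (Pi.single i 1))
            + ri (Function.update x₀ i (v x₀)) * (deriv q (v x₀) * w x₀)) := by
    rw [hfeq]
    simp only [ContinuousLinearMap.add_apply, ContinuousLinearMap.smul_apply,
      ContinuousLinearMap.coe_smul', Pi.smul_apply,
      ContinuousLinearMap.comp_apply, hLe, _root_.map_smul, smul_eq_mul]
    rfl
  -- final algebra
  have hpx : p x₀ = q (v x₀) * ri (Function.update x₀ i (v x₀)) * (σ * w x₀) := by
    have h := hFG.self_of_nhds
    simpa using h
  have hqne : q (v x₀) ≠ 0 := (hqpos (v x₀)).ne'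
  have hrne : ri (Function.update x₀ i (v x₀)) ≠ 0 := (hrpos _).ne'
  have hwne' : w x₀ ≠ 0 := hwne x₀
  have hσne : σ ≠ 0 := by rw [hσ]; split <;> norm_num
  rw [hpx, happ]
  field_simp
  ring

/-- **Score change of variables, ℝⁿ → ℝ (dimension reduction).**
Let `p` be a positive C¹ probability density on `ℝⁿ`, `v : ℝⁿ → ℝ` a C² map with nonvanishing
gradient, `q` a positive C¹ density of `Y = v(X)`, and for each `i` let `r i` be a C¹ conditional
density such that the density of `Z = φ_i(X)`, `φ_i(x) = (x₁,…,x_{i−1},v(x),x_{i+1},…,xₙ)`,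
factors as `q(z_i) · r_i(z)`.  Then with `y = v(x)`,
`(log q)'(y) = ‖∇v(x)‖⁻² (∇v(x)ᵀ ∇ₓ log p(x) − Δv(x) − Σᵢ (∂ᵢv)² ∂_y log p((x_j)_{j≠i} ∣ y))`. -/
theorem score_change_of_variables_dim_reduction {n : ℕ}
    (p : (Fin n → ℝ) → ℝ) (hp : ∀ x, 0 < p x) (hpC : ContDiff ℝ 1 p)
    (hp1 : ∫ x, p x = 1)
    (v : (Fin n → ℝ) → ℝ) (hv : ContDiff ℝ 2 v)
    (hgrad : ∀ x, (fun i => pderiv' v i x) ≠ 0)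
    (q : ℝ → ℝ) (hqpos : ∀ y, 0 < q y) (hqC : ContDiff ℝ 1 q)
    (hqdens : Measure.map v (volume.withDensity fun x => ENNReal.ofReal (p x))
        = volume.withDensity fun y => ENNReal.ofReal (q y))
    (r : Fin n → (Fin n → ℝ) → ℝ)
    (hrpos : ∀ i z, 0 < r i z) (hrC : ∀ i, ContDiff ℝ 1 (r i))
    (hfact : ∀ i,
      Measure.map (fun x => Function.update x i (v x))
          (volume.withDensity fun x => ENNReal.ofReal (p x))
        = volume.withDensity fun z => ENNReal.ofReal (q (z i) * r i z)) :
    ∀ x,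
      deriv (fun t => Real.log (q t)) (v x)
        = (∑ j, (pderiv' v j x) ^ 2)⁻¹ *
            ((∑ j, pderiv' v j x * pderiv' (fun z => Real.log (p z)) j x)
              - (∑ i, pderiv' (pderiv' v i) i x)
              - ∑ i, (pderiv' v i x) ^ 2 *
                  deriv (fun s => Real.log (r i (Function.update x i s))) (v x)) := by
  classical
  intro x
  rcases Nat.eq_zero_or_pos n with hn0 | hn
  · subst hn0
    exact absurd (funext fun i => i.elim0) (hgrad x)
  have hne : Nonempty (Fin n) := ⟨⟨0, hn⟩⟩
  have hvC1 : ContDiff ℝ 1 v := hv.of_le (by norm_num)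
  -- nonvanishing partial derivatives
  have hwne : ∀ (i : Fin n) (x' : Fin n → ℝ), fderiv ℝ v x' (Pi.single i 1) ≠ 0 := by
    intro i
    exact partial_ne_zero p hp hpC.continuous v hvC1 (fun z => q (z i) * r i z)
      (fun z => mul_pos (hqpos _) (hrpos i z))
      ((hqC.continuous.comp (continuous_apply i)).mul (hrC i).continuous) i (hfact i)
  -- pointwise density identity
  have hid : ∀ (i : Fin n) (x' : Fin n → ℝ),
      p x' = q (v x') * r i (Function.update x' i (v x'))
        * |fderiv ℝ v x' (Pi.single i 1)| := by
    intro i x'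
    have h := density_identity p hp hpC.continuous v hvC1 (fun z => q (z i) * r i z)
      (fun z => mul_pos (hqpos _) (hrpos i z))
      ((hqC.continuous.comp (continuous_apply i)).mul (hrC i).continuous) i (hfact i)
      (hwne i) x'
    simpa [Function.update_self] using h
  -- per-coordinate identity
  have hkey : ∀ i : Fin n,
      fderiv ℝ v x (Pi.single i 1) * (fderiv ℝ p x (Pi.single i 1) / p x)
      = (deriv q (v x) / q (v x)) * (fderiv ℝ v x (Pi.single i 1)) ^ 2
        + (fderiv ℝ v x (Pi.single i 1)) ^ 2 *
            (fderiv ℝ (r i) (Function.update x i (v x)) (Pi.single i 1)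
              / r i (Function.update x i (v x)))
        + fderiv ℝ (fun x' => fderiv ℝ v x' (Pi.single i 1)) x (Pi.single i 1) :=
    fun i => key_calc p v q (r i) i hpC hv hqC (hrC i) hp hqpos (hrpos i) (hid i) (hwne i) x
  -- log-derivative computations
  have hlogq : deriv (fun t => Real.log (q t)) (v x) = deriv q (v x) / q (v x) := by
    have hq' : HasDerivAt q (deriv q (v x)) (v x) :=
      ((hqC.differentiable (by norm_num)) (v x)).hasDerivAt
    exact (hq'.log (hqpos _).ne').deriv
  have hlogp : ∀ j : Fin n, pderiv' (fun z => Real.log (p z)) j x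
      = fderiv ℝ p x (Pi.single j 1) / p x := by
    intro j
    have hp' : HasFDerivAt p (fderiv ℝ p x) x := ((hpC.differentiable (by norm_num)) x).hasFDerivAt
    have hl := (hp'.log (hp x).ne').fderiv
    show fderiv ℝ (fun z => Real.log (p z)) x (Pi.single j 1) = _
    rw [hl]
    simp only [ContinuousLinearMap.coe_smul', Pi.smul_apply, smul_eq_mul]
    rw [div_eq_inv_mul]
  have hlogr : ∀ i : Fin n, deriv (fun s => Real.log (r i (Function.update x i s))) (v x)
      = fderiv ℝ (r i) (Function.update x i (v x)) (Pi.single i 1)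
          / r i (Function.update x i (v x)) := by
    intro i
    have hline : HasDerivAt (fun s : ℝ => Function.update x i s)
        (Pi.single i 1 : Fin n → ℝ) (v x) := by
      have heq : (fun s : ℝ => Function.update x i s)
          = (fun s : ℝ => Function.update x i 0 + s • (Pi.single i 1 : Fin n → ℝ)) := by
        ext s j
        by_cases hj : j = i
        · subst hj; simp
        · simp only [Function.update_of_ne hj, Pi.add_apply, Pi.smul_apply,
            Pi.single_eq_of_ne hj, smul_eq_mul, mul_zero, add_zero]
      rw [heq]
      have h' := ((hasDerivAt_id (v x)).smul_const (Pi.single i 1 : Fin n → ℝ)).const_add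
        (Function.update x i 0)
      simpa using h'
    have hrd : HasFDerivAt (r i) (fderiv ℝ (r i) (Function.update x i (v x)))
        (Function.update x i (v x)) := (((hrC i).differentiable (by norm_num)) _).hasFDerivAt
    have hcomp : HasDerivAt (fun s => r i (Function.update x i s))
        (fderiv ℝ (r i) (Function.update x i (v x)) (Pi.single i 1)) (v x) :=
      hrd.comp_hasDerivAt (v x) hline
    exact (hcomp.log (hrpos i _).ne').deriv
  -- sums
  have hpd : ∀ j : Fin n, pderiv' v j x = fderiv ℝ v x (Pi.single j 1) := fun j => rfl
  have hpdd : ∀ i : Fin n, pderiv' (pderiv' v i) i x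
      = fderiv ℝ (fun x' => fderiv ℝ v x' (Pi.single i 1)) x (Pi.single i 1) := fun i => rfl
  have hS : 0 < ∑ j, (fderiv ℝ v x (Pi.single j 1)) ^ 2 :=
    Finset.sum_pos (fun j _ => pow_two_pos_of_ne_zero (hwne j x)) Finset.univ_nonempty
  have hsum : ∑ j, fderiv ℝ v x (Pi.single j 1) * (fderiv ℝ p x (Pi.single j 1) / p x)
      = (deriv q (v x) / q (v x)) * ∑ j, (fderiv ℝ v x (Pi.single j 1)) ^ 2
        + (∑ i, (fderiv ℝ v x (Pi.single i 1)) ^ 2 *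
            (fderiv ℝ (r i) (Function.update x i (v x)) (Pi.single i 1)
              / r i (Function.update x i (v x))))
        + ∑ i, fderiv ℝ (fun x' => fderiv ℝ v x' (Pi.single i 1)) x (Pi.single i 1) := by
    rw [Finset.sum_congr rfl (fun j _ => hkey j), Finset.sum_add_distrib,
      Finset.sum_add_distrib, ← Finset.mul_sum]
  rw [hlogq]
  simp only [hpd, hpdd, hlogp, hlogr]
  rw [hsum]
  field_simp
  ring
end
end

section
/- Fix t and let φ = φ(·, t) : ℝⁿ → ℝⁿ be a bijective, twice continuously differentiable map with twice continuously differentiable inverse, differentiable in t; let f : ℝⁿ → ℝⁿ and G : ℝⁿ → ℝ^{n×n} be continuously differentiable; let p : ℝⁿ → ℝ be a positive continuously differentiable density and define q(y) = p(φ⁻¹(y)) · |det J_{φ⁻¹}(y)|. Define the reverse drift f̄(x) = f(x) − G(x)G(x)ᵀ ∇_x log p(x) − ∇_x·(G(x)G(x)ᵀ), the transformed drift f̃(y) = ∂φ(x,t)/∂t + J_φ(x) f(x) + ½ Tr[G(x)ᵀ H_φ(x) G(x)] at x = φ⁻¹(y), and the transformed diffusion G̃(y) = J_φ(x) G(x)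 at x = φ⁻¹(y). Then for every y, with x = φ⁻¹(y): f̃(y) − G̃(y)G̃(y)ᵀ ∇_y log q(y) − ∇_y·(G̃(y)G̃(y)ᵀ) = ∂φ(x,t)/∂t + J_φ(x) f̄(x) − ½ Tr[G(x)ᵀ H_φ(x) G(x)]. -/
open MeasureTheory

open scoped BigOperators

section prelim
variable {n : ℕ}

lemma clm_apply_eq_sum' {F : Type*} [NormedAddCommGroup F] [NormedSpace ℝ F]
    (L : (Fin n → ℝ) →L[ℝ] F) (v : Fin n → ℝ) :
    L v = ∑ l, v l • L (Pi.single l 1) := by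
  conv_lhs => rw [← Finset.univ_sum_single v]
  rw [map_sum]
  refine Finset.sum_congr rfl fun l _ => ?_
  have h : Pi.single (M := fun _ : Fin n => ℝ) l (v l)
      = v l • (Pi.single (M := fun _ : Fin n => ℝ) l 1) := by
    ext j
    by_cases h : j = l <;> simp [Pi.single_apply, h]
  rw [h, _root_.map_smul]

lemma clm_apply_eq_sum (L : (Fin n → ℝ) →L[ℝ] ℝ) (v : Fin n → ℝ) :
    L v = ∑ l, v l * L (Pi.single l 1) := by
  simpa [smul_eq_mul] using clm_apply_eq_sum' L v

lemma clm_entry (L : (Fin n → ℝ) →L[ℝ] (Fin n → ℝ)) (v : Fin n → ℝ) (i : Fin n) :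
    L v i = ∑ l, v l * L (Pi.single l 1) i := by
  rw [clm_apply_eq_sum' L v]
  simp [Finset.sum_apply]

lemma clm2_entry (S : (Fin n → ℝ) →L[ℝ] ((Fin n → ℝ) →L[ℝ] (Fin n → ℝ)))
    (v u : Fin n → ℝ) (i : Fin n) :
    S v u i = ∑ m, v m * S (Pi.single m 1) u i := by
  rw [clm_apply_eq_sum' S v]
  simp [ContinuousLinearMap.sum_apply, ContinuousLinearMap.smul_apply, Finset.sum_apply]

lemma hasFDerivAt_sum_mul {c d : Fin n → (Fin n → ℝ) → ℝ}
    {c' d' : Fin n → ((Fin n → ℝ) →L[ℝ] ℝ)} {y : Fin n → ℝ}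
    (hc : ∀ a, HasFDerivAt (c a) (c' a) y) (hd : ∀ a, HasFDerivAt (d a) (d' a) y) :
    HasFDerivAt (fun z => ∑ a, c a z * d a z)
      (∑ a, (c a y • d' a + d a y • c' a)) y :=
  HasFDerivAt.fun_sum fun a _ => (hc a).mul (hd a)

lemma pderiv_sum_mul {c d : Fin n → (Fin n → ℝ) → ℝ}
    {c' d' : Fin n → ((Fin n → ℝ) →L[ℝ] ℝ)} {y : Fin n → ℝ} (j : Fin n)
    (hc : ∀ a, HasFDerivAt (c a) (c' a) y) (hd : ∀ a, HasFDerivAt (d a) (d' a) y) :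
    fderiv ℝ (fun z => ∑ a, c a z * d a z) y (Pi.single j 1)
      = ∑ a, (c a y * d' a (Pi.single j 1) + d a y * c' a (Pi.single j 1)) := by
  rw [(hasFDerivAt_sum_mul hc hd).fderiv]
  simp [ContinuousLinearMap.sum_apply, ContinuousLinearMap.add_apply,
    ContinuousLinearMap.smul_apply, smul_eq_mul]

end prelim
open scoped BigOperators

lemma det_hasFDerivAt {n : ℕ} {E' : Type*} [NormedAddCommGroup E'] [NormedSpace ℝ E']
    {A : E' → Matrix (Fin n) (Fin n) ℝ} {x : E'} {D : Fin n → Fin n → E' →L[ℝ] ℝ}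
    (h : ∀ k l, HasFDerivAt (fun z => A z k l) (D k l) x) :
    HasFDerivAt (fun z => (A z).det)
      (∑ k, ∑ r, (A x).adjugate k r • D r k) x := by
  have hfun : (fun z => (A z).det)
      = fun z => ∑ σ : Equiv.Perm (Fin n), ((Equiv.Perm.sign σ : ℤ) : ℝ) * ∏ i, A z (σ i) i := by
    funext z; exact Matrix.det_apply' (A z)
  rw [hfun]
  have h1 : HasFDerivAt
      (fun z => ∑ σ : Equiv.Perm (Fin n), ((Equiv.Perm.sign σ : ℤ) : ℝ) * ∏ i, A z (σ i) i)
      (∑ σ : Equiv.Perm (Fin n), ((Equiv.Perm.sign σ : ℤ) : ℝ) •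
        (∑ i, (∏ j ∈ Finset.univ.erase i, A x (σ j) j) • D (σ i) i)) x := by
    refine HasFDerivAt.fun_sum fun σ _ => ?_
    exact (HasFDerivAt.finset_prod (fun i _ => h (σ i) i)).const_mul _
  refine h1.congr_fderiv ?_
  ext v
  simp only [ContinuousLinearMap.coe_sum', Finset.sum_apply, ContinuousLinearMap.coe_smul',
    Pi.smul_apply, smul_eq_mul]
  have expand : ∀ σ : Equiv.Perm (Fin n),
      ((Equiv.Perm.sign σ : ℤ) : ℝ) *
        ∑ i, (∏ j ∈ Finset.univ.erase i, A x (σ j) j) * (D (σ i) i) v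
      = ∑ i, ((Equiv.Perm.sign σ : ℤ) : ℝ) *
          ((∏ j ∈ Finset.univ.erase i, A x (σ j) j) * (D (σ i) i) v) := by
    intro σ; rw [Finset.mul_sum]
  simp only [expand]
  conv_lhs => rw [Finset.sum_comm]
  refine Finset.sum_congr rfl fun i _ => ?_
  have hdet : ((A x).updateCol i fun r => (D r i) v).det
      = ∑ σ : Equiv.Perm (Fin n), ((Equiv.Perm.sign σ : ℤ) : ℝ) *
          ((∏ j ∈ Finset.univ.erase i, A x (σ j) j) * (D (σ i) i) v) := by
    rw [Matrix.det_apply']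
    refine Finset.sum_congr rfl fun σ _ => ?_
    rw [← Finset.mul_prod_erase Finset.univ _ (Finset.mem_univ i)]
    have hprod : ∏ j ∈ Finset.univ.erase i,
        ((A x).updateCol i fun r => (D r i) v) (σ j) j
        = ∏ j ∈ Finset.univ.erase i, A x (σ j) j := by
      refine Finset.prod_congr rfl fun j hj => ?_
      rw [Matrix.updateCol_apply, if_neg (Finset.ne_of_mem_erase hj)]
    rw [hprod, Matrix.updateCol_self]
    ring
  calc ∑ σ : Equiv.Perm (Fin n), ((Equiv.Perm.sign σ : ℤ) : ℝ) *
        ((∏ j ∈ Finset.univ.erase i, A x (σ j) j) * (D (σ i) i) v)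
      = ((A x).updateCol i fun r => (D r i) v).det := hdet.symm
    _ = Matrix.cramer (A x) (fun r => (D r i) v) i :=
        (Matrix.cramer_apply (A := A x) (fun r => (D r i) v) i).symm
    _ = Matrix.mulVec ((A x).adjugate) (fun r => (D r i) v) i := by
        rw [Matrix.cramer_eq_adjugate_mulVec]
    _ = ∑ r, (A x).adjugate i r * (D r i) v := by
        simp [Matrix.mulVec, dotProduct]
open scoped BigOperators

section helpers
variable {n : ℕ}

lemma sum3_left (f : Fin n → Fin n → Fin n → ℝ) :
    ∑ a, ∑ b, ∑ c, f a b c = ∑ b, ∑ c, ∑ a, f a b c := by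
  rw [Finset.sum_comm]
  exact Finset.sum_congr rfl fun b _ => Finset.sum_comm

lemma sum3_right (f : Fin n → Fin n → Fin n → ℝ) :
    ∑ a, ∑ b, ∑ c, f a b c = ∑ c, ∑ a, ∑ b, f a b c :=
  (sum3_left fun c a b => f a b c).symm

lemma sum4_left (f : Fin n → Fin n → Fin n → Fin n → ℝ) :
    ∑ a, ∑ b, ∑ c, ∑ d, f a b c d = ∑ b, ∑ c, ∑ d, ∑ a, f a b c d := by
  rw [Finset.sum_comm]
  refine Finset.sum_congr rfl fun b _ => ?_
  rw [Finset.sum_comm]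
  exact Finset.sum_congr rfl fun c _ => Finset.sum_comm

lemma sum5_left (f : Fin n → Fin n → Fin n → Fin n → Fin n → ℝ) :
    ∑ a, ∑ b, ∑ c, ∑ d, ∑ e, f a b c d e
      = ∑ b, ∑ c, ∑ d, ∑ e, ∑ a, f a b c d e := by
  rw [Finset.sum_comm]
  refine Finset.sum_congr rfl fun b _ => ?_
  rw [Finset.sum_comm]
  refine Finset.sum_congr rfl fun c _ => ?_
  rw [Finset.sum_comm]
  exact Finset.sum_congr rfl fun d _ => Finset.sum_comm

end helpers

lemma contract_aux {n : ℕ} (Mx N Gv : Fin n → Fin n → ℝ)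
    (GT : Fin n → Fin n → ℝ)
    (hNM : ∀ m k, ∑ j, N m j * Mx j k = if m = k then 1 else 0)
    (hGT : ∀ u a, GT u a = ∑ k, Mx u k * Gv k a)
    (a m : Fin n) : ∑ j, GT j a * N m j = Gv m a := by
  simp only [hGT, Finset.sum_mul]
  rw [Finset.sum_comm]
  have : ∀ k, ∑ j, Mx j k * Gv k a * N m j = Gv k a * ∑ j, N m j * Mx j k := by
    intro k; rw [Finset.mul_sum]; exact Finset.sum_congr rfl fun j _ => by ring
  simp only [this, hNM, mul_ite, mul_one, mul_zero]
  simp [Finset.sum_ite_eq]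

lemma key_algebra {n : ℕ} (Mx N Gv : Fin n → Fin n → ℝ)
    (H dG : Fin n → Fin n → Fin n → ℝ) (w : Fin n → ℝ)
    (GT : Fin n → Fin n → ℝ) (dGT : Fin n → Fin n → Fin n → ℝ)
    (hNM : ∀ m k, ∑ j, N m j * Mx j k = if m = k then 1 else 0)
    (hH : ∀ i l m, H i l m = H i m l)
    (hGT : ∀ u a, GT u a = ∑ k, Mx u k * Gv k a)
    (hdGT : ∀ u a j, dGT u a j =
      ∑ k, ((∑ m, H u k m * N m j) * Gv k a + Mx u k * (∑ m, dG k a m * N m j)))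
    (i : Fin n) :
    (∑ j, (∑ a, GT i a * GT j a) *
        ((∑ l, w l * N l j) - ∑ k, ∑ r, ∑ m, N k r * H r k m * N m j))
      + ∑ j, ∑ a, (dGT i a j * GT j a + GT i a * dGT j a j)
    = ∑ j, Mx i j *
        ((∑ k, (∑ a, Gv j a * Gv k a) * w k)
          + ∑ k, ∑ a, (dG j a k * Gv k a + Gv j a * dG k a k))
      + ∑ a, ∑ jj, ∑ k, Gv jj a * H i k jj * Gv k a := by
  have hc := contract_aux Mx N Gv GT hNM hGT
  -- ================= Piece 1 : the w-part =====================
  have hL1 : ∑ j, (∑ a, GT i a * GT j a) * (∑ l, w l * N l j)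
      = ∑ j, Mx i j * ∑ k, (∑ a, Gv j a * Gv k a) * w k := by
    have step1 : ∀ j, (∑ a, GT i a * GT j a) * (∑ l, w l * N l j)
        = ∑ l, ∑ a, w l * (GT i a * (GT j a * N l j)) := by
      intro j
      rw [Finset.sum_mul_sum, Finset.sum_comm]
      exact Finset.sum_congr rfl fun l _ => Finset.sum_congr rfl fun a _ => by ring
    simp only [step1]
    rw [Finset.sum_comm]
    have step2 : ∀ l, ∑ j, ∑ a, w l * (GT i a * (GT j a * N l j))
        = ∑ a, w l * (GT i a * Gv l a) := by
      intro l
      rw [Finset.sum_comm]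
      refine Finset.sum_congr rfl fun a _ => ?_
      rw [← hc a l, Finset.mul_sum, Finset.mul_sum]
    simp only [step2]
    have step3 : ∀ l a, w l * (GT i a * Gv l a)
        = ∑ jj, w l * (Mx i jj * (Gv jj a * Gv l a)) := by
      intro l a
      rw [hGT, Finset.sum_mul, Finset.mul_sum]
      exact Finset.sum_congr rfl fun jj _ => by ring
    simp only [step3]
    rw [sum3_right]
    refine Finset.sum_congr rfl fun jj _ => ?_
    rw [Finset.mul_sum]
    refine Finset.sum_congr rfl fun l _ => ?_
    rw [Finset.sum_mul, Finset.mul_sum]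
    exact Finset.sum_congr rfl fun a _ => by ring
  -- ================= Piece 2 : dGT_i * GT ======================
  have hL3 : ∑ j, ∑ a, dGT i a j * GT j a
      = (∑ j, Mx i j * ∑ k, ∑ a, dG j a k * Gv k a)
        + ∑ a, ∑ jj, ∑ k, Gv jj a * H i k jj * Gv k a := by
    have hsplit : ∀ j a, dGT i a j * GT j a
        = (∑ k, ∑ m, Mx i k * (dG k a m * (N m j * GT j a)))
          + ∑ k, ∑ m, H i k m * (Gv k a * (N m j * GT j a)) := by
      intro j a
      rw [hdGT, Finset.sum_mul, ← Finset.sum_add_distrib]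
      refine Finset.sum_congr rfl fun k _ => ?_
      rw [add_mul, add_comm]
      congr 1
      · rw [Finset.mul_sum, Finset.sum_mul]
        exact Finset.sum_congr rfl fun m _ => by ring
      · rw [Finset.sum_mul, Finset.sum_mul]
        exact Finset.sum_congr rfl fun m _ => by ring
    simp only [hsplit, Finset.sum_add_distrib]
    congr 1
    · -- Mx-part
      calc ∑ j, ∑ a, ∑ k, ∑ m, Mx i k * (dG k a m * (N m j * GT j a))
          = ∑ a, ∑ k, ∑ m, ∑ j, Mx i k * (dG k a m * (N m j * GT j a)) := sum4_left _
        _ = ∑ a, ∑ k, ∑ m, Mx i k * (dG k a m * Gv m a) := by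
            refine Finset.sum_congr rfl fun a _ => Finset.sum_congr rfl fun k _ =>
              Finset.sum_congr rfl fun m _ => ?_
            rw [← hc a m, Finset.mul_sum, Finset.mul_sum]
            exact Finset.sum_congr rfl fun j _ => by ring
        _ = ∑ j, Mx i j * ∑ k, ∑ a, dG j a k * Gv k a := by
            rw [sum3_left]
            refine Finset.sum_congr rfl fun k _ => ?_
            rw [Finset.mul_sum]
            refine Finset.sum_congr rfl fun m _ => ?_
            rw [Finset.mul_sum]
    · -- H-part
      calc ∑ j, ∑ a, ∑ k, ∑ m, H i k m * (Gv k a * (N m j * GT j a))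
          = ∑ a, ∑ k, ∑ m, ∑ j, H i k m * (Gv k a * (N m j * GT j a)) := sum4_left _
        _ = ∑ a, ∑ k, ∑ m, H i k m * (Gv k a * Gv m a) := by
            refine Finset.sum_congr rfl fun a _ => Finset.sum_congr rfl fun k _ =>
              Finset.sum_congr rfl fun m _ => ?_
            rw [← hc a m, Finset.mul_sum, Finset.mul_sum]
            exact Finset.sum_congr rfl fun j _ => by ring
        _ = ∑ a, ∑ jj, ∑ k, Gv jj a * H i k jj * Gv k a := by
            refine Finset.sum_congr rfl fun a _ => ?_
            rw [Finset.sum_comm]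
            exact Finset.sum_congr rfl fun jj _ => Finset.sum_congr rfl fun k _ => by ring
  -- ================= Piece 3 : GT_i * dGT ======================
  have hL4 : ∑ j, ∑ a, GT i a * dGT j a j
      = (∑ j, (∑ a, GT i a * GT j a) * (∑ k, ∑ r, ∑ m, N k r * H r k m * N m j))
        + ∑ j, Mx i j * ∑ k, ∑ a, Gv j a * dG k a k := by
    have hsplit : ∀ j a, GT i a * dGT j a j
        = (∑ k, ∑ m, GT i a * (N m j * (H j m k * Gv k a)))
          + ∑ k, ∑ m, GT i a * (Mx j k * (dG k a m * N m j)) := by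
      intro j a
      rw [hdGT, Finset.mul_sum, ← Finset.sum_add_distrib]
      refine Finset.sum_congr rfl fun k _ => ?_
      rw [mul_add]
      congr 1
      · rw [Finset.sum_mul, Finset.mul_sum]
        refine Finset.sum_congr rfl fun m _ => ?_
        rw [hH j k m]; ring
      · rw [Finset.mul_sum, Finset.mul_sum]
    simp only [hsplit, Finset.sum_add_distrib]
    congr 1
    · -- V-part
      have rhs1 : ∀ j, (∑ a, GT i a * GT j a) * (∑ k, ∑ r, ∑ m, N k r * H r k m * N m j)
          = ∑ a, ∑ k, ∑ r, ∑ m, GT i a * (N k r * (H r k m * (N m j * GT j a))) := by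
        intro j
        rw [Finset.sum_mul_sum]
        refine Finset.sum_congr rfl fun a _ => Finset.sum_congr rfl fun k _ => ?_
        rw [Finset.mul_sum]
        refine Finset.sum_congr rfl fun r _ => ?_
        rw [Finset.mul_sum]
        exact Finset.sum_congr rfl fun m _ => by ring
      simp only [rhs1]
      trans (∑ a, ∑ k, ∑ r, ∑ m, GT i a * (N k r * (H r k m * Gv m a)))
      · conv_lhs => rw [Finset.sum_comm]
        exact Finset.sum_congr rfl fun a _ => sum3_right _
      · symm
        calc ∑ j, ∑ a, ∑ k, ∑ r, ∑ m, GT i a * (N k r * (H r k m * (N m j * GT j a)))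
            = ∑ a, ∑ k, ∑ r, ∑ m, ∑ j,
                GT i a * (N k r * (H r k m * (N m j * GT j a))) := sum5_left _
          _ = ∑ a, ∑ k, ∑ r, ∑ m, GT i a * (N k r * (H r k m * Gv m a)) := by
              refine Finset.sum_congr rfl fun a _ => Finset.sum_congr rfl fun k _ =>
                Finset.sum_congr rfl fun r _ => Finset.sum_congr rfl fun m _ => ?_
              rw [← hc a m, Finset.mul_sum, Finset.mul_sum, Finset.mul_sum]
              exact Finset.sum_congr rfl fun j _ => by ring
    · -- dG-part
      calc ∑ j, ∑ a, ∑ k, ∑ m, GT i a * (Mx j k * (dG k a m * N m j))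
          = ∑ a, ∑ k, ∑ m, ∑ j, GT i a * (Mx j k * (dG k a m * N m j)) := sum4_left _
        _ = ∑ a, ∑ k, ∑ m, GT i a * (dG k a m * (if m = k then 1 else 0)) := by
            refine Finset.sum_congr rfl fun a _ => Finset.sum_congr rfl fun k _ =>
              Finset.sum_congr rfl fun m _ => ?_
            rw [← hNM m k, Finset.mul_sum, Finset.mul_sum]
            exact Finset.sum_congr rfl fun j _ => by ring
        _ = ∑ a, ∑ k, GT i a * dG k a k := by
            refine Finset.sum_congr rfl fun a _ => Finset.sum_congr rfl fun k _ => ?_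
            simp [mul_ite, Finset.sum_ite_eq']
        _ = ∑ j, Mx i j * ∑ k, ∑ a, Gv j a * dG k a k := by
            have expand : ∀ a k, GT i a * dG k a k
                = ∑ l, Mx i l * (Gv l a * dG k a k) := by
              intro a k
              rw [hGT, Finset.sum_mul]
              exact Finset.sum_congr rfl fun l _ => by ring
            simp only [expand]
            rw [sum3_right]
            refine Finset.sum_congr rfl fun l _ => ?_
            rw [Finset.mul_sum]
            conv_lhs => rw [Finset.sum_comm]
            refine Finset.sum_congr rfl fun k _ => ?_
            rw [Finset.mul_sum]
  -- ================= assembly =====================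
  have expand_lhs : ∀ j, (∑ a, GT i a * GT j a) *
        ((∑ l, w l * N l j) - ∑ k, ∑ r, ∑ m, N k r * H r k m * N m j)
      = (∑ a, GT i a * GT j a) * (∑ l, w l * N l j)
        - (∑ a, GT i a * GT j a) * (∑ k, ∑ r, ∑ m, N k r * H r k m * N m j) := by
    intro j; ring
  simp only [expand_lhs, mul_add, Finset.sum_add_distrib, Finset.sum_sub_distrib]
  rw [hL1, hL3, hL4]
  ring


noncomputable section

/-- **Reverse-time Itô lemma (drift identity).**
Fix `t` and let `φ = Φ t : ℝⁿ → ℝⁿ` be a C² diffeomorphism (inverse `ψ`), differentiable in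
`t`; let `f` be a C¹ drift, `G` a C¹ diffusion matrix, `p` a positive C¹ density with
transformed density `q y = p (ψ y) |det J_ψ(y)|`.  With Anderson's reverse drift `f̄`, the
Itô-transformed drift `f̃` and diffusion `G̃`, for every `y`, with `x = ψ y`:
`f̃(y) − G̃ G̃ᵀ ∇_y log q(y) − ∇_y·(G̃ G̃ᵀ) = ∂φ/∂t + J_φ(x) f̄(x) − ½ Tr[G(x)ᵀ H_φ(x) G(x)]`. -/
theorem reverse_time_ito_drift {n : ℕ}
    (Φ : ℝ → (Fin n → ℝ) → (Fin n → ℝ)) (t : ℝ)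
    (ψ : (Fin n → ℝ) → (Fin n → ℝ))
    (hbij : Function.Bijective (Φ t))
    (hφC : ContDiff ℝ 2 (Φ t)) (hψC : ContDiff ℝ 2 ψ)
    (hleft : Function.LeftInverse ψ (Φ t)) (hright : Function.RightInverse ψ (Φ t))
    (htdiff : ∀ x i, DifferentiableAt ℝ (fun s => Φ s x i) t)
    (f : (Fin n → ℝ) → (Fin n → ℝ)) (hf : ContDiff ℝ 1 f)
    (G : (Fin n → ℝ) → Fin n → Fin n → ℝ)
    (hG : ∀ i j, ContDiff ℝ 1 fun x => G x i j)
    (p : (Fin n → ℝ) → ℝ) (hp : ∀ x, 0 < p x) (hpC : ContDiff ℝ 1 p)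
    (hp1 : ∫ x, p x = 1)
    (q : (Fin n → ℝ) → ℝ)
    (hq : ∀ y, q y = p (ψ y) * |(jac ψ y).det|)
    -- Anderson's reverse-time drift of `dX = f dt + G dW`:
    (fbar : (Fin n → ℝ) → Fin n → ℝ)
    (hfbar : ∀ x j,
      fbar x j = f x j
        - (∑ k, (∑ a, G x j a * G x k a) *
            pderiv' (fun z => Real.log (p z)) k x)
        - ∑ k, pderiv' (fun z => ∑ a, G z j a * G z k a) k x)
    -- Drift of `Y = φ(X, t)` obtained from Itô's lemma:
    (ftil : (Fin n → ℝ) → Fin n → ℝ)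
    (hftil : ∀ y i,
      ftil y i = deriv (fun s => Φ s (ψ y) i) t
        + (∑ j, jac (Φ t) (ψ y) i j * f (ψ y) j)
        + (1 / 2) * ∑ a, ∑ j, ∑ k, G (ψ y) j a *
            pderiv' (pderiv' (fun z => Φ t z i) k) j (ψ y) * G (ψ y) k a)
    -- Diffusion of `Y = φ(X, t)` obtained from Itô's lemma:
    (Gtil : (Fin n → ℝ) → Fin n → Fin n → ℝ)
    (hGtil : ∀ y i j, Gtil y i j = ∑ k, jac (Φ t) (ψ y) i k * G (ψ y) k j) :
    ∀ y i,
      ftil y i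
        - (∑ j, (∑ a, Gtil y i a * Gtil y j a) *
            pderiv' (fun z => Real.log (q z)) j y)
        - (∑ j, pderiv' (fun z => ∑ a, Gtil z i a * Gtil z j a) j y)
      = deriv (fun s => Φ s (ψ y) i) t
        + (∑ j, jac (Φ t) (ψ y) i j * fbar (ψ y) j)
        - (1 / 2) * ∑ a, ∑ j, ∑ k, G (ψ y) j a *
            pderiv' (pderiv' (fun z => Φ t z i) k) j (ψ y) * G (ψ y) k a := by
  intro y i
  have hφd : Differentiable ℝ (Φ t) := hφC.differentiable (by norm_num)
  have hψd : Differentiable ℝ ψ := hψC.differentiable (by norm_num)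
  have hpd : Differentiable ℝ p := hpC.differentiable (by norm_num)
  have hfd1 : ContDiff ℝ 1 (fderiv ℝ (Φ t)) := hφC.fderiv_right (by norm_num)
  have hfdd : Differentiable ℝ (fderiv ℝ (Φ t)) := hfd1.differentiable (by norm_num)
  -- ===== jacobian inverse identities =====
  have hMNfun : ∀ z, (fderiv ℝ (Φ t) (ψ z)).comp (fderiv ℝ ψ z)
      = ContinuousLinearMap.id ℝ (Fin n → ℝ) := by
    intro z
    have hcomp : HasFDerivAt (fun w => Φ t (ψ w))
        ((fderiv ℝ (Φ t) (ψ z)).comp (fderiv ℝ ψ z)) z :=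
      (hφd (ψ z)).hasFDerivAt.comp z (hψd z).hasFDerivAt
    have hid : (fun w => Φ t (ψ w)) = fun w => w := funext fun w => hright w
    rw [hid] at hcomp
    exact hcomp.unique (hasFDerivAt_id z)
  have hNMfun : (fderiv ℝ ψ y).comp (fderiv ℝ (Φ t) (ψ y))
      = ContinuousLinearMap.id ℝ (Fin n → ℝ) := by
    have hcomp : HasFDerivAt (fun w => ψ (Φ t w))
        ((fderiv ℝ ψ (Φ t (ψ y))).comp (fderiv ℝ (Φ t) (ψ y))) (ψ y) :=
      (hψd (Φ t (ψ y))).hasFDerivAt.comp (ψ y) (hφd (ψ y)).hasFDerivAt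
    have hid : (fun w => ψ (Φ t w)) = fun w => w := funext fun w => hleft w
    rw [hid] at hcomp
    rw [hright y] at hcomp
    exact hcomp.unique (hasFDerivAt_id (ψ y))
  have hMN : ∀ z i' k, ∑ l, jac (Φ t) (ψ z) i' l * jac ψ z l k
      = if i' = k then 1 else 0 := by
    intro z i' k
    have h1 := congrArg
      (fun L : (Fin n → ℝ) →L[ℝ] (Fin n → ℝ) => L (Pi.single k 1) i') (hMNfun z)
    simp only [ContinuousLinearMap.comp_apply, ContinuousLinearMap.id_apply] at h1
    rw [clm_entry] at h1
    have h2 : ∑ l, jac (Φ t) (ψ z) i' l * jac ψ z l k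
        = ∑ l, (fderiv ℝ ψ z) (Pi.single k 1) l *
            (fderiv ℝ (Φ t) (ψ z)) (Pi.single l 1) i' := by
      refine Finset.sum_congr rfl fun l _ => ?_
      simp only [jac, Matrix.of_apply]
      ring
    rw [h2, h1, Pi.single_apply]
  have hNM : ∀ m k, ∑ j, jac ψ y m j * jac (Φ t) (ψ y) j k
      = if m = k then 1 else 0 := by
    intro m k
    have h1 := congrArg
      (fun L : (Fin n → ℝ) →L[ℝ] (Fin n → ℝ) => L (Pi.single k 1) m) hNMfun
    simp only [ContinuousLinearMap.comp_apply, ContinuousLinearMap.id_apply] at h1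
    rw [clm_entry] at h1
    have h2 : ∑ j, jac ψ y m j * jac (Φ t) (ψ y) j k
        = ∑ l, (fderiv ℝ (Φ t) (ψ y)) (Pi.single k 1) l *
            (fderiv ℝ ψ y) (Pi.single l 1) m := by
      refine Finset.sum_congr rfl fun l _ => ?_
      simp only [jac, Matrix.of_apply]
      ring
    rw [h2, h1, Pi.single_apply]
  have hMmat : ∀ z, (jac (Φ t) (ψ z)) * (jac ψ z) = 1 := by
    intro z
    ext i' k
    rw [Matrix.mul_apply, Matrix.one_apply]
    exact hMN z i' k
  have hdetMN : ∀ z, (jac (Φ t) (ψ z)).det * (jac ψ z).det = 1 := by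
    intro z
    rw [← Matrix.det_mul, hMmat z, Matrix.det_one]
  have hdetM_ne : ∀ z, (jac (Φ t) (ψ z)).det ≠ 0 :=
    fun z => left_ne_zero_of_mul_eq_one (hdetMN z)
  have hdetN : ∀ z, (jac ψ z).det = ((jac (Φ t) (ψ z)).det)⁻¹ := by
    intro z
    have h2 : (jac ψ z).det * (jac (Φ t) (ψ z)).det = 1 := by
      rw [mul_comm]; exact hdetMN z
    exact eq_inv_of_mul_eq_one_left h2
  have hadjmat : (jac (Φ t) (ψ y)).adjugate = (jac (Φ t) (ψ y)).det • jac ψ y := by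
    calc (jac (Φ t) (ψ y)).adjugate
        = (jac (Φ t) (ψ y)).adjugate * ((jac (Φ t) (ψ y)) * jac ψ y) := by
          rw [hMmat y, Matrix.mul_one]
      _ = ((jac (Φ t) (ψ y)).adjugate * jac (Φ t) (ψ y)) * jac ψ y :=
          (Matrix.mul_assoc _ _ _).symm
      _ = ((jac (Φ t) (ψ y)).det • (1 : Matrix (Fin n) (Fin n) ℝ)) * jac ψ y := by
          rw [Matrix.adjugate_mul]
      _ = (jac (Φ t) (ψ y)).det • jac ψ y := by
          rw [Matrix.smul_mul, Matrix.one_mul]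
  have hadj : ∀ k r, (jac (Φ t) (ψ y)).adjugate k r
      = (jac (Φ t) (ψ y)).det * jac ψ y k r := by
    intro k r
    rw [hadjmat]
    simp [Matrix.smul_apply]
  -- ===== second derivative =====
  have hsymm : ∀ v w, fderiv ℝ (fderiv ℝ (Φ t)) (ψ y) v w
      = fderiv ℝ (fderiv ℝ (Φ t)) (ψ y) w v :=
    fun v w => (hφC.contDiffAt.isSymmSndFDerivAt (by simp [minSmoothness_of_isRCLikeNormedField])) v w
  have hjacφ_eq : ∀ k l, (fun w => jac (Φ t) w k l)
      = fun w => ((ContinuousLinearMap.proj (R := ℝ) (φ := fun _ : Fin n => ℝ) k).comp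
          (ContinuousLinearMap.apply ℝ (Fin n → ℝ) (Pi.single l 1))) (fderiv ℝ (Φ t) w) := by
    intro k l
    funext w
    simp [jac, ContinuousLinearMap.apply_apply]
  have hMent : ∀ k l, HasFDerivAt (fun w => jac (Φ t) w k l)
      (((ContinuousLinearMap.proj (R := ℝ) (φ := fun _ : Fin n => ℝ) k).comp
          (ContinuousLinearMap.apply ℝ (Fin n → ℝ) (Pi.single l 1))).comp
        (fderiv ℝ (fderiv ℝ (Φ t)) (ψ y))) (ψ y) := by
    intro k l
    rw [hjacφ_eq k l]
    exact (ContinuousLinearMap.hasFDerivAt _).comp (ψ y) (hfdd (ψ y)).hasFDerivAt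
  have hMψ : ∀ k l, HasFDerivAt (fun z => jac (Φ t) (ψ z) k l)
      ((((ContinuousLinearMap.proj (R := ℝ) (φ := fun _ : Fin n => ℝ) k).comp
          (ContinuousLinearMap.apply ℝ (Fin n → ℝ) (Pi.single l 1))).comp
        (fderiv ℝ (fderiv ℝ (Φ t)) (ψ y))).comp (fderiv ℝ ψ y)) y :=
    fun k l => (hMent k l).comp y (hψd y).hasFDerivAt
  have hHval : ∀ i' l m, pderiv' (pderiv' (fun z => Φ t z i') l) m (ψ y)
      = fderiv ℝ (fderiv ℝ (Φ t)) (ψ y) (Pi.single m 1) (Pi.single l 1) i' := by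
    intro i' l m
    have hinner : pderiv' (fun z => Φ t z i') l
        = fun w => jac (Φ t) w i' l := by
      funext z
      have hproj : HasFDerivAt (fun w => Φ t w i')
          ((ContinuousLinearMap.proj (R := ℝ) (φ := fun _ : Fin n => ℝ) i').comp
            (fderiv ℝ (Φ t) z)) z :=
        (ContinuousLinearMap.hasFDerivAt
          (ContinuousLinearMap.proj (R := ℝ) (φ := fun _ : Fin n => ℝ) i')).comp z
          (hφd z).hasFDerivAt
      simp only [pderiv', jac, Matrix.of_apply]
      rw [hproj.fderiv]
      simp
    simp only [pderiv']
    rw [hinner, (hMent i' l).fderiv]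
    simp
  have hHsym : ∀ i' l m, pderiv' (pderiv' (fun z => Φ t z i') l) m (ψ y)
      = pderiv' (pderiv' (fun z => Φ t z i') m) l (ψ y) := by
    intro i' l m
    rw [hHval, hHval, hsymm]
  have hSval : ∀ r k j', fderiv ℝ (fderiv ℝ (Φ t)) (ψ y)
        (fderiv ℝ ψ y (Pi.single j' 1)) (Pi.single k 1) r
      = ∑ m, pderiv' (pderiv' (fun z => Φ t z r) k) m (ψ y) * jac ψ y m j' := by
    intro r k j'
    rw [clm2_entry]
    refine Finset.sum_congr rfl fun m _ => ?_
    rw [hHval]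
    simp only [jac, Matrix.of_apply]
    ring
  have hMψval : ∀ k l j',
      (((((ContinuousLinearMap.proj (R := ℝ) (φ := fun _ : Fin n => ℝ) k).comp
          (ContinuousLinearMap.apply ℝ (Fin n → ℝ) (Pi.single l 1))).comp
        (fderiv ℝ (fderiv ℝ (Φ t)) (ψ y))).comp (fderiv ℝ ψ y)) (Pi.single j' 1) : ℝ)
      = ∑ m, pderiv' (pderiv' (fun z => Φ t z k) l) m (ψ y) * jac ψ y m j' := by
    intro k l j'
    simp only [ContinuousLinearMap.comp_apply, ContinuousLinearMap.apply_apply,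
      ContinuousLinearMap.proj_apply]
    exact hSval k l j'
  -- ===== G entries through ψ =====
  have hGψ : ∀ k a, HasFDerivAt (fun z => G (ψ z) k a)
      ((fderiv ℝ (fun w => G w k a) (ψ y)).comp (fderiv ℝ ψ y)) y :=
    fun k a => (((hG k a).differentiable (by norm_num) (ψ y)).hasFDerivAt).comp y
      (hψd y).hasFDerivAt
  have hGψval : ∀ k a j',
      ((fderiv ℝ (fun w => G w k a) (ψ y)).comp (fderiv ℝ ψ y)) (Pi.single j' 1)
      = ∑ m, pderiv' (fun z => G z k a) m (ψ y) * jac ψ y m j' := by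
    intro k a j'
    simp only [ContinuousLinearMap.comp_apply]
    rw [clm_apply_eq_sum]
    refine Finset.sum_congr rfl fun m _ => ?_
    simp only [pderiv', jac, Matrix.of_apply]
    ring
  -- ===== log p values =====
  have hw : ∀ l, pderiv' (fun z => Real.log (p z)) l (ψ y)
      = (p (ψ y))⁻¹ * fderiv ℝ p (ψ y) (Pi.single l 1) := by
    intro l
    have hl : HasFDerivAt (fun z => Real.log (p z))
        ((p (ψ y))⁻¹ • fderiv ℝ p (ψ y)) (ψ y) :=
      (Real.hasDerivAt_log (hp (ψ y)).ne').comp_hasFDerivAt (ψ y)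
        (hpd (ψ y)).hasFDerivAt
    simp only [pderiv']
    rw [hl.fderiv]
    simp
  have hpval : ∀ j', fderiv ℝ p (ψ y) (fderiv ℝ ψ y (Pi.single j' 1))
      = ∑ l, fderiv ℝ p (ψ y) (Pi.single l 1) * jac ψ y l j' := by
    intro j'
    rw [clm_apply_eq_sum]
    refine Finset.sum_congr rfl fun l _ => ?_
    simp only [jac, Matrix.of_apply]
    ring
  -- ===== Gtil row functions =====
  have hGTder : ∀ u a, HasFDerivAt (fun z => ∑ k, jac (Φ t) (ψ z) u k * G (ψ z) k a)
      (∑ k, (jac (Φ t) (ψ y) u k •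
          ((fderiv ℝ (fun w => G w k a) (ψ y)).comp (fderiv ℝ ψ y))
        + G (ψ y) k a •
          ((((ContinuousLinearMap.proj (R := ℝ) (φ := fun _ : Fin n => ℝ) u).comp
            (ContinuousLinearMap.apply ℝ (Fin n → ℝ) (Pi.single k 1))).comp
            (fderiv ℝ (fderiv ℝ (Φ t)) (ψ y))).comp (fderiv ℝ ψ y)))) y := by
    intro u a
    refine HasFDerivAt.fun_sum fun k _ => ?_
    exact (hMψ u k).mul (hGψ k a)
  have hGTderval : ∀ u a j',
      ((∑ k, (jac (Φ t) (ψ y) u k •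
          ((fderiv ℝ (fun w => G w k a) (ψ y)).comp (fderiv ℝ ψ y))
        + G (ψ y) k a •
          ((((ContinuousLinearMap.proj (R := ℝ) (φ := fun _ : Fin n => ℝ) u).comp
            (ContinuousLinearMap.apply ℝ (Fin n → ℝ) (Pi.single k 1))).comp
            (fderiv ℝ (fderiv ℝ (Φ t)) (ψ y))).comp (fderiv ℝ ψ y))))
        (Pi.single j' 1) : ℝ)
      = ∑ k, ((∑ m, pderiv' (pderiv' (fun z => Φ t z u) k) m (ψ y) * jac ψ y m j')
            * G (ψ y) k a
          + jac (Φ t) (ψ y) u k *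
            (∑ m, pderiv' (fun z => G z k a) m (ψ y) * jac ψ y m j')) := by
    intro u a j'
    rw [ContinuousLinearMap.sum_apply]
    refine Finset.sum_congr rfl fun k _ => ?_
    rw [ContinuousLinearMap.add_apply, ContinuousLinearMap.smul_apply,
      ContinuousLinearMap.smul_apply, hGψval k a j', hMψval u k j']
    simp only [smul_eq_mul]
    ring
  -- ===== derivative of the Gtil quadratic form =====
  have hDq : ∀ j', pderiv' (fun z => ∑ a,
        (∑ k, jac (Φ t) (ψ z) i k * G (ψ z) k a) *
        (∑ k, jac (Φ t) (ψ z) j' k * G (ψ z) k a)) j' y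
      = ∑ a, ((∑ k, ((∑ m, pderiv' (pderiv' (fun z => Φ t z i) k) m (ψ y) * jac ψ y m j')
              * G (ψ y) k a
            + jac (Φ t) (ψ y) i k *
              (∑ m, pderiv' (fun z => G z k a) m (ψ y) * jac ψ y m j')))
          * (∑ k, jac (Φ t) (ψ y) j' k * G (ψ y) k a)
        + (∑ k, jac (Φ t) (ψ y) i k * G (ψ y) k a)
          * (∑ k, ((∑ m, pderiv' (pderiv' (fun z => Φ t z j') k) m (ψ y) * jac ψ y m j')
              * G (ψ y) k a
            + jac (Φ t) (ψ y) j' k *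
              (∑ m, pderiv' (fun z => G z k a) m (ψ y) * jac ψ y m j')))) := by
    intro j'
    refine (pderiv_sum_mul j' (fun a => hGTder i a) (fun a => hGTder j' a)).trans ?_
    refine Finset.sum_congr rfl fun a _ => ?_
    rw [hGTderval i a j', hGTderval j' a j']
    ring
  -- ===== derivative of the G quadratic form (at ψ y) =====
  have hdA : ∀ j' k, pderiv' (fun z => ∑ a, G z j' a * G z k a) k (ψ y)
      = ∑ a, (pderiv' (fun z => G z j' a) k (ψ y) * G (ψ y) k a
          + G (ψ y) j' a * pderiv' (fun z => G z k a) k (ψ y)) := by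
    intro j' k
    simp only [pderiv']
    refine (pderiv_sum_mul k (fun a => ((hG j' a).differentiable (by norm_num) (ψ y)).hasFDerivAt)
      (fun a => ((hG k a).differentiable (by norm_num) (ψ y)).hasFDerivAt)).trans ?_
    refine Finset.sum_congr rfl fun a _ => ?_
    ring
  -- ===== derivative of log q =====
  have hLq : ∀ j', pderiv' (fun z => Real.log (q z)) j' y
      = (∑ l, pderiv' (fun z => Real.log (p z)) l (ψ y) * jac ψ y l j')
        - ∑ k, ∑ r, ∑ m, jac ψ y k r *
            pderiv' (pderiv' (fun z => Φ t z r) k) m (ψ y) * jac ψ y m j' := by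
    intro j'
    have hfunq : (fun z => Real.log (q z))
        = fun z => Real.log (p (ψ z)) - Real.log ((jac (Φ t) (ψ z)).det) := by
      funext z
      rw [hq z, hdetN z, Real.log_mul (hp (ψ z)).ne'
        (abs_ne_zero.mpr (inv_ne_zero (hdetM_ne z))), Real.log_abs, Real.log_inv]
      ring
    have hlp : HasFDerivAt (fun z => Real.log (p (ψ z)))
        ((p (ψ y))⁻¹ • ((fderiv ℝ p (ψ y)).comp (fderiv ℝ ψ y))) y :=
      by have := (Real.hasDerivAt_log (hp (ψ y)).ne').comp_hasFDerivAt y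
            ((hpd (ψ y)).hasFDerivAt.comp y (hψd y).hasFDerivAt); exact this
    have hdet : HasFDerivAt (fun z => (jac (Φ t) (ψ z)).det)
        (∑ k, ∑ r, (jac (Φ t) (ψ y)).adjugate k r •
          ((((ContinuousLinearMap.proj (R := ℝ) (φ := fun _ : Fin n => ℝ) r).comp
            (ContinuousLinearMap.apply ℝ (Fin n → ℝ) (Pi.single k 1))).comp
            (fderiv ℝ (fderiv ℝ (Φ t)) (ψ y))).comp (fderiv ℝ ψ y))) y :=
      det_hasFDerivAt (fun k l => hMψ k l)
    have hld : HasFDerivAt (fun z => Real.log ((jac (Φ t) (ψ z)).det))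
        (((jac (Φ t) (ψ y)).det)⁻¹ •
          (∑ k, ∑ r, (jac (Φ t) (ψ y)).adjugate k r •
            ((((ContinuousLinearMap.proj (R := ℝ) (φ := fun _ : Fin n => ℝ) r).comp
              (ContinuousLinearMap.apply ℝ (Fin n → ℝ) (Pi.single k 1))).comp
              (fderiv ℝ (fderiv ℝ (Φ t)) (ψ y))).comp (fderiv ℝ ψ y)))) y :=
      by have := (Real.hasDerivAt_log (hdetM_ne y)).comp_hasFDerivAt y hdet; exact this
    have hsub := (hlp.fun_sub hld).fderiv
    rw [show pderiv' (fun z => Real.log (q z)) j' y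
        = fderiv ℝ (fun z => Real.log (q z)) y (Pi.single j' 1) from rfl]
    rw [hfunq, hsub]
    rw [ContinuousLinearMap.sub_apply, ContinuousLinearMap.smul_apply,
      ContinuousLinearMap.smul_apply, ContinuousLinearMap.comp_apply,
      ContinuousLinearMap.sum_apply]
    simp only [smul_eq_mul]
    congr 1
    · -- p part
      rw [hpval j', Finset.mul_sum]
      refine Finset.sum_congr rfl fun l _ => ?_
      rw [hw l]
      ring
    · -- det part
      rw [Finset.mul_sum]
      refine Finset.sum_congr rfl fun k _ => ?_
      rw [ContinuousLinearMap.sum_apply, Finset.mul_sum]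
      refine Finset.sum_congr rfl fun r _ => ?_
      rw [ContinuousLinearMap.smul_apply]
      simp only [smul_eq_mul, ContinuousLinearMap.comp_apply,
        ContinuousLinearMap.apply_apply, ContinuousLinearMap.proj_apply]
      rw [hSval r k j', hadj k r]
      rw [show ((jac (Φ t) (ψ y)).det)⁻¹ * ((jac (Φ t) (ψ y)).det * jac ψ y k r *
          (∑ m, pderiv' (pderiv' (fun z => Φ t z r) k) m (ψ y) * jac ψ y m j'))
        = (((jac (Φ t) (ψ y)).det)⁻¹ * (jac (Φ t) (ψ y)).det) *
          (jac ψ y k r * (∑ m, pderiv' (pderiv' (fun z => Φ t z r) k) m (ψ y) * jac ψ y m j'))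
        from by ring]
      rw [inv_mul_cancel₀ (hdetM_ne y), one_mul, Finset.mul_sum]
      refine Finset.sum_congr rfl fun m _ => ?_
      ring
  -- ===== assembly =====
  rw [hftil y i]
  simp only [hGtil]
  simp only [hfbar]
  simp only [hdA, hLq, hDq]
  have hsplitf : ∀ j, jac (Φ t) (ψ y) i j * (f (ψ y) j
        - (∑ k, (∑ a, G (ψ y) j a * G (ψ y) k a) *
            pderiv' (fun z => Real.log (p z)) k (ψ y))
        - ∑ k, ∑ a, (pderiv' (fun z => G z j a) k (ψ y) * G (ψ y) k a
            + G (ψ y) j a * pderiv' (fun z => G z k a) k (ψ y)))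
      = jac (Φ t) (ψ y) i j * f (ψ y) j
        - jac (Φ t) (ψ y) i j *
          ((∑ k, (∑ a, G (ψ y) j a * G (ψ y) k a) *
              pderiv' (fun z => Real.log (p z)) k (ψ y))
            + ∑ k, ∑ a, (pderiv' (fun z => G z j a) k (ψ y) * G (ψ y) k a
              + G (ψ y) j a * pderiv' (fun z => G z k a) k (ψ y))) := fun j => by ring
  simp only [hsplitf, Finset.sum_sub_distrib]
  have KA : (∑ j, (∑ a, (∑ k, jac (Φ t) (ψ y) i k * G (ψ y) k a) *
          (∑ k, jac (Φ t) (ψ y) j k * G (ψ y) k a)) *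
          ((∑ l, pderiv' (fun z => Real.log (p z)) l (ψ y) * jac ψ y l j)
            - ∑ k, ∑ r, ∑ m, jac ψ y k r *
                pderiv' (pderiv' (fun z => Φ t z r) k) m (ψ y) * jac ψ y m j))
        + ∑ j, ∑ a,
          ((∑ k, ((∑ m, pderiv' (pderiv' (fun z => Φ t z i) k) m (ψ y) * jac ψ y m j)
                * G (ψ y) k a
              + jac (Φ t) (ψ y) i k *
                (∑ m, pderiv' (fun z => G z k a) m (ψ y) * jac ψ y m j)))
            * (∑ k, jac (Φ t) (ψ y) j k * G (ψ y) k a)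
          + (∑ k, jac (Φ t) (ψ y) i k * G (ψ y) k a) *
            (∑ k, ((∑ m, pderiv' (pderiv' (fun z => Φ t z j) k) m (ψ y) * jac ψ y m j)
                * G (ψ y) k a
              + jac (Φ t) (ψ y) j k *
                (∑ m, pderiv' (fun z => G z k a) m (ψ y) * jac ψ y m j))))
      = ∑ j, jac (Φ t) (ψ y) i j *
          ((∑ k, (∑ a, G (ψ y) j a * G (ψ y) k a) *
              pderiv' (fun z => Real.log (p z)) k (ψ y))
            + ∑ k, ∑ a, (pderiv' (fun z => G z j a) k (ψ y) * G (ψ y) k a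
              + G (ψ y) j a * pderiv' (fun z => G z k a) k (ψ y)))
        + ∑ a, ∑ jj, ∑ k, G (ψ y) jj a *
            pderiv' (pderiv' (fun z => Φ t z i) k) jj (ψ y) * G (ψ y) k a :=
    key_algebra _ _ _ _ _ _ _ _ hNM hHsym (fun u a => rfl) (fun u a j => rfl) i
  linear_combination -KA
end
end

section
/- Let φ : ℝⁿ → ℝⁿ be a bijective, twice continuously differentiable map with twice continuously differentiable inverse, let G : ℝⁿ → ℝ^{n×n} be continuously differentiable, let p : ℝⁿ → ℝ be a positive continuously differentiable density, and define q(y) = p(φ⁻¹(y)) · |det J_{φ⁻¹}(y)| and G̃(y) = J_φ(φ⁻¹(y)) G(φ⁻¹(y)). Then for every y, with x = φ⁻¹(y): (1 / q(y)) · ∇_y · [ q(y) · G̃(y)ᵀ ] = (1 / p(x)) · ∇_x · [ p(x) · G(x)ᵀ ]. -/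
open MeasureTheory

noncomputable section

namespace RWI

variable {n : ℕ}

lemma vec_eq_sum_single (v : Fin n → ℝ) :
    v = ∑ m, v m • (Pi.single m 1 : Fin n → ℝ) := by
  funext k
  rw [Finset.sum_apply]
  simp [Pi.single_apply]

lemma clm_apply_eq_sum (L : (Fin n → ℝ) →L[ℝ] (Fin n → ℝ)) (v : Fin n → ℝ) (i : Fin n) :
    L v i = ∑ m, v m * L (Pi.single m 1) i := by
  have h : L v = ∑ m, v m • L (Pi.single m 1) := by
    conv_lhs => rw [vec_eq_sum_single v]
    simp
  rw [h, Finset.sum_apply]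
  simp

lemma clmr_apply_eq_sum (L : (Fin n → ℝ) →L[ℝ] ℝ) (v : Fin n → ℝ) :
    L v = ∑ m, v m * L (Pi.single m 1) := by
  conv_lhs => rw [vec_eq_sum_single v]
  simp [smul_eq_mul]

lemma pderiv_congr_ev {f g : (Fin n → ℝ) → ℝ} {y : Fin n → ℝ} (h : f =ᶠ[nhds y] g) (j : Fin n) :
    pderiv' f j y = pderiv' g j y := by
  unfold pderiv'
  rw [Filter.EventuallyEq.fderiv_eq h]

lemma pderiv_sum {κ : Type*} (s : Finset κ) (f : κ → (Fin n → ℝ) → ℝ) {y : Fin n → ℝ}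
    (h : ∀ k ∈ s, DifferentiableAt ℝ (f k) y) (j : Fin n) :
    pderiv' (fun z => ∑ k ∈ s, f k z) j y = ∑ k ∈ s, pderiv' (f k) j y := by
  unfold pderiv'
  rw [fderiv_fun_sum h]
  simp

lemma pderiv_mul {f g : (Fin n → ℝ) → ℝ} {y : Fin n → ℝ}
    (hf : DifferentiableAt ℝ f y) (hg : DifferentiableAt ℝ g y) (j : Fin n) :
    pderiv' (fun z => f z * g z) j y = pderiv' f j y * g y + f y * pderiv' g j y := by
  unfold pderiv'
  rw [fderiv_fun_mul hf hg]
  simp [smul_eq_mul]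
  ring

lemma pderiv_const_mul {f : (Fin n → ℝ) → ℝ} {y : Fin n → ℝ}
    (hf : DifferentiableAt ℝ f y) (c : ℝ) (j : Fin n) :
    pderiv' (fun z => c * f z) j y = c * pderiv' f j y := by
  unfold pderiv'
  rw [fderiv_const_mul hf c]
  simp

lemma pderiv_comp (f : (Fin n → ℝ) → ℝ) (ψ : (Fin n → ℝ) → (Fin n → ℝ)) (y : Fin n → ℝ)
    (j : Fin n) (hf : DifferentiableAt ℝ f (ψ y)) (hψ : DifferentiableAt ℝ ψ y) :
    pderiv' (fun z => f (ψ z)) j y = ∑ m, pderiv' f m (ψ y) * jac ψ y m j := by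
  unfold pderiv'
  rw [fderiv_comp' y hf hψ]
  simp only [ContinuousLinearMap.comp_apply]
  rw [clmr_apply_eq_sum (fderiv ℝ f (ψ y)) (fderiv ℝ ψ y (Pi.single j 1))]
  refine Finset.sum_congr rfl fun m _ => ?_
  simp [jac]
  ring

lemma jac_comp (f g : (Fin n → ℝ) → (Fin n → ℝ)) (y : Fin n → ℝ)
    (hf : DifferentiableAt ℝ f (g y)) (hg : DifferentiableAt ℝ g y) :
    jac (fun z => f (g z)) y = jac f (g y) * jac g y := by
  ext i k
  rw [Matrix.mul_apply]
  show fderiv ℝ (fun z => f (g z)) y (Pi.single k 1) i = _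
  rw [fderiv_comp' y hf hg]
  simp only [ContinuousLinearMap.comp_apply]
  rw [clm_apply_eq_sum (fderiv ℝ f (g y)) (fderiv ℝ g y (Pi.single k 1)) i]
  refine Finset.sum_congr rfl fun m _ => ?_
  simp [jac]
  ring

lemma jac_id (y : Fin n → ℝ) : jac (fun z : Fin n → ℝ => z) y = 1 := by
  ext i k
  show fderiv ℝ (fun z : Fin n → ℝ => z) y (Pi.single k 1) i = _
  rw [fderiv_id']
  simp [Matrix.one_apply, Pi.single_apply, eq_comm]

def detCM (n : ℕ) : ContinuousMultilinearMap ℝ (fun _ : Fin n => (Fin n → ℝ)) ℝ :=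
  MultilinearMap.mkContinuous
    (Matrix.detRowAlternating : (Fin n → ℝ) [⋀^Fin n]→ₗ[ℝ] ℝ).toMultilinearMap
    (n.factorial) (by
      intro m
      have hdet : (Matrix.detRowAlternating : (Fin n → ℝ) [⋀^Fin n]→ₗ[ℝ] ℝ).toMultilinearMap m
          = (Matrix.of m).det := rfl
      rw [hdet, Matrix.det_apply]
      calc ‖∑ σ : Equiv.Perm (Fin n), Equiv.Perm.sign σ • ∏ i, Matrix.of m (σ i) i‖
          ≤ ∑ σ : Equiv.Perm (Fin n), ‖Equiv.Perm.sign σ • ∏ i, Matrix.of m (σ i) i‖ :=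
            norm_sum_le _ _
        _ ≤ ∑ _σ : Equiv.Perm (Fin n), ∏ i, ‖m i‖ := by
            refine Finset.sum_le_sum fun σ _ => ?_
            have h1 : ‖Equiv.Perm.sign σ • ∏ i, Matrix.of m (σ i) i‖
                = ‖∏ i, Matrix.of m (σ i) i‖ := by
              rcases Int.units_eq_one_or (Equiv.Perm.sign σ) with h | h <;> simp [h]
            rw [h1]
            have h2 : ‖∏ i, Matrix.of m (σ i) i‖ = ∏ i, ‖m (σ i) i‖ := by
              simp [Real.norm_eq_abs, Finset.abs_prod, Matrix.of_apply]
            rw [h2]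
            calc ∏ i, ‖m (σ i) i‖ ≤ ∏ i, ‖m (σ i)‖ :=
                  Finset.prod_le_prod (fun i _ => norm_nonneg _)
                    (fun i _ => norm_le_pi_norm (m (σ i)) i)
              _ = ∏ i, ‖m i‖ := Equiv.prod_comp σ (fun i => ‖m i‖)
        _ = n.factorial * ∏ i, ‖m i‖ := by
            rw [Finset.sum_const, Finset.card_univ, Fintype.card_perm, Fintype.card_fin,
              nsmul_eq_mul])

lemma detCM_apply (R : Fin n → Fin n → ℝ) : detCM n R = (Matrix.of R).det := rfl

lemma det_updateRow_eq (A : Matrix (Fin n) (Fin n) ℝ) (r : Fin n) (v : Fin n → ℝ) :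
    (A.updateRow r v).det = ∑ c, v c * A.adjugate c r := by
  rw [← Matrix.cramer_transpose_apply]
  conv_lhs => rw [vec_eq_sum_single v]
  rw [map_sum, Finset.sum_apply]
  refine Finset.sum_congr rfl fun c _ => ?_
  simp only [_root_.map_smul, Pi.smul_apply, smul_eq_mul, Matrix.adjugate_apply,
    Matrix.cramer_transpose_apply, Matrix.det_updateRow_smul]

lemma adjugate_eq_det_smul (A B : Matrix (Fin n) (Fin n) ℝ)
    (h1 : A * B = 1) (_h2 : B * A = 1) : A.adjugate = A.det • B := by
  calc A.adjugate = A.adjugate * (A * B) := by rw [h1, mul_one]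
    _ = (A.adjugate * A) * B := by rw [mul_assoc]
    _ = (A.det • 1) * B := by rw [Matrix.adjugate_mul]
    _ = A.det • B := by rw [Matrix.smul_mul, one_mul]

lemma det_hasDeriv (M : (Fin n → ℝ) → Matrix (Fin n) (Fin n) ℝ) (y : Fin n → ℝ)
    (hM : ∀ r c, DifferentiableAt ℝ (fun z => M z r c) y) :
    DifferentiableAt ℝ (fun z => (M z).det) y ∧
    ∀ j, pderiv' (fun z => (M z).det) j y
      = ∑ r, ∑ c, pderiv' (fun z => M z r c) j y * (M y).adjugate c r := by
  have hrow : ∀ r, HasFDerivAt (fun z => M z r)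
      (ContinuousLinearMap.pi fun c => fderiv ℝ (fun z => M z r c) y) y :=
    fun r => hasFDerivAt_pi.2 fun c => (hM r c).hasFDerivAt
  have hdet := HasFDerivAt.multilinear_comp (detCM n) hrow
  have hfun : (fun z => detCM n fun r => M z r) = fun z => (M z).det := rfl
  rw [hfun] at hdet
  refine ⟨hdet.differentiableAt, fun j => ?_⟩
  have := hdet.fderiv
  unfold pderiv'
  rw [this]
  rw [ContinuousLinearMap.sum_apply]
  refine Finset.sum_congr rfl fun r _ => ?_
  simp only [ContinuousLinearMap.comp_apply]
  rw [ContinuousMultilinearMap.toContinuousLinearMap_apply]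
  have hupd : detCM n (Function.update (fun c => M y c) r
      ((ContinuousLinearMap.pi fun c => fderiv ℝ (fun z => M z r c) y) (Pi.single j 1)))
      = ((M y).updateRow r (fun c => pderiv' (fun z => M z r c) j y)).det := by
    rw [detCM_apply]
    congr 1
  rw [hupd, det_updateRow_eq]
  exact Finset.sum_congr rfl fun c _ => rfl

/-- entry-extraction CLM -/
def entryL (n : ℕ) (l m : Fin n) : ((Fin n → ℝ) →L[ℝ] (Fin n → ℝ)) →L[ℝ] ℝ :=
  (ContinuousLinearMap.proj l).comp
    (ContinuousLinearMap.apply ℝ (Fin n → ℝ) (Pi.single m 1))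

lemma jac_entry_contDiff {f : (Fin n → ℝ) → (Fin n → ℝ)} (hf : ContDiff ℝ 2 f) (l m : Fin n) :
    ContDiff ℝ 1 fun y => jac f y l m := by
  have h1 : ContDiff ℝ 1 (fun y => fderiv ℝ f y) :=
    hf.fderiv_right (le_refl _)
  exact (entryL n l m).contDiff.comp h1

lemma pd_jac_symm {f : (Fin n → ℝ) → (Fin n → ℝ)} (hf : ContDiff ℝ 2 f) (y : Fin n → ℝ)
    (l m j : Fin n) :
    pderiv' (fun z => jac f z l m) j y = pderiv' (fun z => jac f z l j) m y := by
  have hd : ∀ z, HasFDerivAt f (fderiv ℝ f z) z := fun z =>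
    (hf.differentiable (by norm_num) z).hasFDerivAt
  have h2 : DifferentiableAt ℝ (fun z => fderiv ℝ f z) y :=
    ((hf.fderiv_right (m := 1) (by norm_num)).differentiable one_ne_zero) y
  have hsymm := second_derivative_symmetric hd h2.hasFDerivAt
  have key : ∀ a b : Fin n, pderiv' (fun z => jac f z l a) b y
      = fderiv ℝ (fun z => fderiv ℝ f z) y (Pi.single b 1) (Pi.single a 1) l := by
    intro a b
    have hcomp : HasFDerivAt (fun z => entryL n l a (fderiv ℝ f z))
        ((entryL n l a).comp (fderiv ℝ (fun z => fderiv ℝ f z) y)) y :=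
      (entryL n l a).hasFDerivAt.comp y h2.hasFDerivAt
    have : pderiv' (fun z => jac f z l a) b y
        = ((entryL n l a).comp (fderiv ℝ (fun z => fderiv ℝ f z) y)) (Pi.single b 1) := by
      unfold pderiv'
      have hfun : (fun z => jac f z l a) = fun z => entryL n l a (fderiv ℝ f z) := rfl
      rw [hfun, hcomp.fderiv]
    rw [this]
    rfl
  rw [key m j, key j m, hsymm (Pi.single j 1) (Pi.single m 1)]

lemma swap3 (g : Fin n → Fin n → Fin n → ℝ) :
    ∑ j, ∑ m, ∑ l, g j m l = ∑ j, ∑ m, ∑ l, g l m j := by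
  rw [Finset.sum_comm]
  rw [Finset.sum_congr rfl (fun m _ => Finset.sum_comm)]
  rw [Finset.sum_comm]

lemma piola (A B : (Fin n → ℝ) → Matrix (Fin n) (Fin n) ℝ) (y : Fin n → ℝ)
    (hA : ∀ l m, DifferentiableAt ℝ (fun z => A z l m) y)
    (hB : ∀ l m, DifferentiableAt ℝ (fun z => B z l m) y)
    (hAB : ∀ z, A z * B z = 1) (hBA : ∀ z, B z * A z = 1)
    (hsym : ∀ l m j, pderiv' (fun z => A z l m) j y = pderiv' (fun z => A z l j) m y)
    (k : Fin n) :
    ∑ j, pderiv' (fun z => (A z).det * B z j k) j y = 0 := by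
  have hDd : DifferentiableAt ℝ (fun z => (A z).det) y := (det_hasDeriv A y hA).1
  set A' : Fin n → Fin n → Fin n → ℝ := fun j l m => pderiv' (fun z => A z l m) j y with hA'
  set B' : Fin n → Fin n → Fin n → ℝ := fun j l m => pderiv' (fun z => B z l m) j y with hB'
  have hadj : (A y).adjugate = (A y).det • B y := adjugate_eq_det_smul _ _ (hAB y) (hBA y)
  have hjac : ∀ j, pderiv' (fun z => (A z).det) j y
      = (A y).det * ∑ r, ∑ c, A' j r c * B y c r := by
    intro j
    rw [(det_hasDeriv A y hA).2 j, Finset.mul_sum]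
    refine Finset.sum_congr rfl fun r _ => ?_
    rw [Finset.mul_sum]
    refine Finset.sum_congr rfl fun c _ => ?_
    rw [hadj]
    simp only [Matrix.smul_apply, smul_eq_mul]
    ring
  have hBder : ∀ j, B' j j k = - ∑ m, ∑ l, B y j m * (A' j m l * B y l k) := by
    intro j
    have hconst : ∀ m, ∑ l, (A' j m l * B y l k + A y m l * B' j l k) = 0 := by
      intro m
      have h0 : (fun z => ∑ l, A z m l * B z l k)
          = fun _ => (1 : Matrix (Fin n) (Fin n) ℝ) m k := by
        funext z
        rw [← Matrix.mul_apply, hAB z]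
      have h1 : pderiv' (fun z => ∑ l, A z m l * B z l k) j y = 0 := by
        rw [h0]
        unfold pderiv'
        rw [fderiv_fun_const]
        simp
      rw [pderiv_sum _ _ (fun l _ => (show DifferentiableAt ℝ (fun z => A z m l * B z l k) y from (hA m l).mul (hB l k))) j] at h1
      rw [← h1]
      refine Finset.sum_congr rfl fun l _ => ?_
      rw [pderiv_mul (hA m l) (hB l k) j]
    have h2 : ∑ m, B y j m * (∑ l, (A' j m l * B y l k + A y m l * B' j l k)) = 0 := by
      simp only [hconst, mul_zero, Finset.sum_const_zero]
    have h3 : ∑ m, B y j m * (∑ l, (A' j m l * B y l k + A y m l * B' j l k))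
        = (∑ m, ∑ l, B y j m * (A' j m l * B y l k)) + B' j j k := by
      have e1 : ∀ m, B y j m * (∑ l, (A' j m l * B y l k + A y m l * B' j l k))
          = (∑ l, B y j m * (A' j m l * B y l k)) + ∑ l, B y j m * (A y m l * B' j l k) := by
        intro m
        rw [Finset.mul_sum, ← Finset.sum_add_distrib]
        exact Finset.sum_congr rfl fun l _ => by ring
      rw [Finset.sum_congr rfl (fun m _ => e1 m), Finset.sum_add_distrib]
      congr 1
      rw [Finset.sum_comm]
      have e2 : ∀ l, ∑ m, B y j m * (A y m l * B' j l k) = (B y * A y) j l * B' j l k := by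
        intro l
        rw [Matrix.mul_apply, Finset.sum_mul]
        exact Finset.sum_congr rfl fun m _ => by ring
      rw [Finset.sum_congr rfl (fun l _ => e2 l), hBA y]
      simp [Matrix.one_apply]
    rw [h3] at h2
    linarith
  have hterm : ∀ j, pderiv' (fun z => (A z).det * B z j k) j y
      = (A y).det * ((∑ r, ∑ c, A' j r c * B y c r) * B y j k
          - ∑ m, ∑ l, B y j m * (A' j m l * B y l k)) := by
    intro j
    rw [pderiv_mul hDd (hB j k) j, hjac j]
    have : B' j j k = pderiv' (fun z => B z j k) j y := rfl
    rw [← this, hBder j]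
    ring
  rw [Finset.sum_congr rfl (fun j _ => hterm j), ← Finset.mul_sum]
  have hcancel : ∑ j, ((∑ r, ∑ c, A' j r c * B y c r) * B y j k
      - ∑ m, ∑ l, B y j m * (A' j m l * B y l k)) = 0 := by
    rw [Finset.sum_sub_distrib, sub_eq_zero]
    calc ∑ j, (∑ r, ∑ c, A' j r c * B y c r) * B y j k
        = ∑ j, ∑ r, ∑ c, A' j r c * B y c r * B y j k := by
          refine Finset.sum_congr rfl fun j _ => ?_
          rw [Finset.sum_mul]
          exact Finset.sum_congr rfl fun r _ => by rw [Finset.sum_mul]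
      _ = ∑ j, ∑ m, ∑ l, B y l m * A' j m l * B y j k := by
          refine Finset.sum_congr rfl fun j _ => ?_
          refine Finset.sum_congr rfl fun m _ => ?_
          refine Finset.sum_congr rfl fun l _ => ?_
          ring
      _ = ∑ j, ∑ m, ∑ l, B y j m * A' l m j * B y l k := (swap3 _).symm
      _ = ∑ j, ∑ m, ∑ l, B y j m * (A' j m l * B y l k) := by
          refine Finset.sum_congr rfl fun j _ => ?_
          refine Finset.sum_congr rfl fun m _ => ?_
          refine Finset.sum_congr rfl fun l _ => ?_
          rw [show A' l m j = A' j m l from hsym m j l]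
          ring
  rw [hcancel, mul_zero]

end RWI

/-- **Invariance of the reverse-time Wiener correction term.**
For a C² diffeomorphism `φ` (inverse `ψ`), a C¹ matrix map `G`, a positive C¹ density `p`,
transformed density `q y = p (ψ y) |det J_ψ(y)|` and `G̃(y) = J_φ(ψ y) G(ψ y)`, for every
`y`, with `x = ψ y`:  `q(y)⁻¹ ∇_y·[q(y) G̃(y)ᵀ] = p(x)⁻¹ ∇_x·[p(x) G(x)ᵀ]`
(matrix divergences taken row-wise). -/
theorem reverse_wiener_invariance {n : ℕ}
    (φ ψ : (Fin n → ℝ) → (Fin n → ℝ))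
    (hbij : Function.Bijective φ)
    (hφ : ContDiff ℝ 2 φ) (hψ : ContDiff ℝ 2 ψ)
    (hleft : Function.LeftInverse ψ φ) (hright : Function.RightInverse ψ φ)
    (G : (Fin n → ℝ) → Fin n → Fin n → ℝ)
    (hG : ∀ i j, ContDiff ℝ 1 fun x => G x i j)
    (p : (Fin n → ℝ) → ℝ) (hp : ∀ x, 0 < p x) (hpC : ContDiff ℝ 1 p)
    (hp1 : ∫ x, p x = 1)
    (q : (Fin n → ℝ) → ℝ)
    (hq : ∀ y, q y = p (ψ y) * |(jac ψ y).det|)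
    (Gtil : (Fin n → ℝ) → Fin n → Fin n → ℝ)
    (hGtil : ∀ y i j, Gtil y i j = ∑ k, jac φ (ψ y) i k * G (ψ y) k j) :
    ∀ y i,
      (q y)⁻¹ * (∑ j, pderiv' (fun z => q z * Gtil z j i) j y)
        = (p (ψ y))⁻¹ * ∑ j, pderiv' (fun z => p z * G z j i) j (ψ y) := by
  intro y i
  classical
  have hψd : Differentiable ℝ ψ := hψ.differentiable (by norm_num)
  have hφd : Differentiable ℝ φ := hφ.differentiable (by norm_num)
  -- the two Jacobians are mutually inverse everywhere
  have hAB : ∀ z, jac ψ z * jac φ (ψ z) = 1 := by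
    intro z
    have h1 : (fun w => ψ (φ w)) = fun w => w := funext hleft
    have h2 := RWI.jac_comp ψ φ (ψ z) (by rw [hright z]; exact hψd z) (hφd (ψ z))
    rw [h1, RWI.jac_id, hright z] at h2
    exact h2.symm
  have hBA : ∀ z, jac φ (ψ z) * jac ψ z = 1 := by
    intro z
    have h1 : (fun w => φ (ψ w)) = fun w => w := funext hright
    have h2 := RWI.jac_comp φ ψ z (hφd (ψ z)) (hψd z)
    rw [h1, RWI.jac_id] at h2
    exact h2.symm
  -- entrywise smoothness / differentiability
  have hAd : ∀ z l m, DifferentiableAt ℝ (fun w => jac ψ w l m) z := fun z l m =>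
    ((RWI.jac_entry_contDiff hψ l m).differentiable one_ne_zero) z
  have hBd : ∀ z l m, DifferentiableAt ℝ (fun w => jac φ (ψ w) l m) z := by
    intro z l m
    have : ContDiff ℝ 1 fun w => jac φ (ψ w) l m :=
      (RWI.jac_entry_contDiff hφ l m).comp (hψ.of_le (by norm_num))
    exact (this.differentiable one_ne_zero) z
  -- the determinant of jac ψ
  have hDd : ∀ z, DifferentiableAt ℝ (fun w => (jac ψ w).det) z := fun z =>
    (RWI.det_hasDeriv (fun w => jac ψ w) z (hAd z)).1
  have hDne : ∀ z, (jac ψ z).det ≠ 0 := by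
    intro z h
    have h2 := congrArg Matrix.det (hAB z)
    rw [Matrix.det_mul, Matrix.det_one, h, zero_mul] at h2
    exact zero_ne_one h2
  -- constant sign of the determinant near y
  obtain ⟨s, hs2, hev⟩ : ∃ s : ℝ, s * s = 1 ∧
      (fun z => |(jac ψ z).det|) =ᶠ[nhds y] fun z => s * (jac ψ z).det := by
    rcases lt_or_gt_of_ne (hDne y) with hneg | hpos
    · refine ⟨-1, by norm_num, ?_⟩
      have hmem : (fun w => (jac ψ w).det) ⁻¹' Set.Iio 0 ∈ nhds y :=
        (hDd y).continuousAt.preimage_mem_nhds (Iio_mem_nhds hneg)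
      filter_upwards [hmem] with z hz
      rw [abs_of_neg hz]
      ring
    · refine ⟨1, by norm_num, ?_⟩
      have hmem : (fun w => (jac ψ w).det) ⁻¹' Set.Ioi 0 ∈ nhds y :=
        (hDd y).continuousAt.preimage_mem_nhds (Ioi_mem_nhds hpos)
      filter_upwards [hmem] with z hz
      rw [abs_of_pos hz]
      ring
  -- the composed scalar functions
  have hfd : ∀ (k : Fin n) w, DifferentiableAt ℝ (fun v => p v * G v k i) w := fun k w =>
    ((hpC.differentiable one_ne_zero) w).mul (((hG k i).differentiable one_ne_zero) w)
  have hFd : ∀ (k : Fin n) z, DifferentiableAt ℝ (fun z => p (ψ z) * G (ψ z) k i) z :=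
    fun k z => (hfd k (ψ z)).comp z (hψd z)
  -- eventual rewriting of the integrand
  have hqev : ∀ j : Fin n, (fun z => q z * Gtil z j i) =ᶠ[nhds y]
      (fun z => s * ∑ k, (p (ψ z) * G (ψ z) k i) * ((jac ψ z).det * jac φ (ψ z) j k)) := by
    intro j
    filter_upwards [hev] with z hz
    rw [hq z, hGtil z j i, hz, Finset.mul_sum, Finset.mul_sum]
    refine Finset.sum_congr rfl fun k _ => ?_
    ring
  -- expand the divergence
  have hstep1 : ∑ j, pderiv' (fun z => q z * Gtil z j i) j y
      = s * ∑ j, ∑ k, (pderiv' (fun z => p (ψ z) * G (ψ z) k i) j y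
            * ((jac ψ y).det * jac φ (ψ y) j k)
          + (p (ψ y) * G (ψ y) k i)
            * pderiv' (fun z => (jac ψ z).det * jac φ (ψ z) j k) j y) := by
    rw [Finset.mul_sum]
    refine Finset.sum_congr rfl fun j _ => ?_
    rw [RWI.pderiv_congr_ev (hqev j) j]
    have hsummand : ∀ k ∈ Finset.univ, DifferentiableAt ℝ
        (fun z => (p (ψ z) * G (ψ z) k i) * ((jac ψ z).det * jac φ (ψ z) j k)) y :=
      fun k _ => (hFd k y).mul ((hDd y).mul (hBd y j k))
    rw [RWI.pderiv_const_mul (DifferentiableAt.fun_sum hsummand) s j,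
      RWI.pderiv_sum _ _ hsummand j]
    congr 1
    refine Finset.sum_congr rfl fun k _ => ?_
    rw [RWI.pderiv_mul (hFd k y) (show DifferentiableAt ℝ (fun z => (jac ψ z).det * jac φ (ψ z) j k) y from (hDd y).mul (hBd y j k)) j]
  -- Piola identity kills the second summand
  have hsymA : ∀ l m j, pderiv' (fun z => jac ψ z l m) j y = pderiv' (fun z => jac ψ z l j) m y :=
    fun l m j => RWI.pd_jac_symm hψ y l m j
  have hpiola : ∀ k, ∑ j, pderiv' (fun z => (jac ψ z).det * jac φ (ψ z) j k) j y = 0 :=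
    fun k => RWI.piola (fun z => jac ψ z) (fun z => jac φ (ψ z)) y (hAd y) (hBd y)
      hAB hBA hsymA k
  -- chain rule on the first summand
  have hchain : ∀ (k : Fin n) j, pderiv' (fun z => p (ψ z) * G (ψ z) k i) j y
      = ∑ m, pderiv' (fun v => p v * G v k i) m (ψ y) * jac ψ y m j :=
    fun k j => RWI.pderiv_comp (fun v => p v * G v k i) ψ y j (hfd k (ψ y)) (hψd y)
  -- assemble
  have hsplit : ∑ j, ∑ k, (pderiv' (fun z => p (ψ z) * G (ψ z) k i) j y
            * ((jac ψ y).det * jac φ (ψ y) j k)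
          + (p (ψ y) * G (ψ y) k i)
            * pderiv' (fun z => (jac ψ z).det * jac φ (ψ z) j k) j y)
      = (jac ψ y).det * ∑ k, pderiv' (fun v => p v * G v k i) k (ψ y) := by
    rw [Finset.sum_congr rfl fun j _ => Finset.sum_add_distrib, Finset.sum_add_distrib]
    have hz2 : ∑ j, ∑ k, (p (ψ y) * G (ψ y) k i)
        * pderiv' (fun z => (jac ψ z).det * jac φ (ψ z) j k) j y = 0 := by
      rw [Finset.sum_comm]
      refine Finset.sum_eq_zero fun k _ => ?_
      rw [← Finset.mul_sum, hpiola k, mul_zero]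
    rw [hz2, add_zero, Finset.sum_comm, Finset.mul_sum]
    refine Finset.sum_congr rfl fun k _ => ?_
    have e1 : ∀ j, pderiv' (fun z => p (ψ z) * G (ψ z) k i) j y
        * ((jac ψ y).det * jac φ (ψ y) j k)
        = ∑ m, pderiv' (fun v => p v * G v k i) m (ψ y) * (jac ψ y).det
            * (jac ψ y m j * jac φ (ψ y) j k) := by
      intro j
      rw [hchain k j, Finset.sum_mul]
      exact Finset.sum_congr rfl fun m _ => by ring
    rw [Finset.sum_congr rfl fun j _ => e1 j, Finset.sum_comm]
    have e2 : ∀ m, ∑ j, pderiv' (fun v => p v * G v k i) m (ψ y) * (jac ψ y).det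
        * (jac ψ y m j * jac φ (ψ y) j k)
        = pderiv' (fun v => p v * G v k i) m (ψ y) * (jac ψ y).det
            * (1 : Matrix (Fin n) (Fin n) ℝ) m k := by
      intro m
      rw [← Finset.mul_sum, ← Matrix.mul_apply, hAB y]
    rw [Finset.sum_congr rfl fun m _ => e2 m]
    simp only [Matrix.one_apply, mul_ite, mul_one, mul_zero]
    rw [Finset.sum_ite_eq' Finset.univ k
      (fun m => pderiv' (fun v => p v * G v k i) m (ψ y) * (jac ψ y).det)]
    simp [mul_comm]
  -- final arithmetic
  have habs : |(jac ψ y).det| = s * (jac ψ y).det := hev.eq_of_nhds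
  have hc : s * (jac ψ y).det ≠ 0 := by
    rw [← habs]
    exact abs_ne_zero.2 (hDne y)
  rw [hstep1, hsplit, hq y, habs]
  have hpne : p (ψ y) ≠ 0 := (hp (ψ y)).ne'
  rw [mul_inv]
  calc (p (ψ y))⁻¹ * (s * (jac ψ y).det)⁻¹
        * (s * ((jac ψ y).det * ∑ k, pderiv' (fun v => p v * G v k i) k (ψ y)))
      = (p (ψ y))⁻¹ * ((s * (jac ψ y).det)⁻¹
        * ((s * (jac ψ y).det) * ∑ k, pderiv' (fun v => p v * G v k i) k (ψ y))) := by ring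
    _ = (p (ψ y))⁻¹ * ∑ k, pderiv' (fun v => p v * G v k i) k (ψ y) := by
        rw [inv_mul_cancel_left₀ hc]
end
end

section
/- Let p : ℝⁿ → ℝ be a positive continuously differentiable probability density, v : ℝⁿ → ℝ twice continuously differentiable, and s : ℝⁿ → ℝⁿ continuously differentiable, such that the vector field x ↦ p(x) · (∇v(x)ᵀ s(x)) · ∇v(x) has compact support. Then ∫_{ℝⁿ} (∇v(x)ᵀ s(x)) · (∇v(x)ᵀ ∇_x log p(x)) · p(x) dx = − ∫_{ℝⁿ} p(x) · [ (∇v(x)ᵀ s(x)) Δv(x) + s(x)ᵀ H_v(x) ∇v(x) + ∇v(x)ᵀ (∇_x s(x)) ∇v(x) ] dx, provided both integrands are integrable. -/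
open MeasureTheory

noncomputable section

/-- The integral of a coordinate partial derivative of a `C¹` compactly supported
function vanishes. -/
lemma integral_fderiv_apply_eq_zero' {n : ℕ} {g : (Fin n → ℝ) → ℝ}
    (hg : ContDiff ℝ 1 g) (h : HasCompactSupport g) (w : Fin n → ℝ) :
    ∫ x, fderiv ℝ g x w = 0 := by
  have hc : Continuous fun x => fderiv ℝ g x w :=
    (ContinuousLinearMap.apply ℝ ℝ w).continuous.comp
      ((hg.fderiv_right (m := 0) (by norm_num)).continuous)
  have hcs : HasCompactSupport fun x => fderiv ℝ g x w := h.fderiv_apply ℝ w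
  have hint : Integrable (fun x => fderiv ℝ g x w) := hc.integrable_of_hasCompactSupport hcs
  have hgi : Integrable g := hg.continuous.integrable_of_hasCompactSupport h
  have H := integral_mul_fderiv_eq_neg_fderiv_mul_of_integrable
    (μ := volume) (f := fun _ : Fin n → ℝ => (1:ℝ)) (g := g) (v := w)
    (by simpa [fderiv_const_apply] using
      (integrable_zero _ _ (volume : Measure (Fin n → ℝ)) : Integrable (fun _ : Fin n → ℝ => (0:ℝ))))
    (by simpa using hint) (by simpa using hgi)
    (fun x _ => differentiableAt_const _) (fun x _ => hg.differentiable one_ne_zero x)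
  simpa [fderiv_const_apply] using H

/-- **Integration by parts for generalized sliced score matching.**
For a positive C¹ probability density `p`, a C² function `v` and a C¹ vector field `s` such
that `x ↦ p(x) (∇v(x)ᵀ s(x)) ∇v(x)` has compact support and both integrands are integrable:
`∫ (∇vᵀ s)(∇vᵀ ∇log p) p dx
  = − ∫ p [(∇vᵀ s) Δv + sᵀ H_v ∇v + ∇vᵀ (∇s) ∇v] dx`. -/
theorem gssm_integration_by_parts {n : ℕ}
    (p : (Fin n → ℝ) → ℝ) (hp : ∀ x, 0 < p x) (hpC : ContDiff ℝ 1 p)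
    (hp1 : ∫ x, p x = 1)
    (v : (Fin n → ℝ) → ℝ) (hv : ContDiff ℝ 2 v)
    (s : (Fin n → ℝ) → (Fin n → ℝ)) (hs : ContDiff ℝ 1 s)
    (hsupp : HasCompactSupport fun x =>
      fun i => p x * (∑ j, pderiv' v j x * s x j) * pderiv' v i x)
    (hint1 : Integrable fun x =>
      (∑ j, pderiv' v j x * s x j) *
        (∑ j, pderiv' v j x * pderiv' (fun z => Real.log (p z)) j x) * p x)
    (hint2 : Integrable fun x =>
      p x * ((∑ j, pderiv' v j x * s x j) * (∑ i, pderiv' (pderiv' v i) i x)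
        + (∑ j, ∑ k, s x j * pderiv' (pderiv' v k) j x * pderiv' v k x)
        + ∑ j, ∑ k, pderiv' v j x * pderiv' (fun z => s z j) k x * pderiv' v k x)) :
    (∫ x, (∑ j, pderiv' v j x * s x j) *
        (∑ j, pderiv' v j x * pderiv' (fun z => Real.log (p z)) j x) * p x)
      = -∫ x,
          p x * ((∑ j, pderiv' v j x * s x j) * (∑ i, pderiv' (pderiv' v i) i x)
            + (∑ j, ∑ k, s x j * pderiv' (pderiv' v k) j x * pderiv' v k x)
            + ∑ j, ∑ k, pderiv' v j x * pderiv' (fun z => s z j) k x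
                * pderiv' v k x) := by
  classical
  -- abbreviations
  set L : (Fin n → ℝ) → ℝ := fun x =>
      (∑ j, pderiv' v j x * s x j) *
        (∑ j, pderiv' v j x * pderiv' (fun z => Real.log (p z)) j x) * p x with hLdef
  set R : (Fin n → ℝ) → ℝ := fun x =>
      p x * ((∑ j, pderiv' v j x * s x j) * (∑ i, pderiv' (pderiv' v i) i x)
        + (∑ j, ∑ k, s x j * pderiv' (pderiv' v k) j x * pderiv' v k x)
        + ∑ j, ∑ k, pderiv' v j x * pderiv' (fun z => s z j) k x * pderiv' v k x) with hRdef
  -- basic smoothness facts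
  have hv1 : ∀ j : Fin n, ContDiff ℝ 1 fun x => pderiv' v j x := by
    intro j
    exact (ContinuousLinearMap.apply ℝ ℝ (Pi.single j 1)).contDiff.comp
      (hv.fderiv_right (m := 1) (by norm_num))
  have hsj : ∀ j : Fin n, ContDiff ℝ 1 fun x => s x j := fun j => contDiff_pi.mp hs j
  have hA : ContDiff ℝ 1 fun x => ∑ j, pderiv' v j x * s x j :=
    ContDiff.sum fun j _ => (hv1 j).mul (hsj j)
  -- log derivative
  have hlog : ∀ (x : Fin n → ℝ) (j : Fin n),
      pderiv' (fun z => Real.log (p z)) j x * p x = fderiv ℝ p x (Pi.single j 1) := by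
    intro x j
    have hpx : HasFDerivAt p (fderiv ℝ p x) x := (hpC.differentiable one_ne_zero x).hasFDerivAt
    have h0 := (hpx.log (hp x).ne').fderiv
    have h1 : pderiv' (fun z => Real.log (p z)) j x
        = (p x)⁻¹ * fderiv ℝ p x (Pi.single j 1) := by simp [pderiv', h0]
    rw [h1, mul_comm ((p x)⁻¹) _, mul_assoc, inv_mul_cancel₀ (hp x).ne', mul_one]
  -- symmetry of second derivatives
  have hsymm : ∀ (x : Fin n → ℝ) (j k : Fin n),
      pderiv' (pderiv' v j) k x = pderiv' (pderiv' v k) j x := by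
    intro x j k
    have hdd : DifferentiableAt ℝ (fderiv ℝ v) x :=
      (hv.fderiv_right (m := 1) (by norm_num)).differentiable one_ne_zero x
    have hD2 : ∀ a b : Fin n, pderiv' (pderiv' v a) b x
        = fderiv ℝ (fderiv ℝ v) x (Pi.single b 1) (Pi.single a 1) := by
      intro a b
      have h1 : fderiv ℝ (fun y => fderiv ℝ v y (Pi.single a 1)) x
          = (fderiv ℝ v x).comp (fderiv ℝ (fun _ => Pi.single a 1) x)
            + (fderiv ℝ (fderiv ℝ v) x).flip (Pi.single a 1) :=
        fderiv_clm_apply hdd (differentiableAt_const _)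
      have h2 : pderiv' (pderiv' v a) b x
          = fderiv ℝ (fun y => fderiv ℝ v y (Pi.single a 1)) x (Pi.single b 1) := rfl
      rw [h2, h1]
      simp
    rw [hD2, hD2]
    have hsym : IsSymmSndFDerivAt ℝ v x := hv.contDiffAt.isSymmSndFDerivAt (by norm_num)
    exact hsym _ _
  -- the divergence of each component
  have hder : ∀ (i : Fin n) (x : Fin n → ℝ),
      fderiv ℝ (fun y => p y * (∑ j, pderiv' v j y * s y j) * pderiv' v i y) x (Pi.single i 1)
      = fderiv ℝ p x (Pi.single i 1) * (∑ j, pderiv' v j x * s x j) * pderiv' v i x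
        + p x * (∑ j, (pderiv' v j x * pderiv' (fun z => s z j) i x
            + s x j * pderiv' (pderiv' v j) i x)) * pderiv' v i x
        + p x * (∑ j, pderiv' v j x * s x j) * pderiv' (pderiv' v i) i x := by
    intro i x
    have hpx : DifferentiableAt ℝ p x := hpC.differentiable one_ne_zero x
    have hvix : ∀ j : Fin n, DifferentiableAt ℝ (fun y => pderiv' v j y) x :=
      fun j => (hv1 j).differentiable one_ne_zero x
    have hsx : ∀ j : Fin n, DifferentiableAt ℝ (fun y => s y j) x :=
      fun j => (hsj j).differentiable one_ne_zero x
    have hAx : DifferentiableAt ℝ (fun y => ∑ j, pderiv' v j y * s y j) x :=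
      hA.differentiable one_ne_zero x
    have EA : fderiv ℝ (fun y => ∑ j, pderiv' v j y * s y j) x
        = ∑ j, (pderiv' v j x • fderiv ℝ (fun y => s y j) x
            + s x j • fderiv ℝ (fun y => pderiv' v j y) x) := by
      rw [fderiv_fun_sum (A := fun j y => pderiv' v j y * s y j) (fun j _ => ((hvix j).mul (hsx j)))]
      exact Finset.sum_congr rfl fun j _ => fderiv_fun_mul (hvix j) (hsx j)
    have EPA : fderiv ℝ (fun y => p y * ∑ j, pderiv' v j y * s y j) x
        = p x • fderiv ℝ (fun y => ∑ j, pderiv' v j y * s y j) x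
          + (∑ j, pderiv' v j x * s x j) • fderiv ℝ p x := fderiv_fun_mul hpx hAx
    have EG : fderiv ℝ (fun y => p y * (∑ j, pderiv' v j y * s y j) * pderiv' v i y) x
        = (p x * ∑ j, pderiv' v j x * s x j) • fderiv ℝ (fun y => pderiv' v i y) x
          + pderiv' v i x • fderiv ℝ (fun y => p y * ∑ j, pderiv' v j y * s y j) x :=
      fderiv_fun_mul (hpx.mul hAx) (hvix i)
    rw [EG, EPA, EA]
    simp only [ContinuousLinearMap.add_apply, ContinuousLinearMap.smul_apply,
      ContinuousLinearMap.coe_sum', Finset.sum_apply, smul_eq_mul]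
    have h1 : ∀ j : Fin n, (fderiv ℝ (fun y => s y j) x) (Pi.single i 1)
        = pderiv' (fun z => s z j) i x := fun j => rfl
    have h2 : ∀ j : Fin n, (fderiv ℝ (fun y => pderiv' v j y) x) (Pi.single i 1)
        = pderiv' (pderiv' v j) i x := fun j => rfl
    simp only [h1, h2]
    ring
  -- the components have compact support and are C¹
  have hgC : ∀ i : Fin n,
      ContDiff ℝ 1 fun x => p x * (∑ j, pderiv' v j x * s x j) * pderiv' v i x :=
    fun i => (hpC.mul hA).mul (hv1 i)
  have hgS : ∀ i : Fin n,
      HasCompactSupport fun x => p x * (∑ j, pderiv' v j x * s x j) * pderiv' v i x :=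
    fun i => hsupp.comp_left (g := fun f : Fin n → ℝ => f i) rfl
  -- each divergence piece integrates to zero
  have hzero : ∀ i : Fin n,
      (∫ x, fderiv ℝ (fun y => p y * (∑ j, pderiv' v j y * s y j) * pderiv' v i y) x
        (Pi.single i 1)) = 0 :=
    fun i => integral_fderiv_apply_eq_zero' (hgC i) (hgS i) _
  have hdiv_int : ∀ i : Fin n,
      Integrable (fun x =>
        fderiv ℝ (fun y => p y * (∑ j, pderiv' v j y * s y j) * pderiv' v i y) x
          (Pi.single i 1)) := by
    intro i
    have hc : Continuous fun x =>
        fderiv ℝ (fun y => p y * (∑ j, pderiv' v j y * s y j) * pderiv' v i y) x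
          (Pi.single i 1) :=
      (ContinuousLinearMap.apply ℝ ℝ (Pi.single i 1)).continuous.comp
        (((hgC i).fderiv_right (m := 0) (by norm_num)).continuous)
    exact hc.integrable_of_hasCompactSupport ((hgS i).fderiv_apply ℝ _)
  -- key pointwise identity : divergence = L + R
  have key : ∀ x : Fin n → ℝ,
      (∑ i, fderiv ℝ (fun y => p y * (∑ j, pderiv' v j y * s y j) * pderiv' v i y) x
        (Pi.single i 1)) = L x + R x := by
    intro x
    rw [Finset.sum_congr rfl fun i _ => hder i x, Finset.sum_add_distrib,
      Finset.sum_add_distrib]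
    have hLsum : (∑ i, fderiv ℝ p x (Pi.single i 1) *
        (∑ j, pderiv' v j x * s x j) * pderiv' v i x) = L x := by
      rw [hLdef]
      have step : ∀ i : Fin n, fderiv ℝ p x (Pi.single i 1) *
          (∑ j, pderiv' v j x * s x j) * pderiv' v i x
          = (∑ j, pderiv' v j x * s x j) *
              (pderiv' v i x * pderiv' (fun z => Real.log (p z)) i x) * p x := by
        intro i; rw [← hlog x i]; ring
      rw [Finset.sum_congr rfl fun i _ => step i, ← Finset.sum_mul, ← Finset.mul_sum]
    have hRsum : ((∑ i, p x * (∑ j, (pderiv' v j x * pderiv' (fun z => s z j) i x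
          + s x j * pderiv' (pderiv' v j) i x)) * pderiv' v i x)
        + ∑ i, p x * (∑ j, pderiv' v j x * s x j) * pderiv' (pderiv' v i) i x) = R x := by
      rw [hRdef]
      have expand : ∀ i : Fin n,
          p x * (∑ j, (pderiv' v j x * pderiv' (fun z => s z j) i x
            + s x j * pderiv' (pderiv' v j) i x)) * pderiv' v i x
          = (∑ j, p x * (s x j * pderiv' (pderiv' v i) j x * pderiv' v i x))
            + ∑ j, p x * (pderiv' v j x * pderiv' (fun z => s z j) i x * pderiv' v i x) := by
        intro i
        rw [← Finset.sum_add_distrib, Finset.mul_sum, Finset.sum_mul]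
        exact Finset.sum_congr rfl fun j _ => by rw [hsymm x j i]; ring
      rw [Finset.sum_congr rfl fun i _ => expand i, Finset.sum_add_distrib]
      have hB : (∑ i, ∑ j, p x * (s x j * pderiv' (pderiv' v i) j x * pderiv' v i x))
          = p x * ∑ j, ∑ k, s x j * pderiv' (pderiv' v k) j x * pderiv' v k x := by
        rw [Finset.mul_sum, Finset.sum_comm]
        exact Finset.sum_congr rfl fun j _ => by rw [Finset.mul_sum]
      have hC : (∑ i, ∑ j, p x * (pderiv' v j x * pderiv' (fun z => s z j) i x * pderiv' v i x))
          = p x * ∑ j, ∑ k, pderiv' v j x * pderiv' (fun z => s z j) k x * pderiv' v k x := by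
        rw [Finset.mul_sum, Finset.sum_comm]
        exact Finset.sum_congr rfl fun j _ => by rw [Finset.mul_sum]
      have hD : (∑ i, p x * (∑ j, pderiv' v j x * s x j) * pderiv' (pderiv' v i) i x)
          = p x * ((∑ j, pderiv' v j x * s x j) * ∑ i, pderiv' (pderiv' v i) i x) := by
        rw [← Finset.mul_sum, mul_assoc]
      rw [hB, hC, hD]
      ring
    rw [add_assoc, hLsum, hRsum]
  -- put everything together
  have hsum0 : (∫ x, ∑ i, fderiv ℝ
      (fun y => p y * (∑ j, pderiv' v j y * s y j) * pderiv' v i y) x (Pi.single i 1)) = 0 := by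
    rw [integral_finset_sum _ fun i _ => hdiv_int i]
    exact Finset.sum_eq_zero fun i _ => hzero i
  have heq : (fun x => ∑ i, fderiv ℝ
      (fun y => p y * (∑ j, pderiv' v j y * s y j) * pderiv' v i y) x (Pi.single i 1))
      = fun x => L x + R x := funext key
  rw [heq] at hsum0
  rw [integral_add hint1 hint2] at hsum0
  linarith
end
end

section
/- Let p : ℝⁿ → ℝ be a positive continuously differentiable probability density, v : ℝⁿ → ℝ twice continuously differentiable, and s : ℝⁿ → ℝⁿ continuously differentiable, such that x ↦ p(x)(∇v(x)ᵀ s(x))∇v(x) has compact support and all integrands below are integrable. Define the un-normalized projected score-matching loss L_SM = ½ ∫ p(x) ( ∇v(x)ᵀ s(x) − ∇v(x)ᵀ ∇_x log p(x) )² dx and the generalized sliced score matching loss L_GSSM = ½ ∫ p(x) (∇v(x)ᵀ s(x))² dx + ∫ p(x) ∇v(x)ᵀ (∇_x s(x)) ∇v(x) dx + ∫ p(x) s(x)ᵀ H_v(x) ∇v(x) dx + ∫ p(x) (∇v(x)ᵀ s(x)) Δv(x) dx. Then L_SM = L_GSSM + C, where C = ½ ∫ p(x) (∇v(x)ᵀ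 ∇_x log p(x))² dx does not depend on s. -/
open MeasureTheory

noncomputable section

-- product rule
lemma pderiv'_mul {n : ℕ} {f g : (Fin n → ℝ) → ℝ} {x : Fin n → ℝ} (j : Fin n)
    (hf : DifferentiableAt ℝ f x) (hg : DifferentiableAt ℝ g x) :
    pderiv' (fun y => f y * g y) j x = pderiv' f j x * g x + f x * pderiv' g j x := by
  unfold pderiv'
  rw [fderiv_fun_mul hf hg]
  simp [mul_comm]; ring

lemma pderiv'_sum {n : ℕ} {ι : Type*} (u : Finset ι) {F : ι → (Fin n → ℝ) → ℝ}
    {x : Fin n → ℝ} (j : Fin n) (hF : ∀ i ∈ u, DifferentiableAt ℝ (F i) x) :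
    pderiv' (fun y => ∑ i ∈ u, F i y) j x = ∑ i ∈ u, pderiv' (F i) j x := by
  unfold pderiv'
  rw [fderiv_fun_sum hF]
  simp

lemma pderiv'_log {n : ℕ} {p : (Fin n → ℝ) → ℝ} {x : Fin n → ℝ} (j : Fin n)
    (hp : DifferentiableAt ℝ p x) (hpx : p x ≠ 0) :
    pderiv' (fun y => Real.log (p y)) j x = (p x)⁻¹ * pderiv' p j x := by
  unfold pderiv'
  rw [(hp.hasFDerivAt.log hpx).fderiv]
  simp

-- symmetry of second derivatives
lemma pderiv'_symm {n : ℕ} {v : (Fin n → ℝ) → ℝ} (hv : ContDiff ℝ 2 v)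
    (j k : Fin n) (x : Fin n → ℝ) :
    pderiv' (pderiv' v j) k x = pderiv' (pderiv' v k) j x := by
  have hsymm : IsSymmSndFDerivAt ℝ v x := (hv.contDiffAt).isSymmSndFDerivAt (by norm_num)
  have hd : DifferentiableAt ℝ (fderiv ℝ v) x :=
    ((hv.fderiv_right (m := 1) (by norm_num)).differentiable one_ne_zero).differentiableAt
  have h1 : ∀ a b : Fin n, pderiv' (pderiv' v a) b x
      = fderiv ℝ (fderiv ℝ v) x (Pi.single b 1) (Pi.single a 1) := by
    intro a b
    unfold pderiv'
    rw [fderiv_clm_apply hd (differentiableAt_const _)]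
    simp
  rw [h1, h1, hsymm.eq]


/-- Divergence of a C¹ compactly supported vector field integrates to zero. -/
lemma integral_div_eq_zero {n : ℕ} (G : (Fin n → ℝ) → (Fin n → ℝ))
    (hG : ContDiff ℝ 1 G) (hGs : HasCompactSupport G) :
    ∫ x, ∑ i, fderiv ℝ G x (Pi.single i 1) i = 0 := by
  cases n with
  | zero => simp
  | succ m =>
    obtain ⟨R₀, hR₀⟩ := hGs.isBounded.subset_closedBall 0
    set R : ℝ := max R₀ 0 with hRdef
    have hR : tsupport G ⊆ Metric.closedBall 0 R :=
      hR₀.trans (Metric.closedBall_subset_closedBall (le_max_left _ _))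
    have hR0 : (0:ℝ) ≤ R := le_max_right _ _
    set a : Fin (m+1) → ℝ := fun _ => -(R+1) with ha
    set b : Fin (m+1) → ℝ := fun _ => R+1 with hb
    have hle : a ≤ b := fun i => by simp only [ha, hb]; linarith
    have hcoord : ∀ x : Fin (m+1) → ℝ, x ∈ Metric.closedBall (0 : Fin (m+1) → ℝ) R →
        ∀ i, |x i| ≤ R := by
      intro x hx i
      simp only [Metric.mem_closedBall, dist_zero_right] at hx
      calc |x i| = ‖x i‖ := (Real.norm_eq_abs _).symm
        _ ≤ ‖x‖ := norm_le_pi_norm x i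
        _ ≤ R := hx
    have hGz : ∀ x : Fin (m+1) → ℝ, (∃ i, R < |x i|) → G x = 0 := by
      rintro x ⟨i, hi⟩
      apply image_eq_zero_of_notMem_tsupport
      intro h
      exact absurd (hcoord x (hR h) i) (not_le.2 hi)
    have hfd0 : ∀ x : Fin (m+1) → ℝ, x ∉ Metric.closedBall (0 : Fin (m+1) → ℝ) R →
        fderiv ℝ G x = 0 := by
      intro x hx
      apply image_eq_zero_of_notMem_tsupport
      exact fun h => hx (hR (tsupport_fderiv_subset ℝ h))
    have hball : Metric.closedBall (0 : Fin (m+1) → ℝ) R ⊆ Set.Icc a b := by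
      intro x hx
      refine ⟨fun i => ?_, fun i => ?_⟩
      · have := (abs_le.1 (hcoord x hx i)).1; simp only [ha]; linarith
      · have := (abs_le.1 (hcoord x hx i)).2; simp only [hb]; linarith
    have hdiff : Differentiable ℝ G := hG.differentiable one_ne_zero
    have hcont : Continuous fun x => ∑ i, fderiv ℝ G x (Pi.single i 1) i := by
      refine continuous_finset_sum _ fun i _ => ?_
      exact (continuous_apply i).comp
        (((hG.continuous_fderiv one_ne_zero).clm_apply continuous_const))
    have key := MeasureTheory.integral_divergence_of_hasFDerivAt_off_countable
      a b hle G (fderiv ℝ G) ∅ Set.countable_empty hG.continuous.continuousOn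
      (fun x _ => (hdiff x).hasFDerivAt)
      (hcont.continuousOn.integrableOn_compact isCompact_Icc)
    have hfaces : ∀ i : Fin (m+1),
        ((∫ x in Set.Icc (a ∘ Fin.succAbove i) (b ∘ Fin.succAbove i),
            G (Fin.insertNth i (b i) x) i)
          - ∫ x in Set.Icc (a ∘ Fin.succAbove i) (b ∘ Fin.succAbove i),
            G (Fin.insertNth i (a i) x) i) = 0 := by
      intro i
      have h1 : ∀ y : Fin m → ℝ, G (Fin.insertNth i (b i) y) = 0 := by
        intro y
        refine hGz _ ⟨i, ?_⟩
        rw [Fin.insertNth_apply_same]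
        simp only [hb]
        rw [abs_of_nonneg (by linarith)]; linarith
      have h2 : ∀ y : Fin m → ℝ, G (Fin.insertNth i (a i) y) = 0 := by
        intro y
        refine hGz _ ⟨i, ?_⟩
        rw [Fin.insertNth_apply_same]
        simp only [ha]
        rw [abs_of_nonpos (by linarith)]; linarith
      simp [h1, h2]
    rw [Finset.sum_eq_zero (fun i _ => hfaces i)] at key
    rw [← key]
    symm
    apply setIntegral_eq_integral_of_forall_compl_eq_zero
    intro x hx
    have : x ∉ Metric.closedBall (0 : Fin (m+1) → ℝ) R := fun h => hx (hball h)
    simp [hfd0 x this]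

/-- **Generalized sliced score matching objective equivalence.**
For a positive C¹ probability density `p`, a C² slicing function `v` and a C¹ score model `s`
with `x ↦ p(x)(∇v(x)ᵀ s(x))∇v(x)` compactly supported and all integrands integrable, the
projected score-matching loss equals the GSSM loss up to the constant
`C = ½ ∫ p (∇vᵀ ∇log p)² dx` that does not depend on `s`. -/
theorem gssm_equals_sm_up_to_constant {n : ℕ}
    (p : (Fin n → ℝ) → ℝ) (hp : ∀ x, 0 < p x) (hpC : ContDiff ℝ 1 p)
    (hp1 : ∫ x, p x = 1)
    (v : (Fin n → ℝ) → ℝ) (hv : ContDiff ℝ 2 v)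
    (s : (Fin n → ℝ) → (Fin n → ℝ)) (hs : ContDiff ℝ 1 s)
    (hsupp : HasCompactSupport fun x =>
      fun i => p x * (∑ j, pderiv' v j x * s x j) * pderiv' v i x)
    (hint1 : Integrable fun x =>
      p x * ((∑ j, pderiv' v j x * s x j)
        - ∑ j, pderiv' v j x * pderiv' (fun z => Real.log (p z)) j x) ^ 2)
    (hint2 : Integrable fun x => p x * (∑ j, pderiv' v j x * s x j) ^ 2)
    (hint3 : Integrable fun x =>
      p x * ∑ j, ∑ k, pderiv' v j x * pderiv' (fun z => s z j) k x * pderiv' v k x)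
    (hint4 : Integrable fun x =>
      p x * ∑ j, ∑ k, s x j * pderiv' (pderiv' v k) j x * pderiv' v k x)
    (hint5 : Integrable fun x =>
      p x * (∑ j, pderiv' v j x * s x j) * (∑ i, pderiv' (pderiv' v i) i x))
    (hint6 : Integrable fun x =>
      p x * (∑ j, pderiv' v j x * pderiv' (fun z => Real.log (p z)) j x) ^ 2) :
    (1 / 2) * (∫ x, p x * ((∑ j, pderiv' v j x * s x j)
        - ∑ j, pderiv' v j x * pderiv' (fun z => Real.log (p z)) j x) ^ 2)
      = ((1 / 2) * (∫ x, p x * (∑ j, pderiv' v j x * s x j) ^ 2)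
          + (∫ x, p x * ∑ j, ∑ k, pderiv' v j x * pderiv' (fun z => s z j) k x
              * pderiv' v k x)
          + (∫ x, p x * ∑ j, ∑ k, s x j * pderiv' (pderiv' v k) j x * pderiv' v k x)
          + ∫ x, p x * (∑ j, pderiv' v j x * s x j) * (∑ i, pderiv' (pderiv' v i) i x))
        + (1 / 2) * ∫ x,
            p x * (∑ j, pderiv' v j x * pderiv' (fun z => Real.log (p z)) j x) ^ 2 := by
  have hvj : ∀ j, ContDiff ℝ 1 (pderiv' v j) := fun j =>
    (hv.fderiv_right (by norm_num)).clm_apply contDiff_const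
  have hsj : ∀ j, ContDiff ℝ 1 (fun x => s x j) := fun j => (contDiff_pi.1 hs) j
  set A : (Fin n → ℝ) → ℝ := fun x => ∑ j, pderiv' v j x * s x j with hA
  set B : (Fin n → ℝ) → ℝ :=
    fun x => ∑ j, pderiv' v j x * pderiv' (fun z => Real.log (p z)) j x with hB
  have hAc : ContDiff ℝ 1 A := ContDiff.sum fun j _ => (hvj j).mul (hsj j)
  -- p * B = ∑ ∂v ∂p
  have hpB : ∀ x, p x * B x = ∑ j, pderiv' v j x * pderiv' p j x := by
    intro x
    rw [hB, Finset.mul_sum]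
    refine Finset.sum_congr rfl fun j _ => ?_
    rw [pderiv'_log j ((hpC.differentiable one_ne_zero).differentiableAt) (hp x).ne']
    have hne := (hp x).ne'
    field_simp
  -- per-coordinate product rule expansion
  have hstep : ∀ (i : Fin n) (x : Fin n → ℝ),
      pderiv' (fun y => p y * A y * pderiv' v i y) i x
        = A x * (pderiv' v i x * pderiv' p i x)
          + p x * (∑ j, pderiv' v j x * pderiv' (fun z => s z j) i x * pderiv' v i x)
          + p x * (∑ j, s x j * pderiv' (pderiv' v i) j x * pderiv' v i x)
          + p x * A x * pderiv' (pderiv' v i) i x := by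
    intro i x
    have hpd := (hpC.differentiable one_ne_zero).differentiableAt (x := x)
    have hAd := (hAc.differentiable one_ne_zero).differentiableAt (x := x)
    have hvjd : ∀ j, DifferentiableAt ℝ (pderiv' v j) x := fun j =>
      ((hvj j).differentiable one_ne_zero).differentiableAt
    have hsjd : ∀ j, DifferentiableAt ℝ (fun y => s y j) x := fun j =>
      ((hsj j).differentiable one_ne_zero).differentiableAt
    have eA : pderiv' A i x
        = ∑ j, (pderiv' (pderiv' v i) j x * s x j
            + pderiv' v j x * pderiv' (fun z => s z j) i x) := by
      rw [hA, pderiv'_sum Finset.univ i (fun j _ => ((hvjd j).fun_mul (hsjd j)))]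
      refine Finset.sum_congr rfl fun j _ => ?_
      rw [pderiv'_mul i (hvjd j) (hsjd j), pderiv'_symm hv j i x]
    rw [pderiv'_mul i (hpd.fun_mul hAd) (hvjd i), pderiv'_mul i hpd hAd, eA]
    simp only [Finset.sum_add_distrib, Finset.mul_sum, add_mul, mul_add, Finset.sum_mul]
    ring_nf
    have hterm : ∀ j : Fin n, p x * pderiv' (pderiv' v i) j x * s x j * pderiv' v i x
        = p x * s x j * pderiv' (pderiv' v i) j x * pderiv' v i x := fun j => by ring
    rw [Finset.sum_congr rfl fun j _ => (by ring : pderiv' v i x * p x * pderiv' (pderiv' v i) j x * s x j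
        = pderiv' v i x * p x * s x j * pderiv' (pderiv' v i) j x)]
    ring
  -- the vector field G
  set G : (Fin n → ℝ) → (Fin n → ℝ) := fun x i => p x * A x * pderiv' v i x with hG
  have hGc : ContDiff ℝ 1 G := contDiff_pi.2 fun i => (hpC.mul hAc).mul (hvj i)
  have hGd : ∀ x i, DifferentiableAt ℝ (fun y => p y * A y * pderiv' v i y) x :=
    fun x i => (((hpC.mul hAc).mul (hvj i)).differentiable one_ne_zero).differentiableAt
  -- divergence identity
  have hdiv : ∀ x, ∑ i, fderiv ℝ G x (Pi.single i 1) i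
      = p x * A x * B x
        + p x * (∑ j, ∑ k, pderiv' v j x * pderiv' (fun z => s z j) k x * pderiv' v k x)
        + p x * (∑ j, ∑ k, s x j * pderiv' (pderiv' v k) j x * pderiv' v k x)
        + p x * A x * (∑ i, pderiv' (pderiv' v i) i x) := by
    intro x
    have hGpi : fderiv ℝ G x = ContinuousLinearMap.pi
        (fun i => fderiv ℝ (fun y => p y * A y * pderiv' v i y) x) := by
      rw [hG]
      exact fderiv_pi (fun i => hGd x i)
    have hGi : ∀ i, fderiv ℝ G x (Pi.single i 1) i
        = pderiv' (fun y => p y * A y * pderiv' v i y) i x := by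
      intro i; rw [hGpi]; rfl
    calc ∑ i, fderiv ℝ G x (Pi.single i 1) i
        = ∑ i, (A x * (pderiv' v i x * pderiv' p i x)
          + p x * (∑ j, pderiv' v j x * pderiv' (fun z => s z j) i x * pderiv' v i x)
          + p x * (∑ j, s x j * pderiv' (pderiv' v i) j x * pderiv' v i x)
          + p x * A x * pderiv' (pderiv' v i) i x) := by
          exact Finset.sum_congr rfl fun i _ => by rw [hGi i, hstep i x]
      _ = A x * (∑ i, pderiv' v i x * pderiv' p i x)
          + p x * (∑ i, ∑ j, pderiv' v j x * pderiv' (fun z => s z j) i x * pderiv' v i x)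
          + p x * (∑ i, ∑ j, s x j * pderiv' (pderiv' v i) j x * pderiv' v i x)
          + p x * A x * (∑ i, pderiv' (pderiv' v i) i x) := by
          simp only [Finset.sum_add_distrib, Finset.mul_sum]
      _ = _ := by
          rw [← hpB x, Finset.sum_comm (f := fun i j =>
              pderiv' v j x * pderiv' (fun z => s z j) i x * pderiv' v i x),
            Finset.sum_comm (f := fun i j =>
              s x j * pderiv' (pderiv' v i) j x * pderiv' v i x)]
          ring
  -- integrability of p A B
  have hPab : Integrable fun x => p x * A x * B x := by
    have heq : (fun x => p x * A x * B x)
        = fun x => (p x * A x ^ 2 + p x * B x ^ 2 - p x * (A x - B x) ^ 2) / 2 := by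
      funext x; ring
    rw [heq]
    exact ((hint2.add hint6).sub hint1).div_const 2
  -- rewrite hints with mul pulled in
  have hT3 : Integrable fun x =>
      p x * (∑ j, ∑ k, pderiv' v j x * pderiv' (fun z => s z j) k x * pderiv' v k x) := hint3
  have hT4 : Integrable fun x =>
      p x * (∑ j, ∑ k, s x j * pderiv' (pderiv' v k) j x * pderiv' v k x) := hint4
  have hT5 : Integrable fun x => p x * A x * (∑ i, pderiv' (pderiv' v i) i x) := hint5
  -- divergence theorem
  have hzero : ∫ x, ∑ i, fderiv ℝ G x (Pi.single i 1) i = 0 :=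
    integral_div_eq_zero G hGc hsupp
  have hsplit : ∫ x, ∑ i, fderiv ℝ G x (Pi.single i 1) i
      = (∫ x, p x * A x * B x)
        + (∫ x, p x * (∑ j, ∑ k, pderiv' v j x * pderiv' (fun z => s z j) k x
            * pderiv' v k x))
        + (∫ x, p x * (∑ j, ∑ k, s x j * pderiv' (pderiv' v k) j x * pderiv' v k x))
        + ∫ x, p x * A x * (∑ i, pderiv' (pderiv' v i) i x) := by
    have hI3 : Integrable (fun x => p x * A x * B x
        + p x * (∑ j, ∑ k, pderiv' v j x * pderiv' (fun z => s z j) k x * pderiv' v k x))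
        volume := hPab.add hT3
    have hI4 : Integrable (fun x => (p x * A x * B x
        + p x * (∑ j, ∑ k, pderiv' v j x * pderiv' (fun z => s z j) k x * pderiv' v k x))
        + p x * (∑ j, ∑ k, s x j * pderiv' (pderiv' v k) j x * pderiv' v k x))
        volume := hI3.add hT4
    rw [funext hdiv, integral_add hI4 hT5, integral_add hI3 hT4, integral_add hPab hT3]
  have hIBP : ∫ x, p x * A x * B x
      = -((∫ x, p x * (∑ j, ∑ k, pderiv' v j x * pderiv' (fun z => s z j) k x
            * pderiv' v k x))
        + (∫ x, p x * (∑ j, ∑ k, s x j * pderiv' (pderiv' v k) j x * pderiv' v k x))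
        + ∫ x, p x * A x * (∑ i, pderiv' (pderiv' v i) i x)) := by
    rw [hsplit] at hzero; linarith
  -- expansion of the square
  have hexp : ∫ x, p x * (A x - B x) ^ 2
      = (∫ x, p x * A x ^ 2) - 2 * (∫ x, p x * A x * B x) + ∫ x, p x * B x ^ 2 := by
    have heq : (fun x => p x * (A x - B x) ^ 2)
        = fun x => (p x * A x ^ 2 - 2 * (p x * A x * B x)) + p x * B x ^ 2 := by
      funext x; ring
    have hI2 : Integrable (fun x => p x * A x ^ 2 - 2 * (p x * A x * B x)) volume :=
      hint2.sub (hPab.const_mul 2)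
    rw [heq, integral_add hI2 hint6, integral_sub hint2 (hPab.const_mul 2),
      MeasureTheory.integral_const_mul]
  rw [hexp]
  linarith [hIBP]
end
end

section
/- Let A be a random symmetric n×n real matrix whose entries {A_{ij} : i ≤ j} are independent centered Gaussian random variables with Var(A_{ii}) = σ₁² and Var(A_{ij}) = σ₂² for i < j (and A_{ji} = A_{ij}), and let b be an ℝⁿ-valued centered Gaussian random vector with covariance σ₃² I, independent of A. Then for all fixed x, s ∈ ℝⁿ: E[ ( (A x + b)ᵀ s )² ] = (σ₁² − 2σ₂²) Σ_{i=1}^{n} s_i² x_i² + σ₂² ( ‖x‖² ‖s‖² + (sᵀ x)² ) + σ₃² ‖s‖². -/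
open MeasureTheory ProbabilityTheory Real Finset
open scoped NNReal ENNReal


lemma gauss_pdf_mul_eq (v : ℝ≥0) (hv : v ≠ 0) (g : ℝ → ℝ) :
    ∫ y, g y ∂(gaussianReal 0 v) = ∫ y, gaussianPDFReal 0 v y * g y := by
  have hm : Measurable fun y => (gaussianPDFReal 0 v y).toNNReal :=
    (measurable_gaussianPDFReal 0 v).real_toNNReal
  rw [gaussianReal_of_var_ne_zero _ hv]
  have hd : (gaussianPDF 0 v) = fun y => ((gaussianPDFReal 0 v y).toNNReal : ℝ≥0∞) := by
    ext y; simp [gaussianPDF, ENNReal.ofReal]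
  rw [hd, integral_withDensity_eq_integral_smul hm]
  congr 1; ext y
  simp [NNReal.smul_def, Real.coe_toNNReal _ (gaussianPDFReal_nonneg 0 v y)]

lemma gauss_integrable_aux (v : ℝ≥0) (hv : v ≠ 0) (g : ℝ → ℝ)
    (h : Integrable (fun y => gaussianPDFReal 0 v y * g y)) :
    Integrable g (gaussianReal 0 v) := by
  have hm : Measurable fun y => (gaussianPDFReal 0 v y).toNNReal :=
    (measurable_gaussianPDFReal 0 v).real_toNNReal
  rw [gaussianReal_of_var_ne_zero _ hv]
  have hd : (gaussianPDF 0 v) = fun y => ((gaussianPDFReal 0 v y).toNNReal : ℝ≥0∞) := by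
    ext y; simp [gaussianPDF, ENNReal.ofReal]
  rw [hd, integrable_withDensity_iff_integrable_smul hm]
  refine h.congr (Filter.Eventually.of_forall fun y => ?_)
  simp [NNReal.smul_def, Real.coe_toNNReal _ (gaussianPDFReal_nonneg 0 v y)]

lemma gauss_pdf_eq (v : ℝ≥0) (y : ℝ) :
    gaussianPDFReal 0 v y = (√(2 * π * v))⁻¹ * rexp (-(2*(v:ℝ))⁻¹ * y ^ 2) := by
  rw [gaussianPDFReal]
  congr 1
  rw [sub_zero, neg_div, div_eq_inv_mul, neg_mul]

lemma gauss_pdf_even (v : ℝ≥0) (y : ℝ) :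
    gaussianPDFReal 0 v (-y) = gaussianPDFReal 0 v y := by
  rw [gauss_pdf_eq, gauss_pdf_eq, neg_sq]

lemma gauss_integrable_id (v : ℝ≥0) : Integrable (fun y : ℝ => y) (gaussianReal 0 v) := by
  rcases eq_or_ne v 0 with rfl | hv
  · rw [gaussianReal_zero_var]
    exact ⟨measurable_id.aestronglyMeasurable, by
      rw [HasFiniteIntegral, lintegral_dirac]; exact ENNReal.coe_lt_top⟩
  · refine gauss_integrable_aux v hv _ ?_
    have hb : 0 < (2*(v:ℝ))⁻¹ := by
      have : (0:ℝ) < v := by positivity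
      positivity
    have := (integrable_mul_exp_neg_mul_sq hb).const_mul (√(2 * π * v))⁻¹
    refine this.congr (Filter.Eventually.of_forall fun y => ?_)
    simp only [gauss_pdf_eq]; ring

lemma gauss_integrable_sq (v : ℝ≥0) :
    Integrable (fun y : ℝ => y * y) (gaussianReal 0 v) := by
  rcases eq_or_ne v 0 with rfl | hv
  · rw [gaussianReal_zero_var]
    exact ⟨(measurable_id.mul measurable_id).aestronglyMeasurable, by
      rw [HasFiniteIntegral, lintegral_dirac]; exact ENNReal.coe_lt_top⟩
  · refine gauss_integrable_aux v hv _ ?_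
    have hb : 0 < (2*(v:ℝ))⁻¹ := by
      have : (0:ℝ) < v := by positivity
      positivity
    have := (integrable_rpow_mul_exp_neg_mul_sq hb (s := 2) (by norm_num)).const_mul
      (√(2 * π * v))⁻¹
    refine this.congr (Filter.Eventually.of_forall fun y => ?_)
    have h2 : y ^ (2:ℝ) = y * y := by
      rw [show (2:ℝ) = ((2:ℕ):ℝ) by norm_num, Real.rpow_natCast]; ring
    simp only [gauss_pdf_eq, h2]; ring

lemma gauss_integral_id (v : ℝ≥0) : ∫ y, y ∂(gaussianReal 0 v) = 0 := by
  rcases eq_or_ne v 0 with rfl | hv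
  · rw [gaussianReal_zero_var, integral_dirac]
  · rw [gauss_pdf_mul_eq v hv]
    have h1 : ∫ y : ℝ, gaussianPDFReal 0 v y * y
        = ∫ y : ℝ, gaussianPDFReal 0 v (-y) * (-y) := (integral_neg_eq_self _ _).symm
    have h2 : ∫ y : ℝ, gaussianPDFReal 0 v (-y) * (-y)
        = -∫ y : ℝ, gaussianPDFReal 0 v y * y := by
      rw [← integral_neg]
      congr 1; ext y
      rw [gauss_pdf_even]; ring
    have := h1.trans h2
    linarith

lemma gauss_integral_sq (v : ℝ≥0) : ∫ y, y * y ∂(gaussianReal 0 v) = v := by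
  rcases eq_or_ne v 0 with rfl | hv
  · rw [gaussianReal_zero_var, integral_dirac]; simp
  · rw [gauss_pdf_mul_eq v hv]
    have hvpos : (0:ℝ) < v := by positivity
    have hb : 0 < (2*(v:ℝ))⁻¹ := by positivity
    set b : ℝ := (2*(v:ℝ))⁻¹ with hbdef
    set c : ℝ := (√(2 * π * v))⁻¹ with hcdef
    have h1 : ∫ y : ℝ, gaussianPDFReal 0 v y * (y * y)
        = c * ∫ y : ℝ, y ^ 2 * rexp (-b * y ^ 2) := by
      rw [← integral_const_mul]
      congr 1; ext y
      rw [gauss_pdf_eq]; ring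
    rw [h1]
    have h2 : ∫ y : ℝ, y ^ 2 * rexp (-b * y ^ 2)
        = 2 * ∫ y in Set.Ioi (0:ℝ), y ^ 2 * rexp (-b * y ^ 2) := by
      rw [← integral_comp_abs (f := fun y => y ^ 2 * rexp (-b * y ^ 2))]
      congr 1; ext y
      rw [sq_abs]
    rw [h2]
    have hint : ∫ y in Set.Ioi (0:ℝ), y ^ 2 * rexp (-b * y ^ 2)
        = ∫ y in Set.Ioi (0:ℝ), y ^ (2:ℝ) * rexp (-b * y ^ (2:ℝ)) := by
      refine setIntegral_congr_fun measurableSet_Ioi (fun y _ => ?_)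
      rw [show ((2:ℝ)) = ((2:ℕ):ℝ) by norm_num, Real.rpow_natCast]
    rw [hint, integral_rpow_mul_exp_neg_mul_rpow (by norm_num) (by norm_num) hb]
    have hgamma : Real.Gamma (((2:ℝ) + 1)/2) = √π / 2 := by
      rw [show ((2:ℝ)+1)/2 = 1/2 + 1 by norm_num, Real.Gamma_add_one (by norm_num),
        Real.Gamma_one_half_eq]
      ring
    rw [hgamma]
    have h2v : (0:ℝ) < 2 * v := by positivity
    have hbpow : b ^ (-((2:ℝ)+1)/2) = (2*(v:ℝ)) * √(2*(v:ℝ)) := by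
      rw [hbdef, show (-((2:ℝ)+1)/2) = -((3:ℝ)/2) by norm_num, Real.rpow_neg (by positivity),
        Real.inv_rpow h2v.le, inv_inv, show ((3:ℝ)/2) = 1 + 1/2 by norm_num,
        Real.rpow_add h2v, Real.rpow_one, ← Real.sqrt_eq_rpow]
    rw [hbpow, hcdef, show 2 * π * (v:ℝ) = π * (2 * v) by ring,
      Real.sqrt_mul Real.pi_pos.le]
    have hs1 : √π ≠ 0 := ne_of_gt (Real.sqrt_pos.mpr Real.pi_pos)
    have hs2 : √(2*(v:ℝ)) ≠ 0 := ne_of_gt (Real.sqrt_pos.mpr h2v)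
    field_simp


lemma sum_filter_eq_diag {n : ℕ} (g : Fin n → Fin n → ℝ) :
    ∑ q ∈ Finset.univ.filter (fun q : Fin n × Fin n => q.1 = q.2), g q.1 q.2 = ∑ i, g i i := by
  refine Finset.sum_nbij' (fun q => q.1) (fun i => (i, i)) ?_ ?_ ?_ ?_ ?_ <;>
    simp +contextual [Prod.ext_iff, eq_comm]

lemma sum_filter_gt_eq_lt {n : ℕ} (g : Fin n → Fin n → ℝ) :
    ∑ q ∈ Finset.univ.filter (fun q : Fin n × Fin n => q.2 < q.1), g q.1 q.2
      = ∑ q ∈ Finset.univ.filter (fun q : Fin n × Fin n => q.1 < q.2), g q.2 q.1 := by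
  refine Finset.sum_nbij' Prod.swap Prod.swap ?_ ?_ ?_ ?_ ?_ <;> simp

lemma sum_all_split {n : ℕ} (g : Fin n → Fin n → ℝ) :
    ∑ i, ∑ j, g i j = ∑ i, g i i
      + ∑ q ∈ Finset.univ.filter (fun q : Fin n × Fin n => q.1 < q.2), g q.1 q.2
      + ∑ q ∈ Finset.univ.filter (fun q : Fin n × Fin n => q.1 < q.2), g q.2 q.1 := by
  have hprod : ∑ q : Fin n × Fin n, g q.1 q.2 = ∑ i, ∑ j, g i j := Fintype.sum_prod_type _
  rw [← hprod]
  rw [← Finset.sum_filter_add_sum_filter_not Finset.univ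
    (fun q : Fin n × Fin n => q.1 ≤ q.2) (fun q => g q.1 q.2)]
  have h1 : Finset.univ.filter (fun q : Fin n × Fin n => ¬ q.1 ≤ q.2)
      = Finset.univ.filter (fun q : Fin n × Fin n => q.2 < q.1) := by
    apply Finset.filter_congr; simp [not_le]
  have h2 : ∑ q ∈ Finset.univ.filter (fun q : Fin n × Fin n => q.1 ≤ q.2), g q.1 q.2
      = ∑ i, g i i
        + ∑ q ∈ Finset.univ.filter (fun q : Fin n × Fin n => q.1 < q.2), g q.1 q.2 := by
    rw [← Finset.sum_filter_add_sum_filter_not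
      (Finset.univ.filter (fun q : Fin n × Fin n => q.1 ≤ q.2))
      (fun q : Fin n × Fin n => q.1 = q.2) (fun q => g q.1 q.2)]
    congr 1
    · rw [Finset.filter_filter, ← sum_filter_eq_diag g]
      apply Finset.sum_congr _ (fun _ _ => rfl)
      apply Finset.filter_congr
      intro q _
      constructor
      · rintro ⟨_, h⟩; exact h
      · intro h; exact ⟨le_of_eq h, h⟩
    · rw [Finset.filter_filter]
      apply Finset.sum_congr _ (fun _ _ => rfl)
      apply Finset.filter_congr
      intro q _
      simp only [lt_iff_le_and_ne]
      try tauto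
  rw [h1, h2, sum_filter_gt_eq_lt]

lemma sum_le_split {n : ℕ} (g : Fin n → Fin n → ℝ) :
    ∑ q ∈ Finset.univ.filter (fun q : Fin n × Fin n => q.1 ≤ q.2), g q.1 q.2
      = ∑ i, g i i
        + ∑ q ∈ Finset.univ.filter (fun q : Fin n × Fin n => q.1 < q.2), g q.1 q.2 := by
  rw [← Finset.sum_filter_add_sum_filter_not
    (Finset.univ.filter (fun q : Fin n × Fin n => q.1 ≤ q.2))
    (fun q : Fin n × Fin n => q.1 = q.2) (fun q => g q.1 q.2)]
  congr 1
  · rw [Finset.filter_filter, ← sum_filter_eq_diag g]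
    apply Finset.sum_congr _ (fun _ _ => rfl)
    apply Finset.filter_congr
    intro q _
    constructor
    · rintro ⟨_, h⟩; exact h
    · intro h; exact ⟨le_of_eq h, h⟩
  · rw [Finset.filter_filter]
    apply Finset.sum_congr _ (fun _ _ => rfl)
    apply Finset.filter_congr
    intro q _
    simp only [lt_iff_le_and_ne]
    try tauto


/-- **Quadratic term of the variance-reduced GSSM loss.**
Let `A` be a random symmetric `n×n` matrix whose entries `{A_{ij} : i ≤ j}` are independent
centered Gaussians with `Var(A_{ii}) = σ₁²`, `Var(A_{ij}) = σ₂²` for `i < j` (and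
`A_{ji} = A_{ij}`), and let `b` be a centered Gaussian vector with covariance `σ₃² I`,
independent of `A`.  Then for all `x, s ∈ ℝⁿ`:
`E[((Ax + b)ᵀ s)²] = (σ₁² − 2σ₂²) Σᵢ sᵢ² xᵢ² + σ₂² (‖x‖²‖s‖² + (sᵀx)²) + σ₃² ‖s‖²`. -/
theorem gssm_vr_quadratic_term {n : ℕ} {Ω : Type*} [MeasurableSpace Ω]
    (μ : Measure Ω) [IsProbabilityMeasure μ]
    (σ₁ σ₂ σ₃ : ℝ≥0)
    (A : Ω → Fin n → Fin n → ℝ) (b : Ω → Fin n → ℝ)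
    (hAmeas : ∀ i j, Measurable fun ω => A ω i j)
    (hbmeas : ∀ i, Measurable fun ω => b ω i)
    (hsymm : ∀ ω i j, A ω j i = A ω i j)
    (hindep : iIndepFun
      (Sum.elim
        (fun p : {q : Fin n × Fin n // q.1 ≤ q.2} => fun ω => A ω p.1.1 p.1.2)
        (fun i : Fin n => fun ω => b ω i)) μ)
    (hdiag : ∀ i, μ.map (fun ω => A ω i i) = gaussianReal 0 (σ₁ ^ 2))
    (hoff : ∀ i j, i < j → μ.map (fun ω => A ω i j) = gaussianReal 0 (σ₂ ^ 2))
    (hb : ∀ i, μ.map (fun ω => b ω i) = gaussianReal 0 (σ₃ ^ 2)) :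
    ∀ x s : Fin n → ℝ,
      (∫ ω, (∑ i, ((∑ j, A ω i j * x j) + b ω i) * s i) ^ 2 ∂μ)
        = ((σ₁ : ℝ) ^ 2 - 2 * (σ₂ : ℝ) ^ 2) * (∑ i, s i ^ 2 * x i ^ 2)
          + (σ₂ : ℝ) ^ 2 *
              ((∑ i, x i ^ 2) * (∑ i, s i ^ 2) + (∑ i, s i * x i) ^ 2)
          + (σ₃ : ℝ) ^ 2 * ∑ i, s i ^ 2 := by
  intro x s
  set Y := (Sum.elim
      (fun p : {q : Fin n × Fin n // q.1 ≤ q.2} => fun ω => A ω p.1.1 p.1.2)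
      (fun i : Fin n => fun ω => b ω i)) with hYdef
  set cA : Fin n × Fin n → ℝ := fun q =>
    if q.1 = q.2 then s q.1 * x q.1 else s q.1 * x q.2 + s q.2 * x q.1 with hcAdef
  set c : ({q : Fin n × Fin n // q.1 ≤ q.2} ⊕ Fin n) → ℝ :=
    Sum.elim (fun p => cA p.1) s with hcdef
  set vk : ({q : Fin n × Fin n // q.1 ≤ q.2} ⊕ Fin n) → ℝ≥0 :=
    Sum.elim (fun p => if p.1.1 = p.1.2 then σ₁ ^ 2 else σ₂ ^ 2) (fun _ => σ₃ ^ 2) with hvkdef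
  have hYm : ∀ k, Measurable (Y k) := by
    rintro (p | i)
    · exact hAmeas _ _
    · exact hbmeas i
  have hmap : ∀ k, μ.map (Y k) = gaussianReal 0 (vk k) := by
    rintro (⟨⟨i, j⟩, hij⟩ | i)
    · by_cases h : i = j
      · subst h
        simpa [hYdef, hvkdef] using hdiag i
      · have hlt : i < j := lt_of_le_of_ne hij h
        simpa [hYdef, hvkdef, h] using hoff i j hlt
    · simpa [hYdef, hvkdef] using hb i
  have hInt : ∀ k, Integrable (Y k) μ := by
    intro k
    have h0 := gauss_integrable_id (vk k)
    rw [← hmap k] at h0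
    exact (integrable_map_measure aestronglyMeasurable_id (hYm k).aemeasurable).mp h0
  have hIntSq : ∀ k, Integrable (fun ω => Y k ω * Y k ω) μ := by
    intro k
    have h0 := gauss_integrable_sq (vk k)
    rw [← hmap k] at h0
    exact (integrable_map_measure
      (measurable_id.mul measurable_id).aestronglyMeasurable (hYm k).aemeasurable).mp h0
  have hMean : ∀ k, ∫ ω, Y k ω ∂μ = 0 := by
    intro k
    have h0 : ∫ y, y ∂(μ.map (Y k)) = ∫ ω, Y k ω ∂μ :=
      integral_map (hYm k).aemeasurable aestronglyMeasurable_id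
    rw [← h0, hmap k, gauss_integral_id]
  have hSqInt : ∀ k, ∫ ω, Y k ω * Y k ω ∂μ = (vk k : ℝ) := by
    intro k
    have h0 : ∫ y, y * y ∂(μ.map (Y k)) = ∫ ω, Y k ω * Y k ω ∂μ :=
      integral_map (hYm k).aemeasurable
        (measurable_id.mul measurable_id).aestronglyMeasurable
    rw [← h0, hmap k, gauss_integral_sq]
  have hIntMul : ∀ k l, Integrable (fun ω => Y k ω * Y l ω) μ := by
    intro k l
    rcases eq_or_ne k l with rfl | hkl
    · exact hIntSq k
    · exact (hindep.indepFun hkl).integrable_mul (hInt k) (hInt l)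
  have hMulInt : ∀ k l, k ≠ l → ∫ ω, Y k ω * Y l ω ∂μ = 0 := by
    intro k l hkl
    have h0 := (hindep.indepFun hkl).integral_mul_eq_mul_integral
      (hYm k).aestronglyMeasurable (hYm l).aestronglyMeasurable
    calc ∫ ω, Y k ω * Y l ω ∂μ = ∫ ω, (Y k * Y l) ω ∂μ := rfl
      _ = (∫ ω, Y k ω ∂μ) * ∫ ω, Y l ω ∂μ := h0
      _ = 0 := by rw [hMean k, hMean l]; ring
  -- pointwise rewriting of the linear form
  have hpt : ∀ ω, (∑ i, ((∑ j, A ω i j * x j) + b ω i) * s i)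
      = ∑ k, c k * Y k ω := by
    intro ω
    have hrhs : ∑ k, c k * Y k ω
        = (∑ p : {q : Fin n × Fin n // q.1 ≤ q.2}, cA p.1 * A ω p.1.1 p.1.2)
          + ∑ i, s i * b ω i := by
      rw [Fintype.sum_sum_type]
      simp [hcdef, hYdef]
    have hsub : (∑ p : {q : Fin n × Fin n // q.1 ≤ q.2}, cA p.1 * A ω p.1.1 p.1.2)
        = ∑ q ∈ Finset.univ.filter (fun q : Fin n × Fin n => q.1 ≤ q.2),
            cA q * A ω q.1 q.2 :=
      (Finset.sum_subtype
        (Finset.univ.filter (fun q : Fin n × Fin n => q.1 ≤ q.2)) (by simp)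
        (fun q => cA q * A ω q.1 q.2)).symm
    have hsplit : ∑ q ∈ Finset.univ.filter (fun q : Fin n × Fin n => q.1 ≤ q.2),
          cA q * A ω q.1 q.2
        = (∑ i, cA (i, i) * A ω i i)
          + ∑ q ∈ Finset.univ.filter (fun q : Fin n × Fin n => q.1 < q.2),
              cA q * A ω q.1 q.2 := by
      simpa using sum_le_split (fun i j => cA (i, j) * A ω i j)
    have hlhs1 : ∑ i, ((∑ j, A ω i j * x j) + b ω i) * s i
        = (∑ i, ∑ j, s i * x j * A ω i j) + ∑ i, s i * b ω i := by
      rw [← Finset.sum_add_distrib]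
      refine Finset.sum_congr rfl fun i _ => ?_
      rw [add_mul, Finset.sum_mul]
      congr 1
      · exact Finset.sum_congr rfl fun j _ => by ring
      · ring
    have h2 : ∑ i, ∑ j, s i * x j * A ω i j
        = (∑ i, cA (i, i) * A ω i i)
          + ∑ q ∈ Finset.univ.filter (fun q : Fin n × Fin n => q.1 < q.2),
              cA q * A ω q.1 q.2 := by
      rw [sum_all_split (fun i j => s i * x j * A ω i j), add_assoc]
      congr 1
      · refine Finset.sum_congr rfl fun i _ => ?_
        simp only [hcAdef, if_pos rfl]
        try ring
      · rw [← Finset.sum_add_distrib]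
        refine Finset.sum_congr rfl fun q hq => ?_
        have hlt : q.1 < q.2 := (Finset.mem_filter.mp hq).2
        simp only [hcAdef, if_neg (ne_of_lt hlt)]
        rw [hsymm ω q.1 q.2]
        ring
    rw [hrhs, hsub, hsplit, hlhs1, h2]
  -- main computation
  have step1 : (∫ ω, (∑ i, ((∑ j, A ω i j * x j) + b ω i) * s i) ^ 2 ∂μ)
      = ∑ k, ∑ l, (c k * c l) * ∫ ω, Y k ω * Y l ω ∂μ := by
    have hi : ∀ ω, (∑ i, ((∑ j, A ω i j * x j) + b ω i) * s i) ^ 2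
        = ∑ k, ∑ l, (c k * c l) * (Y k ω * Y l ω) := by
      intro ω
      rw [hpt ω, sq, Finset.sum_mul_sum]
      exact Finset.sum_congr rfl fun k _ => Finset.sum_congr rfl fun l _ => by ring
    calc (∫ ω, (∑ i, ((∑ j, A ω i j * x j) + b ω i) * s i) ^ 2 ∂μ)
        = ∫ ω, ∑ k, ∑ l, (c k * c l) * (Y k ω * Y l ω) ∂μ := by
          exact integral_congr_ae (Filter.Eventually.of_forall fun ω => hi ω)
      _ = ∑ k, ∫ ω, ∑ l, (c k * c l) * (Y k ω * Y l ω) ∂μ :=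
          integral_finset_sum _ (fun k _ =>
            integrable_finset_sum _ (fun l _ => (hIntMul k l).const_mul _))
      _ = ∑ k, ∑ l, (c k * c l) * ∫ ω, Y k ω * Y l ω ∂μ := by
          refine Finset.sum_congr rfl fun k _ => ?_
          rw [integral_finset_sum _ (fun l _ => (hIntMul k l).const_mul _)]
          exact Finset.sum_congr rfl fun l _ => integral_const_mul _ _
  have step2 : ∑ k, ∑ l, (c k * c l) * ∫ ω, Y k ω * Y l ω ∂μ
      = ∑ k, c k ^ 2 * (vk k : ℝ) := by
    refine Finset.sum_congr rfl fun k _ => ?_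
    rw [Finset.sum_eq_single k]
    · rw [hSqInt k]; ring
    · intro l _ hlk
      rw [hMulInt k l (Ne.symm hlk)]; ring
    · intro h; exact absurd (Finset.mem_univ k) h
  rw [step1, step2]
  -- final algebra
  have hvsub : ∑ p : {q : Fin n × Fin n // q.1 ≤ q.2},
        cA p.1 ^ 2 * ((if p.1.1 = p.1.2 then σ₁ ^ 2 else σ₂ ^ 2 : ℝ≥0) : ℝ)
      = ∑ q ∈ Finset.univ.filter (fun q : Fin n × Fin n => q.1 ≤ q.2),
          cA q ^ 2 * ((if q.1 = q.2 then σ₁ ^ 2 else σ₂ ^ 2 : ℝ≥0) : ℝ) :=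
    (Finset.sum_subtype
      (Finset.univ.filter (fun q : Fin n × Fin n => q.1 ≤ q.2)) (by simp)
      (fun q => cA q ^ 2 * ((if q.1 = q.2 then σ₁ ^ 2 else σ₂ ^ 2 : ℝ≥0) : ℝ))).symm
  have hsum : ∑ k, c k ^ 2 * (vk k : ℝ)
      = (∑ i, (s i * x i) ^ 2 * ((σ₁ : ℝ) ^ 2))
        + (∑ q ∈ Finset.univ.filter (fun q : Fin n × Fin n => q.1 < q.2),
            (s q.1 * x q.2 + s q.2 * x q.1) ^ 2) * ((σ₂ : ℝ) ^ 2)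
        + (∑ i, s i ^ 2) * ((σ₃ : ℝ) ^ 2) := by
    rw [Fintype.sum_sum_type]
    congr 1
    · calc ∑ p : {q : Fin n × Fin n // q.1 ≤ q.2}, c (Sum.inl p) ^ 2 * (vk (Sum.inl p) : ℝ)
          = ∑ p : {q : Fin n × Fin n // q.1 ≤ q.2},
              cA p.1 ^ 2 * ((if p.1.1 = p.1.2 then σ₁ ^ 2 else σ₂ ^ 2 : ℝ≥0) : ℝ) := rfl
        _ = ∑ q ∈ Finset.univ.filter (fun q : Fin n × Fin n => q.1 ≤ q.2),
              cA q ^ 2 * ((if q.1 = q.2 then σ₁ ^ 2 else σ₂ ^ 2 : ℝ≥0) : ℝ) := hvsub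
        _ = (∑ i, cA (i, i) ^ 2 * ((if (i, i).1 = (i, i).2 then σ₁ ^ 2 else σ₂ ^ 2 : ℝ≥0) : ℝ))
              + ∑ q ∈ Finset.univ.filter (fun q : Fin n × Fin n => q.1 < q.2),
                  cA q ^ 2 * ((if q.1 = q.2 then σ₁ ^ 2 else σ₂ ^ 2 : ℝ≥0) : ℝ) := by
            exact sum_le_split
              (fun i j => cA (i, j) ^ 2 * ((if i = j then σ₁ ^ 2 else σ₂ ^ 2 : ℝ≥0) : ℝ))
        _ = (∑ i, (s i * x i) ^ 2 * ((σ₁ : ℝ) ^ 2))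
              + (∑ q ∈ Finset.univ.filter (fun q : Fin n × Fin n => q.1 < q.2),
                  (s q.1 * x q.2 + s q.2 * x q.1) ^ 2) * ((σ₂ : ℝ) ^ 2) := by
            congr 1
            · refine Finset.sum_congr rfl fun i _ => ?_
              simp [hcAdef]
            · rw [Finset.sum_mul]
              refine Finset.sum_congr rfl fun q hq => ?_
              have hlt : q.1 < q.2 := (Finset.mem_filter.mp hq).2
              simp only [hcAdef, if_neg (ne_of_lt hlt)]
              push_cast
              ring
    · rw [Finset.sum_mul]
      refine Finset.sum_congr rfl fun i _ => ?_
      simp only [hcdef, hvkdef, Sum.elim_inr]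
      push_cast
      ring
  rw [hsum]
  -- off-diagonal sum identity
  have hT : 2 * ∑ q ∈ Finset.univ.filter (fun q : Fin n × Fin n => q.1 < q.2),
        (s q.1 * x q.2 + s q.2 * x q.1) ^ 2
      = 2 * ((∑ i, x i ^ 2) * (∑ i, s i ^ 2) + (∑ i, s i * x i) ^ 2)
        - 4 * ∑ i, s i ^ 2 * x i ^ 2 := by
    have hall := sum_all_split (fun i j => (s i * x j + s j * x i) ^ 2)
    have hswap : ∑ q ∈ Finset.univ.filter (fun q : Fin n × Fin n => q.1 < q.2),
          (s q.2 * x q.1 + s q.1 * x q.2) ^ 2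
        = ∑ q ∈ Finset.univ.filter (fun q : Fin n × Fin n => q.1 < q.2),
            (s q.1 * x q.2 + s q.2 * x q.1) ^ 2 :=
      Finset.sum_congr rfl fun q _ => by ring
    have hexp : ∑ i, ∑ j, (s i * x j + s j * x i) ^ 2
        = 2 * ((∑ i, x i ^ 2) * (∑ i, s i ^ 2)) + 2 * (∑ i, s i * x i) ^ 2 := by
      have hterm : ∀ i j : Fin n, (s i * x j + s j * x i) ^ 2
          = s i ^ 2 * x j ^ 2 + s j ^ 2 * x i ^ 2 + 2 * ((s i * x i) * (s j * x j)) :=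
        fun i j => by ring
      simp_rw [hterm, Finset.sum_add_distrib]
      have e1 : ∑ i, ∑ j, s i ^ 2 * x j ^ 2 = (∑ i, s i ^ 2) * (∑ j, x j ^ 2) := by
        rw [Finset.sum_mul_sum]
      have e2 : ∑ i, ∑ j, s j ^ 2 * x i ^ 2 = (∑ i, x i ^ 2) * (∑ j, s j ^ 2) := by
        rw [Finset.sum_mul_sum]
        exact Finset.sum_congr rfl fun i _ => Finset.sum_congr rfl fun j _ => by ring
      have e3 : ∑ i, ∑ j, 2 * ((s i * x i) * (s j * x j))
          = 2 * ((∑ i, s i * x i) * (∑ j, s j * x j)) := by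
        rw [Finset.sum_mul_sum]
        simp_rw [Finset.mul_sum]
      rw [e1, e2, e3]
      ring
    have hdiagsum : ∑ i, (s i * x i + s i * x i) ^ 2 = 4 * ∑ i, s i ^ 2 * x i ^ 2 := by
      rw [Finset.mul_sum]
      exact Finset.sum_congr rfl fun i _ => by ring
    rw [hexp, hdiagsum, hswap] at hall
    linarith
  have hdiag2 : ∑ i, (s i * x i) ^ 2 * ((σ₁ : ℝ) ^ 2)
      = (∑ i, s i ^ 2 * x i ^ 2) * ((σ₁ : ℝ) ^ 2) := by
    rw [Finset.sum_mul]
    exact Finset.sum_congr rfl fun i _ => by ring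
  rw [hdiag2]
  nlinarith [hT]
end
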